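/- arXiv:2511.23008 — 11 statements merged into one kernel-verified Lean document; each statement's English description precedes it below -/
import Mathlib

section
/- Let E be a separable real Hilbert space, (P_l)_{l∈ℕ} orthogonal projections on E with P_l ∘ P_{l'} = 0 for l ≠ l' and Σ_l P_l f = f for every f ∈ E, and (b_l)_{l∈ℕ} bounded self-adjoint positive injective operators on E with sup_l ‖b_l‖ < ∞ and b_l ∘ P_{l'} = P_{l'} ∘ b_l for all l, l'. Let B^{1/2} denote the bounded operator f ↦ Σ_l √(b_l)(P_l f), where √(b_l) is the unique positive square root of b_l. Then for u ∈ E the following are equivalent: (i) u lies in the range of B^{1/2}; (ii) there exists a sequence (v_l) with v_l in the range of P_l, √(b_l) v_l = P_l u for every l, and Σ_l ‖v_l‖² < ∞. Moreover, in that case the element f := Σ_l v_l satisfies B^{1/2} f = u, i.e. the (unbounded) inverse B^{-1/2} satisfies B^{-1/2} u = Σ_l v_l. -/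
set_option synthInstance.maxHeartbeats 1000000
set_option maxHeartbeats 1000000

open RealInnerProductSpace

section Helpers
open ContinuousLinearMap Filter

variable {E : Type*} [NormedAddCommGroup E] [InnerProductSpace ℝ E] [CompleteSpace E]

private lemma sa_inner {T : E →L[ℝ] E} (hT : IsSelfAdjoint T) (x y : E) :
    ⟪T x, y⟫ = ⟪x, T y⟫ := by
  conv_lhs => rw [← ContinuousLinearMap.isSelfAdjoint_iff'.mp hT]
  exact ContinuousLinearMap.adjoint_inner_left T y x

private lemma pos_inner {T : E →L[ℝ] E} (hT : T.IsPositive) (x : E) : 0 ≤ ⟪T x, x⟫ := by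
  simpa using hT.inner_nonneg_left x

private lemma cs_zero {T : E →L[ℝ] E} (hT : T.IsPositive) {v : E} (h : ⟪T v, v⟫ = 0) :
    T v = 0 := by
  set a : ℝ := ‖T v‖ ^ 2 with ha
  set c : ℝ := ⟪T (T v), T v⟫ with hc
  have hc0 : 0 ≤ c := pos_inner hT (T v)
  have key : ∀ t : ℝ, 0 ≤ 2 * t * a + t ^ 2 * c := by
    intro t
    have h0 := pos_inner hT (v + t • T v)
    have e1 : ⟪T (v + t • T v), v + t • T v⟫ = 2 * t * a + t ^ 2 * c := by
      have hsa : ⟪T (T v), v⟫ = ⟪T v, T v⟫ := by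
        rw [sa_inner hT.isSelfAdjoint (T v) v]
      simp only [map_add, map_smul, inner_add_left, inner_add_right,
        real_inner_smul_left, real_inner_smul_right, h, hsa]
      rw [real_inner_self_eq_norm_sq]
      ring
    linarith [h0, e1.ge, e1.le]
  have ha0 : 0 ≤ a := sq_nonneg _
  have hc1 : (0:ℝ) < c + 1 := by linarith
  have h1 := key (-(a / (c + 1)))
  have h2 : 0 ≤ (2 * (-(a / (c + 1))) * a + (-(a / (c + 1))) ^ 2 * c) * (c + 1) ^ 2 :=
    mul_nonneg h1 (sq_nonneg _)
  have h3 : (2 * (-(a / (c + 1))) * a + (-(a / (c + 1))) ^ 2 * c) * (c + 1) ^ 2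
      = -(a ^ 2 * (c + 2)) := by
    field_simp
    ring
  have hane : a = 0 := by nlinarith
  have : ‖T v‖ = 0 := pow_eq_zero_iff (n := 2) (by norm_num) |>.mp hane
  simpa using this

private lemma prod_pos {A B : E →L[ℝ] E} (hA : A.IsPositive)
    (hB : ∀ y, 0 ≤ ⟪B y, y⟫) (hsaB : IsSelfAdjoint B)
    (hAB : Commute A B) (x : E) : 0 ≤ ⟪A (B x), x⟫ := by
  have hcpos : (0:ℝ) < ‖A‖ + 1 := by positivity
  set c : ℝ := ‖A‖ + 1 with hcdef
  set A' : E →L[ℝ] E := (c⁻¹ : ℝ) • A with hA'def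
  have hsaA : ∀ y z : E, ⟪A y, z⟫ = ⟪y, A z⟫ := sa_inner hA.isSelfAdjoint
  have hsa' : ∀ y z : E, ⟪A' y, z⟫ = ⟪y, A' z⟫ := by
    intro y z
    simp only [hA'def, ContinuousLinearMap.smul_apply, real_inner_smul_left,
      real_inner_smul_right, hsaA y z]
  have hpos' : ∀ y, 0 ≤ ⟪A' y, y⟫ := by
    intro y
    simp only [hA'def, ContinuousLinearMap.smul_apply, real_inner_smul_left]
    exact mul_nonneg (by positivity) (pos_inner hA y)
  have hle' : ∀ y, ⟪A' y, y⟫ ≤ ‖y‖ ^ 2 := by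
    intro y
    have h1 : ⟪A y, y⟫ ≤ ‖A‖ * ‖y‖ ^ 2 :=
      calc ⟪A y, y⟫ ≤ ‖A y‖ * ‖y‖ := real_inner_le_norm _ _
        _ ≤ (‖A‖ * ‖y‖) * ‖y‖ := by gcongr; exact A.le_opNorm y
        _ = ‖A‖ * ‖y‖ ^ 2 := by ring
    have h2 : ⟪A' y, y⟫ = c⁻¹ * ⟪A y, y⟫ := by
      simp [hA'def, real_inner_smul_left]
    rw [h2]
    have h3 : c⁻¹ * ⟪A y, y⟫ ≤ c⁻¹ * (‖A‖ * ‖y‖ ^ 2) :=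
      mul_le_mul_of_nonneg_left h1 (by positivity)
    have h4 : c⁻¹ * (‖A‖ * ‖y‖ ^ 2) ≤ 1 * ‖y‖ ^ 2 := by
      have : c⁻¹ * ‖A‖ ≤ 1 := by
        rw [inv_mul_le_iff₀ hcpos]
        simp [hcdef]
      calc c⁻¹ * (‖A‖ * ‖y‖ ^ 2) = (c⁻¹ * ‖A‖) * ‖y‖ ^ 2 := by ring
        _ ≤ 1 * ‖y‖ ^ 2 := mul_le_mul_of_nonneg_right this (sq_nonneg _)
    linarith
  set D : ℕ → E →L[ℝ] E := fun n => Nat.rec A' (fun _ d => d - d * d) n with hDdef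
  have hD0 : D 0 = A' := rfl
  have hDs : ∀ n, D (n + 1) = D n - D n * D n := fun n => rfl
  have hinv : ∀ n, (∀ y z, ⟪D n y, z⟫ = ⟪y, D n z⟫) ∧ (∀ y, 0 ≤ ⟪D n y, y⟫) ∧
      (∀ y, ⟪D n y, y⟫ ≤ ‖y‖ ^ 2) ∧ Commute B (D n) := by
    intro n
    induction n with
    | zero => exact ⟨hsa', hpos', hle', (hAB.symm.smul_right c⁻¹)⟩
    | succ n ih =>
      obtain ⟨hsaC, hposC, hleC, hBC⟩ := ih
      refine ⟨?_, ?_, ?_, ?_⟩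
      · intro y z
        rw [hDs]
        simp only [ContinuousLinearMap.sub_apply, ContinuousLinearMap.mul_apply,
          inner_sub_left, inner_sub_right]
        rw [hsaC y z, hsaC (D n y) z, hsaC y (D n z)]
      · intro y
        rw [hDs]
        simp only [ContinuousLinearMap.sub_apply, ContinuousLinearMap.mul_apply]
        have hCz : D n y - D n (D n y) = D n (y - D n y) := by rw [map_sub]
        have split : ⟪D n y - D n (D n y), y⟫
            = ⟪D n (y - D n y), y - D n y⟫ + ⟪D n y - D n (D n y), D n y⟫ := by
          rw [← hCz, ← inner_add_right]
          congr 1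
          abel
        have h1 : 0 ≤ ⟪D n (y - D n y), y - D n y⟫ := hposC _
        have h2 : 0 ≤ ⟪D n y - D n (D n y), D n y⟫ := by
          rw [inner_sub_left]
          have h3 : ⟪D n (D n y), D n y⟫ ≤ ‖D n y‖ ^ 2 := hleC (D n y)
          rw [real_inner_self_eq_norm_sq]
          linarith
        linarith [split]
      · intro y
        rw [hDs]
        simp only [ContinuousLinearMap.sub_apply, ContinuousLinearMap.mul_apply,
          inner_sub_left]
        have h1 : ⟪D n (D n y), y⟫ = ‖D n y‖ ^ 2 := by
          rw [hsaC (D n y) y, ← real_inner_self_eq_norm_sq]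
        rw [h1]
        have := hleC y
        have := sq_nonneg ‖D n y‖
        linarith
      · rw [hDs]
        exact hBC.sub_right (hBC.mul_right hBC)
  have tele : ∀ n, A' = (∑ k ∈ Finset.range n, D k * D k) + D n := by
    intro n
    induction n with
    | zero => simp [hD0]
    | succ n ih =>
      conv_lhs => rw [ih]
      rw [Finset.sum_range_succ, hDs n]
      abel
  have hsumD : ∀ y : E, Summable (fun n => ‖D n y‖ ^ 2) := by
    intro y
    apply summable_of_sum_range_le (c := ⟪A' y, y⟫) (fun n => sq_nonneg _)
    intro n
    have happ : A' y = (∑ k ∈ Finset.range n, D k (D k y)) + D n y := by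
      have h0 := congrArg (fun T : E →L[ℝ] E => T y) (tele n)
      simpa only [ContinuousLinearMap.add_apply, ContinuousLinearMap.sum_apply,
        ContinuousLinearMap.mul_apply] using h0
    have hin : ⟪A' y, y⟫ = (∑ k ∈ Finset.range n, ‖D k y‖ ^ 2) + ⟪D n y, y⟫ := by
      rw [happ, inner_add_left, sum_inner]
      congr 1
      refine Finset.sum_congr rfl fun k _ => ?_
      rw [(hinv k).1 (D k y) y, ← real_inner_self_eq_norm_sq]
    have := (hinv n).2.1 y
    linarith
  have hDto0 : Tendsto (fun n => ‖D n (B x)‖) atTop (nhds 0) := by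
    have h1 := (hsumD (B x)).tendsto_atTop_zero
    have h2 : Tendsto (fun n => Real.sqrt (‖D n (B x)‖ ^ 2)) atTop (nhds (Real.sqrt 0)) :=
      (Real.continuous_sqrt.tendsto 0).comp h1
    simpa [Real.sqrt_sq (norm_nonneg _)] using h2
  have hmain : ∀ n, -(‖D n (B x)‖ * ‖x‖) ≤ ⟪A' (B x), x⟫ := by
    intro n
    have happ : A' (B x) = (∑ k ∈ Finset.range n, D k (B (D k x))) + D n (B x) := by
      have h0 := congrArg (fun T : E →L[ℝ] E => T (B x)) (tele n)
      simp only [ContinuousLinearMap.add_apply, ContinuousLinearMap.sum_apply,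
        ContinuousLinearMap.mul_apply] at h0
      rw [h0]
      congr 1
      refine Finset.sum_congr rfl fun k _ => ?_
      have hc : D k (B x) = B (D k x) :=
        congrArg (fun T : E →L[ℝ] E => T x) (hinv k).2.2.2.symm
      rw [hc]
    have hin : ⟪A' (B x), x⟫
        = (∑ k ∈ Finset.range n, ⟪B (D k x), D k x⟫) + ⟪D n (B x), x⟫ := by
      rw [happ, inner_add_left, sum_inner]
      congr 1
      refine Finset.sum_congr rfl fun k _ => ?_
      exact (hinv k).1 (B (D k x)) x
    have hterm : 0 ≤ ∑ k ∈ Finset.range n, ⟪B (D k x), D k x⟫ :=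
      Finset.sum_nonneg fun k _ => hB (D k x)
    have hlast : -(‖D n (B x)‖ * ‖x‖) ≤ ⟪D n (B x), x⟫ := by
      have h1 := abs_real_inner_le_norm (D n (B x)) x
      have h2 := neg_abs_le (⟪D n (B x), x⟫)
      linarith
    linarith [hin]
  have h0 : 0 ≤ ⟪A' (B x), x⟫ := by
    have ht : Tendsto (fun n => -(‖D n (B x)‖ * ‖x‖)) atTop (nhds 0) := by
      have := (hDto0.mul_const ‖x‖).neg
      simpa using this
    exact le_of_tendsto ht (Eventually.of_forall hmain)
  have hfin : ⟪A' (B x), x⟫ = c⁻¹ * ⟪A (B x), x⟫ := by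
    simp [hA'def, real_inner_smul_left]
  rw [hfin] at h0
  exact (mul_nonneg_iff_of_pos_left (inv_pos.mpr hcpos)).mp h0

private lemma proj_comm {P s bop : E →L[ℝ] E} (hP : IsSelfAdjoint P) (hs : s.IsPositive)
    (hb : s * s = bop) (hbP : Commute bop P) (hbinj : Function.Injective bop) :
    P * s = s * P := by
  have hssa : IsSelfAdjoint s := hs.isSelfAdjoint
  set T : E →L[ℝ] E := P * s - s * P with hT
  have hsinj : Function.Injective s := by
    intro y z h
    apply hbinj
    have h1 : bop y = s (s y) := by rw [← hb]; rfl
    have h2 : bop z = s (s z) := by rw [← hb]; rfl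
    rw [h1, h2, h]
  have hanti : s * T + T * s = 0 := by
    rw [hT]
    calc s * (P * s - s * P) + (P * s - s * P) * s
        = P * (s * s) - (s * s) * P := by noncomm_ring
      _ = P * bop - bop * P := by rw [hb]
      _ = 0 := by rw [hbP.eq, sub_self]
  have hanti' : s * T = -(T * s) := by
    have := hanti
    linear_combination (norm := abel) this
  have hstarT : star T = -T := by
    rw [hT, star_sub, star_mul, star_mul, hP.star_eq, hssa.star_eq]
    exact (neg_sub _ _).symm
  have hTskew : ∀ z w : E, ⟪T z, w⟫ = -⟪z, T w⟫ := by
    intro z w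
    have h1 : ⟪(ContinuousLinearMap.adjoint T) z, w⟫ = ⟪z, T w⟫ :=
      ContinuousLinearMap.adjoint_inner_left T w z
    have h2 : ContinuousLinearMap.adjoint T = -T := by
      rw [← ContinuousLinearMap.star_eq_adjoint, hstarT]
    rw [h2] at h1
    simp only [ContinuousLinearMap.neg_apply, inner_neg_left] at h1
    linarith [h1]
  set M : E →L[ℝ] E := -(T * T) with hM
  have hMsa : IsSelfAdjoint M := by
    rw [hM, IsSelfAdjoint, star_neg, star_mul, hstarT]
    simp
  have hMpos : ∀ y, 0 ≤ ⟪M y, y⟫ := by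
    intro y
    have h1 : M y = -(T (T y)) := rfl
    rw [h1, inner_neg_left, hTskew (T y) y]
    simp only [neg_neg]
    exact real_inner_self_nonneg
  have hsM : Commute s M := by
    have h1 : s * (T * T) = (T * T) * s := by
      calc s * (T * T) = (s * T) * T := by rw [mul_assoc]
        _ = (-(T * s)) * T := by rw [hanti']
        _ = -(T * (s * T)) := by noncomm_ring
        _ = -(T * (-(T * s))) := by rw [hanti']
        _ = (T * T) * s := by noncomm_ring
    show s * M = M * s
    rw [hM, mul_neg, neg_mul, h1]
  have hTzero : ∀ z, T z = 0 := by
    intro z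
    have hge : 0 ≤ ⟪s (T z), T z⟫ := pos_inner hs (T z)
    have hle : ⟪s (T z), T z⟫ ≤ 0 := by
      have h1 : 0 ≤ ⟪s (M z), z⟫ := prod_pos hs hMpos hMsa hsM z
      have h2 : s (M z) = T (s (T z)) := by
        have h3 : s (M z) = -(s (T (T z))) := by
          rw [hM]
          simp only [ContinuousLinearMap.neg_apply, ContinuousLinearMap.mul_apply, map_neg]
        have h4 : s (T (T z)) = -(T (s (T z))) := by
          have := congrArg (fun X : E →L[ℝ] E => X (T z)) hanti'
          simpa only [ContinuousLinearMap.mul_apply, ContinuousLinearMap.neg_apply] using this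
        rw [h3, h4, neg_neg]
      rw [h2] at h1
      rw [hTskew (s (T z)) z] at h1
      linarith
    have hz : ⟪s (T z), T z⟫ = 0 := le_antisymm hle hge
    have := cs_zero hs hz
    have h5 : T z = 0 := by
      apply hsinj
      rw [this, map_zero]
    exact h5
  have hT0 : T = 0 := ContinuousLinearMap.ext fun z => by rw [hTzero z]; rfl
  have := sub_eq_zero.mp (hT ▸ hT0)
  exact this

end Helpers
/-- With `P l` orthogonal projections with pairwise orthogonal ranges
summing to the identity, `b l` bounded positive self-adjoint injective operators with
uniformly bounded norms commuting with the projections, `s l` the positive square root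
of `b l`, and `Bhalf : f ↦ ∑ l, s l (P l f)` the square root of the covariance operator,
an element `u` lies in the range of `Bhalf` iff there is a sequence `v l ∈ range (P l)`
with `s l (v l) = P l u` and `∑ l, ‖v l‖² < ∞`; in that case `f := ∑ l, v l` satisfies
`Bhalf f = u`, i.e. `B^{-1/2} u = ∑ l, v l`. -/
theorem range_of_sqrt_covariance
    {E : Type*} [NormedAddCommGroup E] [InnerProductSpace ℝ E] [CompleteSpace E]
    [TopologicalSpace.SeparableSpace E]
    (P : ℕ → E →L[ℝ] E)
    (hPsa : ∀ l, IsSelfAdjoint (P l))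
    (hPidem : ∀ l, P l ∘L P l = P l)
    (hPorth : ∀ l l', l ≠ l' → P l ∘L P l' = 0)
    (hPsum : ∀ f : E, HasSum (fun l => P l f) f)
    (b : ℕ → E →L[ℝ] E)
    (hbpos : ∀ l, (b l).IsPositive)
    (hbinj : ∀ l, Function.Injective (b l))
    (C : ℝ) (hbnd : ∀ l, ‖b l‖ ≤ C)
    (hcomm : ∀ l l', (b l) ∘L (P l') = (P l') ∘L (b l))
    (s : ℕ → E →L[ℝ] E)
    (hspos : ∀ l, (s l).IsPositive)
    (hssq : ∀ l, (s l) ∘L (s l) = b l)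
    (Bhalf : E →L[ℝ] E)
    (hBhalf : ∀ f : E, HasSum (fun l => s l (P l f)) (Bhalf f)) :
    ∀ u : E,
      ((u ∈ Set.range Bhalf) ↔
        ∃ v : ℕ → E, (∀ l, v l ∈ Set.range (P l)) ∧ (∀ l, s l (v l) = P l u) ∧
          Summable (fun l => ‖v l‖ ^ 2)) ∧
      (∀ v : ℕ → E, (∀ l, v l ∈ Set.range (P l)) → (∀ l, s l (v l) = P l u) →
        Summable (fun l => ‖v l‖ ^ 2) →
        ∃ f : E, HasSum v f ∧ Bhalf f = u) := by

  have hPS : ∀ l l', (P l') ∘L (s l) = (s l) ∘L (P l') := by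
    intro l l'
    exact proj_comm (hPsa l') (hspos l) (hssq l) (hcomm l l') (hbinj l)
  intro u
  have key : ∀ v : ℕ → E, (∀ l, v l ∈ Set.range (P l)) → (∀ l, s l (v l) = P l u) →
      Summable (fun l => ‖v l‖ ^ 2) → ∃ f : E, HasSum v f ∧ Bhalf f = u := by
    intro v hvr hvs hsm
    have horth : ∀ l l', l ≠ l' → ⟪v l, v l'⟫ = 0 := by
      intro l l' hne
      obtain ⟨x, hx⟩ := hvr l
      obtain ⟨y, hy⟩ := hvr l'
      rw [← hx, ← hy, sa_inner (hPsa l) x (P l' y)]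
      have h0 : P l (P l' y) = 0 := by
        have := congrArg (fun T : E →L[ℝ] E => T y) (hPorth l l' hne)
        simpa using this
      rw [h0, inner_zero_right]
    have hsumv : Summable v := by
      have hfam : OrthogonalFamily ℝ (fun l => (ℝ ∙ v l : Submodule ℝ E))
          (fun l => (ℝ ∙ v l : Submodule ℝ E).subtypeₗᵢ) := by
        intro i j hij a b'
        obtain ⟨r, hr⟩ := Submodule.mem_span_singleton.mp a.2
        obtain ⟨r', hr'⟩ := Submodule.mem_span_singleton.mp b'.2
        show ⟪(a : E), (b' : E)⟫ = 0
        rw [← hr, ← hr', real_inner_smul_left, real_inner_smul_right, horth i j hij]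
        ring
      have hmem : ∀ l, v l ∈ (ℝ ∙ v l : Submodule ℝ E) := fun l =>
        Submodule.mem_span_singleton_self _
      have := (hfam.summable_iff_norm_sq_summable (fun l => ⟨v l, hmem l⟩)).mpr ?_
      · simpa using this
      · simpa using hsm
    obtain ⟨f, hf⟩ := hsumv
    have hPf : ∀ l, P l f = v l := by
      intro l
      have h1 : HasSum (fun l' => P l (v l')) (P l f) := (P l).hasSum hf
      have h2 : (fun l' => P l (v l')) = fun l' => if l' = l then v l else 0 := by
        funext l'
        obtain ⟨x, hx⟩ := hvr l'
        by_cases hll : l' = l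
        · subst hll
          rw [if_pos rfl, ← hx]
          have := congrArg (fun T : E →L[ℝ] E => T x) (hPidem l')
          simpa using this
        · rw [if_neg hll, ← hx]
          have := congrArg (fun T : E →L[ℝ] E => T x) (hPorth l l' (Ne.symm hll))
          simpa using this
      rw [h2] at h1
      exact h1.unique (hasSum_ite_eq l (v l))
    refine ⟨f, hf, ?_⟩
    have h3 : HasSum (fun l => s l (P l f)) (Bhalf f) := hBhalf f
    have h4 : (fun l => s l (P l f)) = fun l => P l u := by
      funext l
      rw [hPf l, hvs l]
    rw [h4] at h3
    exact h3.unique (hPsum u)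
  refine ⟨⟨?_, ?_⟩, key⟩
  · rintro ⟨g, hg⟩
    refine ⟨fun l => P l g, fun l => ⟨g, rfl⟩, ?_, ?_⟩
    · intro l
      have h1 : HasSum (fun l' => P l (s l' (P l' g))) (P l (Bhalf g)) :=
        (P l).hasSum (hBhalf g)
      have h2 : (fun l' => P l (s l' (P l' g)))
          = fun l' => if l' = l then s l (P l g) else 0 := by
        funext l'
        have hswap : P l (s l' (P l' g)) = s l' (P l (P l' g)) :=
          congrArg (fun T : E →L[ℝ] E => T (P l' g)) (hPS l' l)
        by_cases hll : l' = l
        · subst hll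
          rw [if_pos rfl, hswap]
          congr 1
          have := congrArg (fun T : E →L[ℝ] E => T g) (hPidem l')
          simpa using this
        · rw [if_neg hll, hswap]
          have h0 : P l (P l' g) = 0 := by
            have := congrArg (fun T : E →L[ℝ] E => T g) (hPorth l l' (Ne.symm hll))
            simpa using this
          rw [h0, map_zero]
      rw [h2] at h1
      have h5 := h1.unique (hasSum_ite_eq l (s l (P l g)))
      rw [← hg]
      exact h5.symm
    · have h1 : HasSum (fun l => (innerSL ℝ g) (P l g)) ((innerSL ℝ g) g) :=
        (innerSL ℝ g).hasSum (hPsum g)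
      have h2 : (fun l => (innerSL ℝ g) (P l g)) = fun l => ‖P l g‖ ^ 2 := by
        funext l
        show ⟪g, P l g⟫ = ‖P l g‖ ^ 2
        have hidem : P l (P l g) = P l g := by
          have := congrArg (fun T : E →L[ℝ] E => T g) (hPidem l)
          simpa using this
        calc ⟪g, P l g⟫ = ⟪g, P l (P l g)⟫ := by rw [hidem]
          _ = ⟪P l g, P l g⟫ := (sa_inner (hPsa l) g (P l g)).symm
          _ = ‖P l g‖ ^ 2 := real_inner_self_eq_norm_sq _
      rw [h2] at h1
      exact h1.summable
  · rintro ⟨v, hvr, hvs, hsm⟩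
    obtain ⟨f, _, hfu⟩ := key v hvr hvs hsm
    exact ⟨f, hfu⟩
end

section
/- Let E and 𝓗 be separable real Hilbert spaces, h : ℕ → ℕ, (ψ_{k,l,m}) a Hilbert (orthonormal) basis of E indexed by triples (k, l, m) with k ∈ ℕ, l ∈ ℕ, m ∈ Fin (h l), and (e_k)_{k∈ℕ} a Hilbert basis of 𝓗. Let (d_l)_{l∈ℕ} be bounded operators on 𝓗 and let D be a bounded operator on E acting block-diagonally, i.e. ⟨D ψ_{k,l,m}, ψ_{k',l',m'}⟩ = 0 unless l = l' and m = m', and ⟨D ψ_{k,l,m}, ψ_{k',l,m}⟩ = ⟨d_l e_k, e_{k'}⟩ for all k, k', l, m. Then, as an identity in [0, ∞], Σ_{l∈ℕ} Σ_{m∈Fin(h l)} Σ_{k∈ℕ} ‖D ψ_{k,l,m}‖² = Σ_{l∈ℕ} h(l) · Σ_{k∈ℕ} ‖d_l e_k‖². In particular D is Hilbert–Schmidt if and only if Σ_l h(l) ‖d_l‖²_{HS} < ∞, where ‖d_l‖²_{HS} := Σ_k ‖d_l e_k‖², and then its squared Hilbert–Schmidt norm equals Σ_l h(l) ‖d_l‖²_{HS}.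 -/
open RealInnerProductSpace
open scoped ENNReal

private lemma norm_sq_eq_tsum_inner {F : Type*} [NormedAddCommGroup F]
    [InnerProductSpace ℝ F] [CompleteSpace F] {ι : Type*}
    (b : HilbertBasis ι ℝ F) (x : F) : ‖x‖ ^ 2 = ∑' i, ⟪x, b i⟫ ^ 2 := by
  rw [← real_inner_self_eq_norm_sq, ← b.tsum_inner_mul_inner x x]
  exact tsum_congr fun i => by rw [sq, real_inner_comm x (b i)]

/-- If `D` acts block-diagonally on a Hilbert basis `ψ` of `E` indexed by
triples `(k, l, m)` with `m : Fin (h l)`, with block `d l` (expressed on a Hilbert basis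
`e` of `𝓗`) repeated `h l` times in degree `l`, then (as an identity in `[0,∞]`)
`∑_l ∑_{m} ∑_k ‖D ψ_{k,l,m}‖² = ∑_l h(l) · ∑_k ‖d_l e_k‖²`; in particular `D` is
Hilbert–Schmidt iff `∑_l h(l) ‖d_l‖²_{HS} < ∞`, and its squared Hilbert–Schmidt norm
(the sum of `‖D ψ_{k,l,m}‖²` over the whole basis) then equals this quantity. -/
theorem hilbert_schmidt_block_diagonal
    {E 𝓗 : Type*} [NormedAddCommGroup E] [InnerProductSpace ℝ E] [CompleteSpace E]
    [TopologicalSpace.SeparableSpace E]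
    [NormedAddCommGroup 𝓗] [InnerProductSpace ℝ 𝓗] [CompleteSpace 𝓗]
    [TopologicalSpace.SeparableSpace 𝓗]
    (h : ℕ → ℕ)
    (ψ : HilbertBasis (ℕ × (Σ l : ℕ, Fin (h l))) ℝ E)
    (e : HilbertBasis ℕ ℝ 𝓗)
    (d : ℕ → 𝓗 →L[ℝ] 𝓗)
    (D : E →L[ℝ] E)
    (hD_offdiag : ∀ (k k' l l' : ℕ) (m : Fin (h l)) (m' : Fin (h l')),
      ((⟨l, m⟩ : Σ l : ℕ, Fin (h l)) ≠ (⟨l', m'⟩ : Σ l : ℕ, Fin (h l))) →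
        ⟪D (ψ (k, ⟨l, m⟩)), ψ (k', ⟨l', m'⟩)⟫ = 0)
    (hD_diag : ∀ (k k' l : ℕ) (m : Fin (h l)),
      ⟪D (ψ (k, ⟨l, m⟩)), ψ (k', ⟨l, m⟩)⟫ = ⟪d l (e k), e k'⟫) :
    (∑' l : ℕ, ∑' m : Fin (h l), ∑' k : ℕ, ENNReal.ofReal (‖D (ψ (k, ⟨l, m⟩))‖ ^ 2))
      = ∑' l : ℕ, (h l : ℝ≥0∞) * ∑' k : ℕ, ENNReal.ofReal (‖d l (e k)‖ ^ 2) ∧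
    (∑' p : ℕ × (Σ l : ℕ, Fin (h l)), ENNReal.ofReal (‖D (ψ p)‖ ^ 2))
      = ∑' l : ℕ, (h l : ℝ≥0∞) * ∑' k : ℕ, ENNReal.ofReal (‖d l (e k)‖ ^ 2) := by
  have key : ∀ (k l : ℕ) (m : Fin (h l)),
      ‖D (ψ (k, ⟨l, m⟩))‖ ^ 2 = ‖d l (e k)‖ ^ 2 := by
    intro k l m
    rw [norm_sq_eq_tsum_inner ψ, norm_sq_eq_tsum_inner e]
    have hinj : Function.Injective
        (fun k' : ℕ => ((k', ⟨l, m⟩) : ℕ × (Σ l : ℕ, Fin (h l)))) := by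
      intro a b hab
      exact (Prod.mk.injEq _ _ _ _ ▸ hab).1
    rw [← hinj.tsum_eq (f := fun p => ⟪D (ψ (k, ⟨l, m⟩)), ψ p⟫ ^ 2)]
    · exact tsum_congr fun k' => by rw [hD_diag k k' l m]
    · intro p hp
      rcases p with ⟨k', l', m'⟩
      by_cases hlm : (⟨l', m'⟩ : Σ l : ℕ, Fin (h l)) = ⟨l, m⟩
      · exact ⟨k', by simp [hlm]⟩
      · exact absurd (by simp [hD_offdiag k k' l l' m m' (Ne.symm hlm)])
          (Function.mem_support.mp hp)
  have key2 : ∀ l : ℕ,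
      (∑' m : Fin (h l), ∑' k : ℕ, ENNReal.ofReal (‖D (ψ (k, ⟨l, m⟩))‖ ^ 2))
        = (h l : ℝ≥0∞) * ∑' k : ℕ, ENNReal.ofReal (‖d l (e k)‖ ^ 2) := by
    intro l
    have : ∀ m : Fin (h l),
        (∑' k : ℕ, ENNReal.ofReal (‖D (ψ (k, ⟨l, m⟩))‖ ^ 2))
          = ∑' k : ℕ, ENNReal.ofReal (‖d l (e k)‖ ^ 2) :=
      fun m => tsum_congr fun k => by rw [key k l m]
    rw [tsum_congr this, tsum_fintype, Finset.sum_const, Finset.card_univ,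
      Fintype.card_fin, nsmul_eq_mul]
  refine ⟨tsum_congr key2, ?_⟩
  rw [ENNReal.tsum_prod', ENNReal.tsum_comm, ← tsum_congr key2]
  exact ENNReal.tsum_sigma' fun σ => ∑' k : ℕ, ENNReal.ofReal (‖D (ψ (k, σ))‖ ^ 2)
end

section
/- Let 𝓗 be a separable real Hilbert space, B a compact self-adjoint positive injective bounded operator on 𝓗, (e_n)_{n∈ℕ} a Hilbert basis of 𝓗 consisting of eigenvectors of B with B e_n = λ_n e_n and λ_n > 0 for all n. Let A be a bounded operator on 𝓗 and suppose M ≥ 0 satisfies Σ_{m,n∈ℕ} ( ⟨A e_m, e_n⟩ / (√λ_m · √λ_n) − δ_{mn} )² ≤ M², where δ_{mn} = 1 if m = n and 0 otherwise. Then for every u ∈ 𝓗 with u ≠ 0, |⟨(A − B) u, u⟩| ≤ M · ⟨B u, u⟩; equivalently, |⟨(A − B)u, u⟩ / ⟨B u, u⟩| ≤ ‖B^{-1/2} A B^{-1/2} − I‖_{HS}. -/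
open RealInnerProductSpace
open scoped ENNReal

/-- AM-GM style summability of products of ℓ² sequences. -/
lemma summable_abs_mul_of_sq {f g : ℕ → ℝ} (hf : Summable fun n => f n ^ 2)
    (hg : Summable fun n => g n ^ 2) : Summable fun n => |f n * g n| := by
  refine Summable.of_nonneg_of_le (fun n => abs_nonneg _) (fun n => ?_)
    ((hf.add hg).mul_left (1 / 2))
  have := sq_nonneg (|f n| - |g n|)
  rw [abs_mul]
  nlinarith [abs_nonneg (f n), abs_nonneg (g n), sq_abs (f n), sq_abs (g n)]

/-- Cauchy–Schwarz for infinite sums (absolute values form). -/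
lemma tsum_abs_mul_le_sqrt_mul_sqrt {f g : ℕ → ℝ} (hf : Summable fun n => f n ^ 2)
    (hg : Summable fun n => g n ^ 2) :
    ∑' n, |f n * g n| ≤ Real.sqrt (∑' n, f n ^ 2) * Real.sqrt (∑' n, g n ^ 2) := by
  refine Summable.tsum_le_of_sum_le (summable_abs_mul_of_sq hf hg) fun s => ?_
  have h1 : (∑ n ∈ s, |f n * g n|) ^ 2 ≤ (∑ n ∈ s, f n ^ 2) * ∑ n ∈ s, g n ^ 2 := by
    have := Finset.sum_mul_sq_le_sq_mul_sq s (fun n => |f n|) (fun n => |g n|)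
    simpa [abs_mul, sq_abs] using this
  have h2 : (∑ n ∈ s, f n ^ 2) ≤ ∑' n, f n ^ 2 :=
    Summable.sum_le_tsum s (fun n _ => sq_nonneg _) hf
  have h3 : (∑ n ∈ s, g n ^ 2) ≤ ∑' n, g n ^ 2 :=
    Summable.sum_le_tsum s (fun n _ => sq_nonneg _) hg
  have hnn : (0:ℝ) ≤ ∑ n ∈ s, |f n * g n| := Finset.sum_nonneg fun n _ => abs_nonneg _
  have := Real.sqrt_le_sqrt h1
  rw [Real.sqrt_sq hnn] at this
  refine this.trans ?_
  rw [Real.sqrt_mul (Finset.sum_nonneg fun n _ => sq_nonneg _)]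
  exact mul_le_mul (Real.sqrt_le_sqrt h2) (Real.sqrt_le_sqrt h3) (Real.sqrt_nonneg _)
    (Real.sqrt_nonneg _)

lemma abs_tsum_le' {f : ℕ → ℝ} (hf : Summable fun n => |f n|) :
    |∑' n, f n| ≤ ∑' n, |f n| := by
  simpa [Real.norm_eq_abs] using norm_tsum_le_tsum_norm (f := f) (by simpa [Real.norm_eq_abs] using hf)

/-- Let `B` be a compact self-adjoint positive injective operator on a
separable real Hilbert space with eigenbasis `(e n)` and eigenvalues `λ n > 0`, and let
`A` be a bounded operator. If `M ≥ 0` satisfies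
`∑_{m,n} (⟨A e_m, e_n⟩/(√λ_m √λ_n) − δ_{mn})² ≤ M²` (the left-hand side being the
squared Hilbert–Schmidt norm of `B^{-1/2} A B^{-1/2} − I`), then for every `u ≠ 0`,
`|⟨(A − B)u, u⟩| ≤ M ⟨B u, u⟩`. -/
theorem abs_inner_sub_le_hs_mul_inner
    {𝓗 : Type*} [NormedAddCommGroup 𝓗] [InnerProductSpace ℝ 𝓗] [CompleteSpace 𝓗]
    [TopologicalSpace.SeparableSpace 𝓗]
    (B : 𝓗 →L[ℝ] 𝓗)
    (hBcompact : IsCompactOperator B)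
    (hBsa : IsSelfAdjoint B)
    (hBpos : B.IsPositive)
    (hBinj : Function.Injective B)
    (e : HilbertBasis ℕ ℝ 𝓗)
    (lam : ℕ → ℝ)
    (heig : ∀ n, B (e n) = lam n • e n)
    (hlam : ∀ n, 0 < lam n)
    (A : 𝓗 →L[ℝ] 𝓗)
    (M : ℝ) (hM : 0 ≤ M)
    (hHS : (∑' m : ℕ, ∑' n : ℕ, ENNReal.ofReal
        ((⟪A (e m), e n⟫ / (Real.sqrt (lam m) * Real.sqrt (lam n))
          - if m = n then (1 : ℝ) else 0) ^ 2)) ≤ ENNReal.ofReal (M ^ 2)) :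
    ∀ u : 𝓗, u ≠ 0 → |⟪(A - B) u, u⟫| ≤ M * ⟪B u, u⟫ := by
  intro u _
  classical
  set c : ℕ → ℝ := fun n => ⟪u, e n⟫ with hc
  set a : ℕ → ℝ := fun n => Real.sqrt (lam n) * c n with ha
  set T : ℕ → ℕ → ℝ := fun m n =>
    ⟪A (e m), e n⟫ / (Real.sqrt (lam m) * Real.sqrt (lam n))
      - if m = n then (1 : ℝ) else 0 with hT
  have hsq : ∀ n, (0:ℝ) < Real.sqrt (lam n) := fun n => Real.sqrt_pos.2 (hlam n)
  -- entry formula for A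
  have hA_entry : ∀ m n, ⟪A (e m), e n⟫
      = Real.sqrt (lam m) * Real.sqrt (lam n) * (T m n + if m = n then 1 else 0) := by
    intro m n
    have h1 : T m n + (if m = n then (1:ℝ) else 0)
        = ⟪A (e m), e n⟫ / (Real.sqrt (lam m) * Real.sqrt (lam n)) := by
      simp [hT]
    rw [h1, mul_comm, div_mul_cancel₀ _ (mul_pos (hsq m) (hsq n)).ne']
  -- product summability of T²
  have hprod : (∑' p : ℕ × ℕ, ENNReal.ofReal ((T p.1 p.2) ^ 2)) ≤ ENNReal.ofReal (M ^ 2) := by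
    rw [ENNReal.tsum_prod']
    exact hHS
  have hfin : (∑' p : ℕ × ℕ, ENNReal.ofReal ((T p.1 p.2) ^ 2)) ≠ ⊤ :=
    (lt_of_le_of_lt hprod ENNReal.ofReal_lt_top).ne
  have hTsummable : Summable (fun p : ℕ × ℕ => (T p.1 p.2) ^ 2) := by
    have h := ENNReal.tsum_coe_ne_top_iff_summable.1 (by simpa [ENNReal.ofReal] using hfin)
    have : ∀ p : ℕ × ℕ, (T p.1 p.2) ^ 2 = ((Real.toNNReal ((T p.1 p.2) ^ 2) : NNReal) : ℝ) := by
      intro p; rw [Real.coe_toNNReal _ (sq_nonneg _)]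
    rw [funext this]
    exact NNReal.summable_coe.2 h
  have hTsum_le : ∑' p : ℕ × ℕ, (T p.1 p.2) ^ 2 ≤ M ^ 2 := by
    rw [← ENNReal.ofReal_le_ofReal_iff (by positivity),
      ENNReal.ofReal_tsum_of_nonneg (fun p => sq_nonneg _) hTsummable]
    exact hprod
  -- columns
  have hTcol : ∀ n, Summable (fun m => (T m n) ^ 2) := by
    intro n
    have := hTsummable.comp_injective (i := fun m => ((m, n) : ℕ × ℕ))
      (fun x y h => by simpa using congrArg Prod.fst h)
    exact this
  set t : ℕ → ℝ := fun n => Real.sqrt (∑' m, (T m n) ^ 2) with ht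
  have ht_nonneg : ∀ n, 0 ≤ t n := fun n => Real.sqrt_nonneg _
  have ht_sq : ∀ n, t n ^ 2 = ∑' m, (T m n) ^ 2 := fun n =>
    Real.sq_sqrt (tsum_nonneg fun m => sq_nonneg _)
  have hswap : Summable (fun p : ℕ × ℕ => (T p.2 p.1) ^ 2) := by
    have := hTsummable.prod_symm
    simpa using this
  have htsummable : Summable fun n => t n ^ 2 := by
    rw [funext ht_sq]
    exact ((summable_prod_of_nonneg (fun p => sq_nonneg _)).1 hswap).2
  have htsum_le : ∑' n, t n ^ 2 ≤ M ^ 2 := by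
    rw [funext ht_sq]
    calc ∑' (n) (m), (T m n) ^ 2 = ∑' p : ℕ × ℕ, (T p.2 p.1) ^ 2 := (Summable.tsum_prod' hswap (fun n => hTcol n)).symm
      _ = ∑' p : ℕ × ℕ, (T p.1 p.2) ^ 2 := by
            simpa using (Equiv.prodComm ℕ ℕ).tsum_eq (fun p : ℕ × ℕ => (T p.1 p.2) ^ 2)
      _ ≤ M ^ 2 := hTsum_le
  -- a ∈ ℓ² with sum ⟪B u, u⟫
  have hBn : ∀ n, ⟪B u, e n⟫ = lam n * c n := by
    intro n
    have : ⟪B u, e n⟫ = ⟪u, B (e n)⟫ := by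
      rw [← ContinuousLinearMap.adjoint_inner_left, hBsa.adjoint_eq]
    rw [this, heig n, real_inner_smul_right]
  have hBsum : HasSum (fun n => a n ^ 2) ⟪B u, u⟫ := by
    have h := e.hasSum_inner_mul_inner (B u) u
    convert! h using 2 with n
    have h1 : a n ^ 2 = lam n * c n * c n := by
      simp only [ha]; rw [mul_pow, Real.sq_sqrt (hlam n).le]; ring
    have h2 : ⟪B u, e n⟫ * ⟪e n, u⟫ = lam n * c n * c n := by
      rw [hBn n]
      congr 1
      exact real_inner_comm u (e n)
    exact h1.trans h2.symm
  have hSa : Summable fun n => a n ^ 2 := hBsum.summable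
  have hSaval : ∑' n, a n ^ 2 = ⟪B u, u⟫ := hBsum.tsum_eq
  have hSann : (0:ℝ) ≤ ∑' n, a n ^ 2 := tsum_nonneg fun n => sq_nonneg _
  -- the column sums
  set s : ℕ → ℝ := fun n => ∑' m, a m * T m n with hs
  have hcol_summable : ∀ n, Summable fun m => |a m * T m n| := fun n =>
    summable_abs_mul_of_sq hSa (hTcol n)
  have hs_abs : ∀ n, |s n| ≤ Real.sqrt (∑' k, a k ^ 2) * t n := by
    intro n
    calc |s n| ≤ ∑' m, |a m * T m n| := abs_tsum_le' (hcol_summable n)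
      _ ≤ Real.sqrt (∑' k, a k ^ 2) * Real.sqrt (∑' m, (T m n) ^ 2) :=
          tsum_abs_mul_le_sqrt_mul_sqrt hSa (hTcol n)
      _ = Real.sqrt (∑' k, a k ^ 2) * t n := by rw [ht]
  -- expansion of ⟪A u, e n⟫
  have hAn : ∀ n, ⟪A u, e n⟫ = Real.sqrt (lam n) * s n + lam n * c n := by
    intro n
    have h := e.hasSum_inner_mul_inner u ((ContinuousLinearMap.adjoint A) (e n))
    have hterm : ∀ m, ⟪u, e m⟫ * ⟪e m, (ContinuousLinearMap.adjoint A) (e n)⟫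
        = Real.sqrt (lam n) * (a m * T m n) + (if m = n then lam n * c n else 0) := by
      intro m
      rw [ContinuousLinearMap.adjoint_inner_right, hA_entry m n]
      show c m * (Real.sqrt (lam m) * Real.sqrt (lam n) * (T m n + if m = n then 1 else 0))
        = Real.sqrt (lam n) * (a m * T m n) + (if m = n then lam n * c n else 0)
      simp only [ha]
      by_cases hmn : m = n
      · subst hmn
        rw [if_pos rfl, if_pos rfl]
        have h2 : Real.sqrt (lam m) * Real.sqrt (lam m) = lam m :=
          Real.mul_self_sqrt (hlam m).le
        linear_combination c m * h2
      · simp only [if_neg hmn]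
        ring
    rw [ContinuousLinearMap.adjoint_inner_right] at h
    rw [funext hterm] at h
    have h1 : HasSum (fun m => Real.sqrt (lam n) * (a m * T m n)) (Real.sqrt (lam n) * s n) := by
      have : Summable fun m => a m * T m n := (hcol_summable n).of_abs
      exact this.hasSum.mul_left _
    have h2 : HasSum (fun m => if m = n then lam n * c n else 0) (lam n * c n) :=
      hasSum_ite_eq n _
    have := (h1.add h2).unique h
    linarith [this]
  have hABn : ∀ n, ⟪(A - B) u, e n⟫ = Real.sqrt (lam n) * s n := by
    intro n
    rw [ContinuousLinearMap.sub_apply, inner_sub_left, hAn n, hBn n]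
    ring
  -- final expansion
  have hfinal : HasSum (fun n => s n * a n) ⟪(A - B) u, u⟫ := by
    have h := e.hasSum_inner_mul_inner ((A - B) u) u
    convert! h using 2 with n
    have h2 : ⟪(A - B) u, e n⟫ * ⟪e n, u⟫ = s n * a n := by
      rw [hABn n]
      have h3 : (⟪e n, u⟫ : ℝ) = c n := real_inner_comm u (e n)
      calc Real.sqrt (lam n) * s n * ⟪e n, u⟫ = Real.sqrt (lam n) * s n * c n := by rw [h3]
        _ = s n * a n := by simp only [ha]; ring
    exact h2.symm
  -- estimate
  have hbound : ∀ n, |s n * a n| ≤ Real.sqrt (∑' k, a k ^ 2) * (t n * |a n|) := by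
    intro n
    rw [abs_mul]
    calc |s n| * |a n| ≤ (Real.sqrt (∑' k, a k ^ 2) * t n) * |a n| :=
        mul_le_mul_of_nonneg_right (hs_abs n) (abs_nonneg _)
      _ = Real.sqrt (∑' k, a k ^ 2) * (t n * |a n|) := by ring
  have hta_summable : Summable fun n => t n * |a n| := by
    have := summable_abs_mul_of_sq htsummable hSa
    have heq : ∀ n, |t n * a n| = t n * |a n| := fun n => by
      simp [abs_mul, abs_of_nonneg (ht_nonneg n)]
    rwa [funext heq] at this
  have hsa_summable : Summable fun n => |s n * a n| :=
    Summable.of_nonneg_of_le (fun n => abs_nonneg _) hbound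
      (hta_summable.mul_left _)
  have hta_le : ∑' n, t n * |a n| ≤ M * Real.sqrt (∑' k, a k ^ 2) := by
    have h1 : ∑' n, t n * |a n| ≤ Real.sqrt (∑' n, t n ^ 2) * Real.sqrt (∑' n, a n ^ 2) := by
      have heq : ∀ n, t n * |a n| = |t n * a n| := fun n => by
        simp [abs_mul, abs_of_nonneg (ht_nonneg n)]
      rw [funext heq]
      exact tsum_abs_mul_le_sqrt_mul_sqrt htsummable hSa
    refine h1.trans (mul_le_mul_of_nonneg_right ?_ (Real.sqrt_nonneg _))
    calc Real.sqrt (∑' n, t n ^ 2) ≤ Real.sqrt (M ^ 2) := Real.sqrt_le_sqrt htsum_le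
      _ = M := Real.sqrt_sq hM
  calc |⟪(A - B) u, u⟫| = |∑' n, s n * a n| := by rw [hfinal.tsum_eq]
    _ ≤ ∑' n, |s n * a n| := abs_tsum_le' hsa_summable
    _ ≤ ∑' n, Real.sqrt (∑' k, a k ^ 2) * (t n * |a n|) :=
        Summable.tsum_le_tsum hbound hsa_summable (hta_summable.mul_left _)
    _ = Real.sqrt (∑' k, a k ^ 2) * ∑' n, t n * |a n| := tsum_mul_left
    _ ≤ Real.sqrt (∑' k, a k ^ 2) * (M * Real.sqrt (∑' k, a k ^ 2)) :=
        mul_le_mul_of_nonneg_left hta_le (Real.sqrt_nonneg _)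
    _ = M * (Real.sqrt (∑' k, a k ^ 2) * Real.sqrt (∑' k, a k ^ 2)) := by ring
    _ = M * ∑' k, a k ^ 2 := by rw [Real.mul_self_sqrt hSann]
    _ = M * ⟪B u, u⟫ := by rw [hSaval]
end

section
/- For an integer d ≥ 2, set h(l) = (2l+d−1)(l+d−2)!/(l!(d−1)!) for l ∈ ℕ. Let 𝓗 be a separable real Hilbert space and, for j = 1, 2, let (b_l^{(j)})_{l∈ℕ} be sequences of compact self-adjoint positive injective bounded operators on 𝓗. For each l, let (f_{l,n})_{n∈ℕ} be a Hilbert basis of eigenvectors of b_l^{(1)} with eigenvalues μ_{l,n} > 0, and set M_l² := Σ_{m,n∈ℕ} ( ⟨b_l^{(2)} f_{l,m}, f_{l,n}⟩ / (√μ_{l,m} · √μ_{l,n}) − δ_{mn} )² ∈ [0,∞]. Then for every u ∈ 𝓗 with u ≠ 0, as an inequality in [0,∞], Σ_{l∈ℕ} h(l) · ( ⟨b_l^{(2)} u, u⟩ / ⟨b_l^{(1)} u, u⟩ − 1 )² ≤ Σ_{l∈ℕ} h(l) · M_l². In particular, finiteness of the operator-valued (Hilbert–Schmidt) series implies finiteness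 of the scalar-projection series for every direction u. -/
open RealInnerProductSpace
open scoped ENNReal

/-- Dimension of the space of degree-`l` spherical harmonics on the `d`-dimensional
sphere: `h(l) = (2l+d−1)(l+d−2)!/(l!(d−1)!)`. -/
def sphHarmDim (d l : ℕ) : ℕ :=
  (2 * l + d - 1) * Nat.factorial (l + d - 2) / (Nat.factorial l * Nat.factorial (d - 1))

/-- Products of square-summable sequences are summable. -/
lemma summable_mul_of_sq' {f g : ℕ → ℝ} (hf : Summable fun n => f n ^ 2)
    (hg : Summable fun n => g n ^ 2) : Summable fun n => f n * g n := by
  have hb : ∀ n, |f n * g n| ≤ (f n ^ 2 + g n ^ 2) / 2 := by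
    intro n
    rw [abs_mul]
    nlinarith [sq_nonneg (|f n| - |g n|), sq_abs (f n), sq_abs (g n)]
  exact Summable.of_abs (Summable.of_nonneg_of_le (fun n => abs_nonneg _) hb
    ((hf.add hg).div_const 2))

/-- Cauchy–Schwarz inequality for infinite series, squared form. -/
lemma tsum_mul_sq_le' {f g : ℕ → ℝ} (hf : Summable fun n => f n ^ 2)
    (hg : Summable fun n => g n ^ 2) :
    (∑' n, f n * g n) ^ 2 ≤ (∑' n, f n ^ 2) * ∑' n, g n ^ 2 := by
  have hfg := summable_mul_of_sq' hf hg
  have h0 : Filter.Tendsto (fun s : Finset ℕ => ∑ n ∈ s, f n * g n)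
      Filter.atTop (nhds (∑' n, f n * g n)) := hfg.hasSum
  have h1 := h0.pow 2
  refine le_of_tendsto h1 (Filter.Eventually.of_forall fun s => ?_)
  calc (∑ n ∈ s, f n * g n) ^ 2
      ≤ (∑ n ∈ s, f n ^ 2) * ∑ n ∈ s, g n ^ 2 := Finset.sum_mul_sq_le_sq_mul_sq s f g
    _ ≤ (∑' n, f n ^ 2) * ∑' n, g n ^ 2 :=
        mul_le_mul (Summable.sum_le_tsum s (fun i _ => sq_nonneg _) hf)
          (Summable.sum_le_tsum s (fun i _ => sq_nonneg _) hg)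
          (Finset.sum_nonneg fun i _ => sq_nonneg _) (tsum_nonneg fun i => sq_nonneg _)

set_option maxHeartbeats 1000000 in
/-- Key pointwise estimate: for symmetric operators `T₁, T₂`, with `e` an eigenbasis of
`T₁` with positive eigenvalues `μ`, the squared relative deviation of the quadratic forms
in any direction `u ≠ 0` is bounded by the squared Hilbert–Schmidt norm of
`T₁^{-1/2} T₂ T₁^{-1/2} − I` written spectrally. -/
lemma key_ratio_sq_le {𝓗 : Type*} [NormedAddCommGroup 𝓗] [InnerProductSpace ℝ 𝓗]
    [CompleteSpace 𝓗] (T₁ T₂ : 𝓗 →L[ℝ] 𝓗)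
    (hT₁ : (T₁ : 𝓗 →ₗ[ℝ] 𝓗).IsSymmetric) (hT₂ : (T₂ : 𝓗 →ₗ[ℝ] 𝓗).IsSymmetric)
    (e : HilbertBasis ℕ ℝ 𝓗) (μ : ℕ → ℝ)
    (heig : ∀ n, T₁ (e n) = μ n • e n) (hμ : ∀ n, 0 < μ n)
    (u : 𝓗) (hu : u ≠ 0)
    (hF : Summable fun p : ℕ × ℕ =>
      (⟪T₂ (e p.1), e p.2⟫ / (Real.sqrt (μ p.1) * Real.sqrt (μ p.2))
        - if p.1 = p.2 then (1 : ℝ) else 0) ^ 2) :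
    (⟪T₂ u, u⟫ / ⟪T₁ u, u⟫ - 1) ^ 2 ≤
      ∑' p : ℕ × ℕ, (⟪T₂ (e p.1), e p.2⟫ / (Real.sqrt (μ p.1) * Real.sqrt (μ p.2))
        - if p.1 = p.2 then (1 : ℝ) else 0) ^ 2 := by
  classical
  set c : ℕ → ℝ := fun n => ⟪e n, u⟫ with hc
  set g : ℕ → ℝ := fun n => Real.sqrt (μ n) * c n with hgdef
  set a : ℕ → ℕ → ℝ := fun m n =>
    ⟪T₂ (e m), e n⟫ / (Real.sqrt (μ m) * Real.sqrt (μ n)) - if m = n then (1 : ℝ) else 0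
    with ha
  have hFa : (fun p : ℕ × ℕ =>
      (⟪T₂ (e p.1), e p.2⟫ / (Real.sqrt (μ p.1) * Real.sqrt (μ p.2))
        - if p.1 = p.2 then (1 : ℝ) else 0) ^ 2) = fun p : ℕ × ℕ => a p.1 p.2 ^ 2 := rfl
  rw [hFa] at hF ⊢
  have hsqrt_pos : ∀ n, 0 < Real.sqrt (μ n) := fun n => Real.sqrt_pos.2 (hμ n)
  have hsq : ∀ n, Real.sqrt (μ n) * Real.sqrt (μ n) = μ n :=
    fun n => Real.mul_self_sqrt (hμ n).le
  have hg2 : ∀ n, g n ^ 2 = μ n * c n ^ 2 := by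
    intro n
    have h : g n ^ 2 = Real.sqrt (μ n) * Real.sqrt (μ n) * c n ^ 2 := by rw [hgdef]; ring
    rw [h, hsq n]
  -- symmetry of the matrix entries
  have hB : ∀ m n, ⟪e m, T₂ (e n)⟫ = ⟪T₂ (e m), e n⟫ := by
    intro m n
    rw [real_inner_comm]
    have h := hT₂ (e n) (e m)
    simp only [ContinuousLinearMap.coe_coe] at h
    rw [h, real_inner_comm]
  set β := ⟪T₁ u, u⟫ with hβ
  -- Parseval for β
  have hβsum : HasSum (fun n => g n ^ 2) β := by
    have h := e.hasSum_inner_mul_inner (T₁ u) u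
    have hfun : (fun n => ⟪T₁ u, e n⟫ * ⟪e n, u⟫) = fun n => g n ^ 2 := by
      funext n
      have h1 : ⟪T₁ u, e n⟫ = μ n * c n := by
        have h2 := hT₁ u (e n)
        simp only [ContinuousLinearMap.coe_coe] at h2
        rw [h2, heig n, real_inner_smul_right, real_inner_comm]
      rw [h1, hg2 n, hc]
      ring
    rw [hfun] at h
    exact h
  have hgsum : Summable fun n => g n ^ 2 := hβsum.summable
  -- β > 0
  have hex : ∃ n, c n ≠ 0 := by
    by_contra hcon
    push_neg at hcon
    have h := e.hasSum_inner_mul_inner u u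
    have hfun : (fun n => ⟪u, e n⟫ * ⟪e n, u⟫) = fun _ => (0 : ℝ) := by
      funext n
      have h0 : ⟪e n, u⟫ = 0 := hcon n
      rw [h0, mul_zero]
    rw [hfun] at h
    have : ⟪u, u⟫ = 0 := h.unique hasSum_zero
    exact hu (inner_self_eq_zero.1 this)
  obtain ⟨n₀, hn₀⟩ := hex
  have hβpos : 0 < β := by
    have hgne : g n₀ ≠ 0 := by
      rw [hgdef]
      exact mul_ne_zero (hsqrt_pos n₀).ne' hn₀
    have h1 : 0 < g n₀ ^ 2 := lt_of_le_of_ne (sq_nonneg _) (Ne.symm (pow_ne_zero 2 hgne))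
    have h2 : g n₀ ^ 2 ≤ β := by
      rw [← hβsum.tsum_eq]
      exact Summable.le_tsum hgsum n₀ fun j _ => sq_nonneg _
    linarith
  -- column summability
  have hG : Summable fun p : ℕ × ℕ => a p.2 p.1 ^ 2 := hF.prod_symm
  have hacol : ∀ n, Summable fun m => a m n ^ 2 := fun n => hG.prod_factor n
  set s : ℕ → ℝ := fun n => ∑' m, g m * a m n with hsdef
  have hsmul : ∀ n, Summable fun m => g m * a m n :=
    fun n => summable_mul_of_sq' hgsum (hacol n)
  have hs_sq_le : ∀ n, s n ^ 2 ≤ β * ∑' m, a m n ^ 2 := by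
    intro n
    have h := tsum_mul_sq_le' hgsum (hacol n)
    rwa [hβsum.tsum_eq] at h
  have hA : Summable fun n => ∑' m, a m n ^ 2 := hG.prod
  have hssq : Summable fun n => s n ^ 2 :=
    Summable.of_nonneg_of_le (fun n => sq_nonneg _) hs_sq_le (hA.mul_left β)
  -- the coefficients of T₂ u
  have hBval : ∀ m n, ⟪T₂ (e m), e n⟫ =
      Real.sqrt (μ m) * Real.sqrt (μ n) * (a m n + if m = n then 1 else 0) := by
    intro m n
    rw [ha, sub_add_cancel, mul_comm]
    exact (div_mul_cancel₀ _ (mul_pos (hsqrt_pos m) (hsqrt_pos n)).ne').symm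
  have hw : ∀ n, ⟪T₂ u, e n⟫ = Real.sqrt (μ n) * s n + μ n * c n := by
    intro n
    have h1 : ⟪T₂ u, e n⟫ = ⟪u, T₂ (e n)⟫ := by
      have h2 := hT₂ u (e n)
      simpa only [ContinuousLinearMap.coe_coe] using h2
    have h2 : HasSum (fun m => ⟪u, e m⟫ * ⟪e m, T₂ (e n)⟫) ⟪u, T₂ (e n)⟫ :=
      e.hasSum_inner_mul_inner u (T₂ (e n))
    have h3 : (fun m => ⟪u, e m⟫ * ⟪e m, T₂ (e n)⟫)
        = fun m => Real.sqrt (μ n) * (g m * a m n) + (if m = n then μ n * c n else 0) := by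
      funext m
      have e1 : ⟪u, e m⟫ = c m := real_inner_comm (e m) u
      have e2 : g m = Real.sqrt (μ m) * c m := rfl
      rw [e1, hB m n, hBval m n, e2]
      by_cases hmn : m = n
      · subst hmn
        simp only [eq_self_iff_true, if_true]
        linear_combination c m * hsq m
      · simp only [if_neg hmn]
        ring
    rw [h3] at h2
    have h4 : HasSum (fun m => Real.sqrt (μ n) * (g m * a m n) + (if m = n then μ n * c n else 0))
        (Real.sqrt (μ n) * s n + μ n * c n) :=
      ((hsmul n).hasSum.mul_left _).add (hasSum_ite_eq n (μ n * c n))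
    rw [h1]
    exact h2.unique h4
  -- Parseval for ⟪T₂ u, u⟫
  have houter : HasSum (fun n => g n * s n + g n ^ 2) ⟪T₂ u, u⟫ := by
    have h2 := e.hasSum_inner_mul_inner (T₂ u) u
    have h3 : (fun n => ⟪T₂ u, e n⟫ * ⟪e n, u⟫) = fun n => g n * s n + g n ^ 2 := by
      funext n
      rw [hw n, hg2 n, hgdef, hc]
      ring
    rw [h3] at h2
    exact h2
  have hD : HasSum (fun n => g n * s n) (⟪T₂ u, u⟫ - β) := by
    have h := houter.sub hβsum
    have h2 : (fun n => (g n * s n + g n ^ 2) - g n ^ 2) = fun n => g n * s n := by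
      funext n; ring
    rw [h2] at h
    exact h
  set S := ∑' p : ℕ × ℕ, a p.1 p.2 ^ 2 with hS
  have hSval : ∑' n, ∑' m, a m n ^ 2 = S := by
    have h1 : ∑' p : ℕ × ℕ, a p.2 p.1 ^ 2 = ∑' (n) (m), a m n ^ 2 := Summable.tsum_prod hG
    have h2 : ∑' p : ℕ × ℕ, a p.2 p.1 ^ 2 = S := by
      rw [hS]
      exact (Equiv.prodComm ℕ ℕ).tsum_eq (fun p => a p.1 p.2 ^ 2)
    rw [← h1, h2]
  have hDsq : (⟪T₂ u, u⟫ - β) ^ 2 ≤ β ^ 2 * S := by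
    have h1 : (∑' n, g n * s n) ^ 2 ≤ (∑' n, g n ^ 2) * ∑' n, s n ^ 2 :=
      tsum_mul_sq_le' hgsum hssq
    have h2 : ∑' n, s n ^ 2 ≤ β * S := by
      calc ∑' n, s n ^ 2 ≤ ∑' n, β * ∑' m, a m n ^ 2 :=
            Summable.tsum_le_tsum hs_sq_le hssq (hA.mul_left β)
        _ = β * ∑' n, ∑' m, a m n ^ 2 := tsum_mul_left
        _ = β * S := by rw [hSval]
    calc (⟪T₂ u, u⟫ - β) ^ 2 = (∑' n, g n * s n) ^ 2 := by rw [hD.tsum_eq]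
      _ ≤ (∑' n, g n ^ 2) * ∑' n, s n ^ 2 := h1
      _ = β * ∑' n, s n ^ 2 := by rw [hβsum.tsum_eq]
      _ ≤ β * (β * S) := mul_le_mul_of_nonneg_left h2 hβpos.le
      _ = β ^ 2 * S := by ring
  have hratio : ⟪T₂ u, u⟫ / β - 1 = (⟪T₂ u, u⟫ - β) / β := by
    field_simp
  rw [hratio, div_pow, div_le_iff₀ (by positivity : (0 : ℝ) < β ^ 2)]
  calc (⟪T₂ u, u⟫ - β) ^ 2 ≤ β ^ 2 * S := hDsq
    _ = S * β ^ 2 := mul_comm _ _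

/-- For two sequences `(b_l^{(1)})`, `(b_l^{(2)})` of compact self-adjoint
positive injective operators on a separable real Hilbert space (playing the role of
operator-valued `d`-Schoenberg coefficients), with `(f_{l,n})` an eigenbasis of `b_l^{(1)}`
with eigenvalues `μ_{l,n} > 0` and `M_l²` the squared Hilbert–Schmidt norm of
`(b_l^{(1)})^{-1/2} b_l^{(2)} (b_l^{(1)})^{-1/2} − I` (written spectrally), for every
direction `u ≠ 0` the scalar-projection series is dominated by the operator-valued one:
`∑_l h(l)(⟨b_l^{(2)}u,u⟩/⟨b_l^{(1)}u,u⟩ − 1)² ≤ ∑_l h(l) M_l²` in `[0,∞]`. -/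
theorem scalar_projection_series_le_operator_series
    (d : ℕ) (hd : 2 ≤ d)
    {𝓗 : Type*} [NormedAddCommGroup 𝓗] [InnerProductSpace ℝ 𝓗] [CompleteSpace 𝓗]
    [TopologicalSpace.SeparableSpace 𝓗]
    (b₁ b₂ : ℕ → 𝓗 →L[ℝ] 𝓗)
    (hb₁compact : ∀ l, IsCompactOperator (b₁ l))
    (hb₂compact : ∀ l, IsCompactOperator (b₂ l))
    (hb₁pos : ∀ l, (b₁ l).IsPositive)
    (hb₂pos : ∀ l, (b₂ l).IsPositive)
    (hb₁inj : ∀ l, Function.Injective (b₁ l))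
    (hb₂inj : ∀ l, Function.Injective (b₂ l))
    (f : ∀ _ : ℕ, HilbertBasis ℕ ℝ 𝓗)
    (μ : ℕ → ℕ → ℝ)
    (heig : ∀ l n, (b₁ l) (f l n) = μ l n • f l n)
    (hμ : ∀ l n, 0 < μ l n) :
    ∀ u : 𝓗, u ≠ 0 →
      (∑' l : ℕ, (sphHarmDim d l : ℝ≥0∞) *
          ENNReal.ofReal ((⟪(b₂ l) u, u⟫ / ⟪(b₁ l) u, u⟫ - 1) ^ 2))
        ≤ ∑' l : ℕ, (sphHarmDim d l : ℝ≥0∞) *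
            (∑' m : ℕ, ∑' n : ℕ, ENNReal.ofReal
              ((⟪(b₂ l) (f l m), f l n⟫ / (Real.sqrt (μ l m) * Real.sqrt (μ l n))
                - if m = n then (1 : ℝ) else 0) ^ 2)) := by
  intro u hu
  refine ENNReal.tsum_le_tsum fun l => ?_
  refine mul_le_mul_right ?_ _
  set F : ℕ × ℕ → ℝ := fun p =>
    (⟪(b₂ l) (f l p.1), f l p.2⟫ / (Real.sqrt (μ l p.1) * Real.sqrt (μ l p.2))
      - if p.1 = p.2 then (1 : ℝ) else 0) ^ 2 with hFdef
  have hrw : (∑' m : ℕ, ∑' n : ℕ, ENNReal.ofReal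
      ((⟪(b₂ l) (f l m), f l n⟫ / (Real.sqrt (μ l m) * Real.sqrt (μ l n))
        - if m = n then (1 : ℝ) else 0) ^ 2))
      = ∑' p : ℕ × ℕ, ENNReal.ofReal (F p) :=
    (ENNReal.tsum_prod' (f := fun p => ENNReal.ofReal (F p))).symm
  rw [hrw]
  by_cases htop : (∑' p : ℕ × ℕ, ENNReal.ofReal (F p)) = ⊤
  · rw [htop]; exact le_top
  · have hnn : ∀ p, 0 ≤ F p := fun p => sq_nonneg _
    have hsummable : Summable F := by
      have h1 : (fun p : ℕ × ℕ => ENNReal.ofReal (F p))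
          = fun p => ((F p).toNNReal : ℝ≥0∞) := rfl
      rw [h1] at htop
      have h2 := ENNReal.tsum_coe_ne_top_iff_summable.1 htop
      have h3 : (fun p => ((F p).toNNReal : ℝ)) = F :=
        funext fun p => Real.coe_toNNReal _ (hnn p)
      exact h3 ▸ (NNReal.summable_coe.2 h2)
    rw [← ENNReal.ofReal_tsum_of_nonneg hnn hsummable]
    exact ENNReal.ofReal_le_ofReal
      (key_ratio_sq_le (b₁ l) (b₂ l) ((hb₁pos l).isSelfAdjoint.isSymmetric)
        ((hb₂pos l).isSelfAdjoint.isSymmetric) (f l) (μ l) (heig l) (hμ l) u hu hsummable)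
end

section
/- Fix an integer d ≥ 2 and parameters σ₁, σ₂ > 0, α₁₁, α₂₂, α₁₂ ∈ (0,1), ρ₁₂ ∈ (0,1). For n ∈ ℕ define the real 2×2 matrix b_n with entries b_n(i,i) = σ_i² · C(d+n−2, n) · α_{ii}^n (1−α_{ii})^{d−1} for i = 1, 2, and b_n(1,2) = b_n(2,1) = ρ₁₂ σ₁ σ₂ · C(d+n−2, n) · α₁₂^n (1−α₁₂)^{d−1}, where C(a, b) denotes the binomial coefficient. If α₁₂ ≤ √(α₁₁ α₂₂) and ρ₁₂ < ( (1−α₁₁)(1−α₂₂) / (1−α₁₂)² )^{(d−1)/2}, then b_n is a positive definite matrix for every n ∈ ℕ. -/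
lemma fin2_posDef_of (a b c : ℝ) (ha : 0 < a) (hdet : 0 < a * c - b * b) :
    (!![a, b; b, c] : Matrix (Fin 2) (Fin 2) ℝ).PosDef := by
  rw [Matrix.posDef_iff_dotProduct_mulVec]
  constructor
  · ext i j
    fin_cases i <;> fin_cases j <;> simp [Matrix.conjTranspose_apply]
  · intro x hx
    have h01 : x 0 ≠ 0 ∨ x 1 ≠ 0 := by
      by_contra h
      push_neg at h
      apply hx
      ext i
      fin_cases i <;> simp [h.1, h.2]
    have hq : dotProduct (star x) ((!![a, b; b, c] : Matrix (Fin 2) (Fin 2) ℝ).mulVec x)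
        = a * (x 0 * x 0) + 2 * b * (x 0 * x 1) + c * (x 1 * x 1) := by
      simp [dotProduct, Matrix.mulVec, Fin.sum_univ_two]
      ring
    rw [hq]
    by_cases h1 : x 1 = 0
    · have h0 : x 0 ≠ 0 := by tauto
      rw [h1]
      have := mul_self_pos.2 h0
      nlinarith
    · nlinarith [sq_nonneg (a * x 0 + b * x 1), mul_pos hdet (mul_self_pos.2 h1)]

/-- The matrix-valued `d`-Schoenberg coefficients of the bivariate
multiquadratic covariance family:
`b_n(i,i) = σ_i² C(d+n−2,n) α_{ii}^n (1−α_{ii})^{d−1}`,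
`b_n(1,2) = b_n(2,1) = ρ₁₂ σ₁ σ₂ C(d+n−2,n) α₁₂^n (1−α₁₂)^{d−1}`.
If `α₁₂ ≤ √(α₁₁ α₂₂)` and `ρ₁₂ < ((1−α₁₁)(1−α₂₂)/(1−α₁₂)²)^{(d−1)/2}`, then every
`b_n` is positive definite. -/
theorem multiquadratic_schoenberg_posDef
    (d : ℕ) (hd : 2 ≤ d)
    (σ₁ σ₂ α₁₁ α₂₂ α₁₂ ρ₁₂ : ℝ)
    (hσ₁ : 0 < σ₁) (hσ₂ : 0 < σ₂)
    (hα₁₁ : α₁₁ ∈ Set.Ioo (0 : ℝ) 1) (hα₂₂ : α₂₂ ∈ Set.Ioo (0 : ℝ) 1)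
    (hα₁₂ : α₁₂ ∈ Set.Ioo (0 : ℝ) 1) (hρ : ρ₁₂ ∈ Set.Ioo (0 : ℝ) 1)
    (hcross : α₁₂ ≤ Real.sqrt (α₁₁ * α₂₂))
    (hρbound : ρ₁₂ < ((1 - α₁₁) * (1 - α₂₂) / (1 - α₁₂) ^ 2) ^ (((d : ℝ) - 1) / 2)) :
    ∀ n : ℕ,
      (!![σ₁ ^ 2 * (Nat.choose (d + n - 2) n) * α₁₁ ^ n * (1 - α₁₁) ^ (d - 1),
          ρ₁₂ * σ₁ * σ₂ * (Nat.choose (d + n - 2) n) * α₁₂ ^ n * (1 - α₁₂) ^ (d - 1);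
          ρ₁₂ * σ₁ * σ₂ * (Nat.choose (d + n - 2) n) * α₁₂ ^ n * (1 - α₁₂) ^ (d - 1),
          σ₂ ^ 2 * (Nat.choose (d + n - 2) n) * α₂₂ ^ n * (1 - α₂₂) ^ (d - 1)] :
        Matrix (Fin 2) (Fin 2) ℝ).PosDef := by
  obtain ⟨h11a, h11b⟩ := hα₁₁
  obtain ⟨h22a, h22b⟩ := hα₂₂
  obtain ⟨h12a, h12b⟩ := hα₁₂
  obtain ⟨hρa, hρb⟩ := hρ
  have e11 : (0:ℝ) < 1 - α₁₁ := by linarith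
  have e22 : (0:ℝ) < 1 - α₂₂ := by linarith
  have e12 : (0:ℝ) < 1 - α₁₂ := by linarith
  intro n
  have hC : 0 < ((Nat.choose (d + n - 2) n : ℕ) : ℝ) := by
    have : n ≤ d + n - 2 := by omega
    exact_mod_cast Nat.choose_pos this
  have hbase : 0 < (1 - α₁₁) * (1 - α₂₂) / (1 - α₁₂) ^ 2 := by
    apply div_pos (mul_pos e11 e22) (by positivity)
  -- square the ρ bound
  have hρ2 : ρ₁₂ ^ 2 < ((1 - α₁₁) * (1 - α₂₂) / (1 - α₁₂) ^ 2) ^ (d - 1) := by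
    have h1 : ρ₁₂ ^ 2 < (((1 - α₁₁) * (1 - α₂₂) / (1 - α₁₂) ^ 2) ^ (((d : ℝ) - 1) / 2)) ^ 2 := by
      have := Real.rpow_pos_of_pos hbase (((d : ℝ) - 1) / 2)
      nlinarith
    calc ρ₁₂ ^ 2 < (((1 - α₁₁) * (1 - α₂₂) / (1 - α₁₂) ^ 2) ^ (((d : ℝ) - 1) / 2)) ^ 2 := h1
      _ = ((1 - α₁₁) * (1 - α₂₂) / (1 - α₁₂) ^ 2) ^ ((d : ℝ) - 1) := by
          rw [← Real.rpow_natCast (((1 - α₁₁) * (1 - α₂₂) / (1 - α₁₂) ^ 2) ^ (((d : ℝ) - 1) / 2)) 2,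
            ← Real.rpow_mul hbase.le]
          norm_num
      _ = ((1 - α₁₁) * (1 - α₂₂) / (1 - α₁₂) ^ 2) ^ (d - 1) := by
          rw [← Real.rpow_natCast _ (d - 1)]
          congr 1
          have : (1 : ℕ) ≤ d := by omega
          push_cast [this]
          ring
  have hcross2 : α₁₂ ^ 2 ≤ α₁₁ * α₂₂ := by
    have h := Real.sq_sqrt (by positivity : (0:ℝ) ≤ α₁₁ * α₂₂)
    nlinarith [Real.sqrt_nonneg (α₁₁ * α₂₂)]
  apply fin2_posDef_of
  · have := pow_pos h11a n
    have := pow_pos e11 (d - 1)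
    positivity
  · have key : ρ₁₂ ^ 2 * (α₁₂ ^ n) ^ 2 * ((1 - α₁₂) ^ (d - 1)) ^ 2
        < α₁₁ ^ n * α₂₂ ^ n * ((1 - α₁₁) ^ (d - 1) * (1 - α₂₂) ^ (d - 1)) := by
      have e1 : (α₁₂ ^ n) ^ 2 ≤ α₁₁ ^ n * α₂₂ ^ n := by
        calc (α₁₂ ^ n) ^ 2 = (α₁₂ ^ 2) ^ n := by ring
          _ ≤ (α₁₁ * α₂₂) ^ n := pow_le_pow_left₀ (by positivity) hcross2 n
          _ = α₁₁ ^ n * α₂₂ ^ n := mul_pow _ _ _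
      have e2 : ρ₁₂ ^ 2 * ((1 - α₁₂) ^ (d - 1)) ^ 2
          < (1 - α₁₁) ^ (d - 1) * (1 - α₂₂) ^ (d - 1) := by
        have hden : (0:ℝ) < ((1 - α₁₂) ^ 2) ^ (d - 1) := by positivity
        have h2 := hρ2
        rw [div_pow, lt_div_iff₀ hden] at h2
        calc ρ₁₂ ^ 2 * ((1 - α₁₂) ^ (d - 1)) ^ 2
            = ρ₁₂ ^ 2 * ((1 - α₁₂) ^ 2) ^ (d - 1) := by
              rw [← pow_mul, ← pow_mul, Nat.mul_comm]
          _ < ((1 - α₁₁) * (1 - α₂₂)) ^ (d - 1) := h2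
          _ = (1 - α₁₁) ^ (d - 1) * (1 - α₂₂) ^ (d - 1) := mul_pow _ _ _
      have hpow12 : (0:ℝ) < (α₁₂ ^ n) ^ 2 := by positivity
      calc ρ₁₂ ^ 2 * (α₁₂ ^ n) ^ 2 * ((1 - α₁₂) ^ (d - 1)) ^ 2
          = (α₁₂ ^ n) ^ 2 * (ρ₁₂ ^ 2 * ((1 - α₁₂) ^ (d - 1)) ^ 2) := by ring
        _ < (α₁₂ ^ n) ^ 2 * ((1 - α₁₁) ^ (d - 1) * (1 - α₂₂) ^ (d - 1)) :=
            mul_lt_mul_of_pos_left e2 hpow12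
        _ ≤ (α₁₁ ^ n * α₂₂ ^ n) * ((1 - α₁₁) ^ (d - 1) * (1 - α₂₂) ^ (d - 1)) := by
            apply mul_le_mul_of_nonneg_right e1
            positivity
        _ = α₁₁ ^ n * α₂₂ ^ n * ((1 - α₁₁) ^ (d - 1) * (1 - α₂₂) ^ (d - 1)) := by ring
    have hfac : (0:ℝ) < σ₁ ^ 2 * σ₂ ^ 2 * ((Nat.choose (d + n - 2) n : ℕ) : ℝ) ^ 2 := by
      positivity
    have := mul_lt_mul_of_pos_left key hfac
    nlinarith [this]
end

section
/- Fix an integer d ≥ 2 and parameters σ₁, σ₂ > 0, α₁₁, α₂₂, α₁₂ ∈ (0,1), ρ₁₂ ∈ (0,1), and for n ∈ ℕ let b_n be the real 2×2 matrix with entries b_n(i,i) = σ_i² · C(d+n−2, n) · α_{ii}^n (1−α_{ii})^{d−1} for i = 1, 2, and b_n(1,2) = b_n(2,1) = ρ₁₂ σ₁ σ₂ · C(d+n−2, n) · α₁₂^n (1−α₁₂)^{d−1}. Then for every n ∈ ℕ, det(b_n) > 0 if and only if ρ₁₂ < ( α₁₁ α₂₂ / α₁₂² )^{n/2} · ( (1−α₁₁)(1−α₂₂)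 / (1−α₁₂)² )^{(d−1)/2}. -/
lemma rpow_half_nat (x : ℝ) (hx : 0 ≤ x) (m : ℕ) :
    x ^ ((m : ℝ) / 2) = Real.sqrt (x ^ m) := by
  rw [show (m : ℝ) / 2 = (m : ℝ) * (1 / 2) by ring, Real.rpow_mul hx,
    Real.rpow_natCast, Real.sqrt_eq_rpow]

/-- For the matrix-valued `d`-Schoenberg coefficients `b_n` of the
bivariate multiquadratic family, `det(b_n) > 0` if and only if
`ρ₁₂ < (α₁₁α₂₂/α₁₂²)^{n/2} ((1−α₁₁)(1−α₂₂)/(1−α₁₂)²)^{(d−1)/2}`. -/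
theorem multiquadratic_det_pos_iff
    (d : ℕ) (hd : 2 ≤ d)
    (σ₁ σ₂ α₁₁ α₂₂ α₁₂ ρ₁₂ : ℝ)
    (hσ₁ : 0 < σ₁) (hσ₂ : 0 < σ₂)
    (hα₁₁ : α₁₁ ∈ Set.Ioo (0 : ℝ) 1) (hα₂₂ : α₂₂ ∈ Set.Ioo (0 : ℝ) 1)
    (hα₁₂ : α₁₂ ∈ Set.Ioo (0 : ℝ) 1) (hρ : ρ₁₂ ∈ Set.Ioo (0 : ℝ) 1) :
    ∀ n : ℕ,
      (0 < (!![σ₁ ^ 2 * (Nat.choose (d + n - 2) n) * α₁₁ ^ n * (1 - α₁₁) ^ (d - 1),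
          ρ₁₂ * σ₁ * σ₂ * (Nat.choose (d + n - 2) n) * α₁₂ ^ n * (1 - α₁₂) ^ (d - 1);
          ρ₁₂ * σ₁ * σ₂ * (Nat.choose (d + n - 2) n) * α₁₂ ^ n * (1 - α₁₂) ^ (d - 1),
          σ₂ ^ 2 * (Nat.choose (d + n - 2) n) * α₂₂ ^ n * (1 - α₂₂) ^ (d - 1)] :
        Matrix (Fin 2) (Fin 2) ℝ).det)
      ↔ ρ₁₂ < (α₁₁ * α₂₂ / α₁₂ ^ 2) ^ ((n : ℝ) / 2) *
          ((1 - α₁₁) * (1 - α₂₂) / (1 - α₁₂) ^ 2) ^ (((d : ℝ) - 1) / 2) := by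
  obtain ⟨hα₁₁0, hα₁₁1⟩ := hα₁₁
  obtain ⟨hα₂₂0, hα₂₂1⟩ := hα₂₂
  obtain ⟨hα₁₂0, hα₁₂1⟩ := hα₁₂
  obtain ⟨hρ0, hρ1⟩ := hρ
  intro n
  have hCpos : 0 < ((Nat.choose (d + n - 2) n : ℕ) : ℝ) := by
    exact_mod_cast Nat.choose_pos (by omega)
  have h1 : (0:ℝ) < 1 - α₁₁ := by linarith
  have h2 : (0:ℝ) < 1 - α₂₂ := by linarith
  have h3 : (0:ℝ) < 1 - α₁₂ := by linarith
  set C : ℝ := ((Nat.choose (d + n - 2) n : ℕ) : ℝ) with hC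
  set X : ℝ := α₁₁ * α₂₂ / α₁₂ ^ 2 with hX
  set Y : ℝ := (1 - α₁₁) * (1 - α₂₂) / (1 - α₁₂) ^ 2 with hY
  have hXpos : 0 < X := by positivity
  have hYpos : 0 < Y := by positivity
  clear_value X Y
  have hk : (0:ℝ) < σ₁^2 * σ₂^2 * C^2 * α₁₂^(2*n) * (1-α₁₂)^(2*(d-1)) := by positivity
  have hdet : (!![σ₁ ^ 2 * C * α₁₁ ^ n * (1 - α₁₁) ^ (d - 1),
          ρ₁₂ * σ₁ * σ₂ * C * α₁₂ ^ n * (1 - α₁₂) ^ (d - 1);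
          ρ₁₂ * σ₁ * σ₂ * C * α₁₂ ^ n * (1 - α₁₂) ^ (d - 1),
          σ₂ ^ 2 * C * α₂₂ ^ n * (1 - α₂₂) ^ (d - 1)] :
        Matrix (Fin 2) (Fin 2) ℝ).det
      = σ₁^2 * σ₂^2 * C^2 * α₁₂^(2*n) * (1-α₁₂)^(2*(d-1)) * (X^n * Y^(d-1) - ρ₁₂^2) := by
    have hXn : α₁₂ ^ (2*n) * X ^ n = α₁₁ ^ n * α₂₂ ^ n := by
      rw [hX, div_pow, pow_mul, mul_comm, div_mul_cancel₀ _ (by positivity), mul_pow]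
    have hYd : (1-α₁₂) ^ (2*(d-1)) * Y ^ (d-1) = (1-α₁₁) ^ (d-1) * (1-α₂₂) ^ (d-1) := by
      rw [hY, div_pow, pow_mul, mul_comm, div_mul_cancel₀ _ (by positivity), mul_pow]
    rw [Matrix.det_fin_two_of]
    linear_combination -(σ₁^2*σ₂^2*C^2 * (1-α₁₂)^(2*(d-1)) * Y^(d-1)) * hXn -
      (σ₁^2*σ₂^2*C^2 * α₁₁^n * α₂₂^n) * hYd
  rw [hdet, mul_pos_iff_of_pos_left hk, sub_pos,
    rpow_half_nat X hXpos.le n,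
    show ((d:ℝ) - 1) = ((d - 1 : ℕ) : ℝ) by
      have h1d : (1:ℕ) ≤ d := by omega
      push_cast [h1d]; ring,
    rpow_half_nat Y hYpos.le (d-1),
    ← Real.sqrt_mul (by positivity), ← Real.lt_sqrt hρ0.le]
end

section
/- Let b be a real symmetric positive definite 2×2 matrix and let Ī be the 2×2 matrix with entries Ī(1,1) = Ī(2,2) = 0 and Ī(1,2) = Ī(2,1) = 1. Let b^{-1/2} denote the inverse of the unique symmetric positive definite square root of b. Then the squared Frobenius norm of b^{-1/2} Ī b^{-1/2} satisfies ‖b^{-1/2} Ī b^{-1/2}‖_F² = 2 · ( b(1,1) b(2,2) + b(1,2)² ) / ( b(1,1) b(2,2) − b(1,2)² )². -/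
/-- For a real symmetric positive definite `2×2` matrix `b` with
symmetric positive definite square root `s` (so `b^{-1/2} = s⁻¹`) and
`Ī = !![0,1;1,0]`, the squared Frobenius norm of `b^{-1/2} Ī b^{-1/2}` equals
`2 (b₁₁ b₂₂ + b₁₂²)/(b₁₁ b₂₂ − b₁₂²)²`. -/
theorem frobenius_sq_inv_sqrt_Ibar
    (b s : Matrix (Fin 2) (Fin 2) ℝ)
    (hb : b.PosDef)
    (hs : s.PosDef)
    (hssq : s * s = b) :
    (∑ i : Fin 2, ∑ j : Fin 2, ((s⁻¹ * (!![0, 1; 1, 0] : Matrix (Fin 2) (Fin 2) ℝ) * s⁻¹) i j) ^ 2)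
      = 2 * (b 0 0 * b 1 1 + (b 0 1) ^ 2) / (b 0 0 * b 1 1 - (b 0 1) ^ 2) ^ 2 := by
  have hd0 : b.det ≠ 0 := ne_of_gt hb.det_pos
  have hdet : b.det = b 0 0 * b 1 1 - b 0 1 * b 1 0 := Matrix.det_fin_two b
  have hb10 : b 1 0 = b 0 1 := by
    have h := congrFun (congrFun hb.isHermitian 0) 1
    simpa [Matrix.conjTranspose_apply] using h
  have hdne : b 0 0 * b 1 1 - b 0 1 ^ 2 ≠ 0 := by
    rw [hdet, hb10] at hd0; simpa [pow_two] using hd0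
  have hsT : s.transpose = s := by
    have h := hs.isHermitian
    simpa [Matrix.IsHermitian, Matrix.conjTranspose_eq_transpose_of_trivial] using h
  have hA10 : s⁻¹ 1 0 = s⁻¹ 0 1 := by
    have h : (s⁻¹).transpose = s⁻¹ := by rw [Matrix.transpose_nonsing_inv, hsT]
    have := congrFun (congrFun h 0) 1
    simpa [Matrix.transpose_apply] using this
  have hAA : s⁻¹ * s⁻¹ = b⁻¹ := by rw [← hssq, Matrix.mul_inv_rev]
  have hinv : b⁻¹ = b.det⁻¹ • !![b 1 1, -(b 0 1); -(b 1 0), b 0 0] := by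
    rw [Matrix.inv_def, Matrix.adjugate_fin_two, Ring.inverse_eq_inv']
  have e00 := congrFun (congrFun hAA 0) 0
  have e01 := congrFun (congrFun hAA 0) 1
  have e11 := congrFun (congrFun hAA 1) 1
  rw [hinv] at e00 e01 e11
  simp [Matrix.mul_apply, Fin.sum_univ_two, hA10] at e00 e01 e11
  have hx : b 1 1 = (s⁻¹ 0 0 * s⁻¹ 0 0 + s⁻¹ 0 1 * s⁻¹ 0 1) * b.det := by
    rw [e00]; field_simp
  have hy : -(b 0 1) = (s⁻¹ 0 0 * s⁻¹ 0 1 + s⁻¹ 0 1 * s⁻¹ 1 1) * b.det := by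
    rw [e01]; field_simp
  have hz : b 0 0 = (s⁻¹ 0 1 * s⁻¹ 0 1 + s⁻¹ 1 1 * s⁻¹ 1 1) * b.det := by
    rw [e11]; field_simp
  have hy' : b 0 1 = -((s⁻¹ 0 0 * s⁻¹ 0 1 + s⁻¹ 0 1 * s⁻¹ 1 1) * b.det) := by linarith [hy]
  have hd : b 0 0 * b 1 1 - b 0 1 ^ 2 = b.det := by rw [hdet, hb10]; ring
  simp only [Fin.sum_univ_two, Matrix.mul_apply, Matrix.cons_val', Matrix.cons_val_zero,
    Matrix.cons_val_one, Matrix.head_cons, Matrix.empty_val', Matrix.cons_val_fin_one,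
    Matrix.head_fin_const, hA10, Matrix.of_apply]
  rw [hd, hx, hy', hz]
  have h1 : (s⁻¹ 0 0 * s⁻¹ 0 0 + s⁻¹ 0 1 * s⁻¹ 0 1) * b.det *
      ((s⁻¹ 0 1 * s⁻¹ 0 1 + s⁻¹ 1 1 * s⁻¹ 1 1) * b.det) = b 0 0 * b 1 1 := by
    rw [← hx, ← hz]; ring
  field_simp
  ring
end

section
/- Let b₁ be a real symmetric positive definite 2×2 matrix, c ∈ ℝ, and let b₂ = b₁ + c·Ī, where Ī is the 2×2 matrix with zero diagonal and off-diagonal entries equal to 1 (so b₂ has the same diagonal as b₁). Define ξ_j = b_j(1,2) / √( b_j(1,1) · b_j(2,2) ) for j = 1, 2. Then ‖b₁^{-1/2} b₂ b₁^{-1/2} − I‖_F² = 2 (ξ₂ − ξ₁)² (1 + ξ₁²) / (1 − ξ₁²)², where b₁^{-1/2} is the inverse of the unique symmetric positive definite square root of b₁, I is the 2×2 identity matrix, and ‖·‖_F is the Frobenius norm. -/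
set_option maxHeartbeats 1600000 in
/-- Let `b₁` be symmetric positive definite `2×2`, `b₂ = b₁ + c·Ī`
with `Ī = !![0,1;1,0]`, and `s` the symmetric positive definite square root of `b₁`
(so `b₁^{-1/2} = s⁻¹`). With `ξ_j = b_j(1,2)/√(b_j(1,1) b_j(2,2))`,
`‖b₁^{-1/2} b₂ b₁^{-1/2} − I‖_F² = 2 (ξ₂ − ξ₁)² (1 + ξ₁²)/(1 − ξ₁²)²`. -/
theorem frobenius_sq_conjugated_difference
    (b₁ : Matrix (Fin 2) (Fin 2) ℝ) (c : ℝ)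
    (hb₁ : b₁.PosDef)
    (s : Matrix (Fin 2) (Fin 2) ℝ)
    (hs : s.PosDef)
    (hssq : s * s = b₁) :
    let b₂ : Matrix (Fin 2) (Fin 2) ℝ := b₁ + c • (!![0, 1; 1, 0] : Matrix (Fin 2) (Fin 2) ℝ)
    let ξ₁ : ℝ := b₁ 0 1 / Real.sqrt (b₁ 0 0 * b₁ 1 1)
    let ξ₂ : ℝ := b₂ 0 1 / Real.sqrt (b₂ 0 0 * b₂ 1 1)
    (∑ i : Fin 2, ∑ j : Fin 2, ((s⁻¹ * b₂ * s⁻¹ - 1) i j) ^ 2)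
      = 2 * (ξ₂ - ξ₁) ^ 2 * (1 + ξ₁ ^ 2) / (1 - ξ₁ ^ 2) ^ 2 := by
  intro b₂ ξ₁ ξ₂
  set Ibar : Matrix (Fin 2) (Fin 2) ℝ := !![0, 1; 1, 0] with hIbar
  -- basic facts
  have hbsym : b₁ 1 0 = b₁ 0 1 := by
    have := hb₁.1
    rw [Matrix.IsHermitian] at this
    conv_lhs => rw [← this]
    simp [Matrix.conjTranspose_apply]
  have ha : 0 < b₁ 0 0 := by
    have h := hb₁.dotProduct_mulVec_pos (x := Pi.single 0 1) (fun h => by simpa using congrFun h 0)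
    simpa [dotProduct, Matrix.mulVec, Fin.sum_univ_two, Pi.single_apply] using h
  have hd : 0 < b₁ 1 1 := by
    have h := hb₁.dotProduct_mulVec_pos (x := Pi.single 1 1) (fun h => by simpa using congrFun h 1)
    simpa [dotProduct, Matrix.mulVec, Fin.sum_univ_two, Pi.single_apply] using h
  have hdet : 0 < b₁.det := hb₁.det_pos
  have hdet2 : b₁.det = b₁ 0 0 * b₁ 1 1 - b₁ 0 1 ^ 2 := by
    rw [Matrix.det_fin_two, hbsym]; ring
  have hsdet : IsUnit s.det := isUnit_iff_ne_zero.mpr hs.det_pos.ne'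
  have hsinv : s⁻¹ * s = 1 := Matrix.nonsing_inv_mul s hsdet
  have hinvs : s * s⁻¹ = 1 := Matrix.mul_nonsing_inv s hsdet
  have hssym : (s⁻¹).transpose = s⁻¹ := by
    have h1 : s.transpose = s := by
      have := hs.1; rwa [Matrix.IsHermitian, Matrix.conjTranspose_eq_transpose_of_trivial] at this
    rw [Matrix.transpose_nonsing_inv, h1]
  set A : Matrix (Fin 2) (Fin 2) ℝ := s⁻¹ * Ibar * s⁻¹ with hA
  have hAsym : A.transpose = A := by
    rw [hA, Matrix.transpose_mul, Matrix.transpose_mul, hssym]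
    have : Ibar.transpose = Ibar := by
      rw [hIbar]; ext i j; fin_cases i <;> fin_cases j <;> simp
    rw [this, Matrix.mul_assoc]
  have hA10 : A 1 0 = A 0 1 := by
    conv_lhs => rw [← hAsym]
    simp [Matrix.transpose_apply]
  -- the conjugated difference
  have key : s⁻¹ * b₂ * s⁻¹ - 1 = c • A := by
    have h1 : s⁻¹ * b₁ * s⁻¹ = 1 := by
      rw [← hssq, show s⁻¹ * (s * s) * s⁻¹ = (s⁻¹ * s) * (s * s⁻¹) by
        simp only [Matrix.mul_assoc], hsinv, hinvs, Matrix.one_mul]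
    have : s⁻¹ * b₂ * s⁻¹ = s⁻¹ * b₁ * s⁻¹ + c • A := by
      show s⁻¹ * (b₁ + c • Ibar) * s⁻¹ = _
      rw [Matrix.mul_add, Matrix.add_mul, hA]
      simp [Matrix.mul_smul, Matrix.smul_mul]
    rw [this, h1]; abel
  -- inverse of b₁ squared: s⁻¹ * s⁻¹ = b₁⁻¹
  have hbinv : s⁻¹ * s⁻¹ = b₁⁻¹ := by
    rw [← hssq, Matrix.mul_inv_rev]
  -- the LHS as a trace
  have hLHS : (∑ i : Fin 2, ∑ j : Fin 2, ((s⁻¹ * b₂ * s⁻¹ - 1) i j) ^ 2)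
      = c ^ 2 * (Ibar * b₁⁻¹ * Ibar * b₁⁻¹).trace := by
    rw [key]
    have htr : (A * A).trace = (Ibar * b₁⁻¹ * Ibar * b₁⁻¹).trace := by
      have : A * A = s⁻¹ * (Ibar * b₁⁻¹ * Ibar) * s⁻¹ := by
        rw [hA, ← hbinv]; simp only [Matrix.mul_assoc]
      rw [this, Matrix.trace_mul_cycle, hbinv, Matrix.trace_mul_comm]
    rw [← htr]
    have hsum : (∑ i : Fin 2, ∑ j : Fin 2, ((c • A) i j) ^ 2)
        = c ^ 2 * (A 0 0 ^ 2 + 2 * A 0 1 ^ 2 + A 1 1 ^ 2) := by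
      simp [Fin.sum_univ_two, hA10]; ring
    rw [hsum]
    have : (A * A).trace = A 0 0 ^ 2 + 2 * A 0 1 ^ 2 + A 1 1 ^ 2 := by
      simp [Matrix.trace, Matrix.mul_apply, Fin.sum_univ_two, hA10, Matrix.diag]
      ring
    rw [this]
  rw [hLHS]
  -- compute b₁⁻¹ explicitly
  have hbinv_eq : b₁⁻¹ = (b₁.det)⁻¹ • !![b₁ 1 1, -(b₁ 0 1); -(b₁ 0 1), b₁ 0 0] := by
    rw [Matrix.inv_def, Matrix.adjugate_fin_two, Ring.inverse_eq_inv', hbsym]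
  have htrval : (Ibar * b₁⁻¹ * Ibar * b₁⁻¹).trace
      = (b₁.det)⁻¹ * (b₁.det)⁻¹ * (2 * (b₁ 0 0 * b₁ 1 1 + b₁ 0 1 ^ 2)) := by
    rw [hbinv_eq]
    simp [Matrix.trace, Matrix.diag, Matrix.mul_apply, Fin.sum_univ_two, hIbar]
    ring
  rw [htrval]
  -- now pure arithmetic with square roots
  have hb2 : b₂ 0 0 = b₁ 0 0 ∧ b₂ 1 1 = b₁ 1 1 ∧ b₂ 0 1 = b₁ 0 1 + c := by
    refine ⟨?_, ?_, ?_⟩ <;> simp [b₂, hIbar]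
  set r := Real.sqrt (b₁ 0 0 * b₁ 1 1) with hr
  have hrpos : 0 < r := Real.sqrt_pos.mpr (by positivity)
  have hr2 : r ^ 2 = b₁ 0 0 * b₁ 1 1 := Real.sq_sqrt (by positivity)
  have hξ1 : ξ₁ = b₁ 0 1 / r := rfl
  have hξ2 : ξ₂ = (b₁ 0 1 + c) / r := by
    show b₂ 0 1 / Real.sqrt (b₂ 0 0 * b₂ 1 1) = _
    rw [hb2.1, hb2.2.1, hb2.2.2]
  rw [hξ1, hξ2]
  have hX : b₁ 0 0 * b₁ 1 1 ≠ 0 := by positivity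
  have hΔ : b₁ 0 0 * b₁ 1 1 - b₁ 0 1 ^ 2 ≠ 0 := by rw [← hdet2]; exact hdet.ne'
  have e1 : (b₁ 0 1 / r) ^ 2 = b₁ 0 1 ^ 2 / (b₁ 0 0 * b₁ 1 1) := by rw [div_pow, hr2]
  have e2 : ((b₁ 0 1 + c) / r - b₁ 0 1 / r) ^ 2 = c ^ 2 / (b₁ 0 0 * b₁ 1 1) := by
    rw [div_sub_div_same, add_sub_cancel_left, div_pow, hr2]
  rw [e1, e2, hdet2]
  have h1ξ : 1 - b₁ 0 1 ^ 2 / (b₁ 0 0 * b₁ 1 1) ≠ 0 := by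
    rw [sub_ne_zero]
    intro h
    apply hΔ
    rw [eq_comm, div_eq_one_iff_eq hX] at h
    linarith
  field_simp
end

section
/- Fix an integer d ≥ 2 and, for j = 1, 2, parameters σ₁^{(j)}, σ₂^{(j)} > 0, α₁₁^{(j)}, α₂₂^{(j)}, α₁₂^{(j)} ∈ (0,1), ρ^{(j)} ∈ (0,1) satisfying α₁₂^{(j)} ≤ √(α₁₁^{(j)} α₂₂^{(j)}) and ρ^{(j)} < ( (1−α₁₁^{(j)})(1−α₂₂^{(j)}) / (1−α₁₂^{(j)})² )^{(d−1)/2}. For l ∈ ℕ let b_l^{(j)} be the real 2×2 matrix with entries b_l^{(j)}(i,i) = (σ_i^{(j)})² · C(d+l−2, l) · (α_{ii}^{(j)})^l (1−α_{ii}^{(j)})^{d−1} for i = 1, 2, and b_l^{(j)}(1,2) = b_l^{(j)}(2,1) = ρ^{(j)} σ₁^{(j)} σ₂^{(j)} · C(d+l−2, l) · (α₁₂^{(j)})^l (1−α₁₂^{(j)})^{d−1}, and set h(l) = (2l+d−1)(l+d−2)!/(l!(d−1)!). Then Σ_{l=0}^∞ h(l) · ‖ (b_l^{(1)})^{-1/2}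 b_l^{(2)} (b_l^{(1)})^{-1/2} − I ‖_F² < ∞ if and only if: σ_i^{(1)} = σ_i^{(2)} and α_{ii}^{(1)} = α_{ii}^{(2)} =: α_{ii} for i = 1, 2, and moreover either (a) α₁₂^{(1)} < √(α₁₁ α₂₂) and α₁₂^{(2)} < √(α₁₁ α₂₂), or (b) α₁₂^{(1)} = α₁₂^{(2)} and ρ^{(1)} = ρ^{(2)}. -/
open Filter Matrix

private lemma fac_add_le (n : ℕ) : ∀ k : ℕ, Nat.factorial (n + k) ≤ Nat.factorial n * (n + k) ^ k := by
  intro k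
  induction k with
  | zero => simp
  | succ k ih =>
    have h1 : Nat.factorial (n + (k+1)) = (n + k + 1) * Nat.factorial (n + k) := by
      rw [show n + (k+1) = (n+k) + 1 by ring, Nat.factorial_succ]
    rw [h1]
    calc (n + k + 1) * Nat.factorial (n + k) ≤ (n + k + 1) * (Nat.factorial n * (n + k) ^ k) :=
          Nat.mul_le_mul_left _ ih
      _ ≤ (n + k + 1) * (Nat.factorial n * (n + k + 1) ^ k) := by
          exact Nat.mul_le_mul_left _ (Nat.mul_le_mul_left _ (Nat.pow_le_pow_left (by omega) k))
      _ = Nat.factorial n * (n + (k+1)) ^ (k+1) := by ring_nf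
  
private lemma sphHarmDim_le (d l : ℕ) (hd : 2 ≤ d) :
    sphHarmDim d l ≤ (2*l + d) * (l + d) ^ d := by
  unfold sphHarmDim
  have hden : 0 < Nat.factorial l * Nat.factorial (d-1) :=
    Nat.mul_pos (Nat.factorial_pos _) (Nat.factorial_pos _)
  have hnum : (2*l + d - 1) * Nat.factorial (l + d - 2) ≤
      (Nat.factorial l * Nat.factorial (d-1)) * ((2*l + d) * (l + d) ^ d) := by
    have h1 : Nat.factorial (l + d - 2) ≤ Nat.factorial l * (l + d) ^ d := by
      have h2 : l + d - 2 = l + (d - 2) := by omega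
      calc Nat.factorial (l + d - 2) = Nat.factorial (l + (d-2)) := by rw [h2]
        _ ≤ Nat.factorial l * (l + (d-2)) ^ (d-2) := fac_add_le l (d-2)
        _ ≤ Nat.factorial l * (l + d) ^ d :=
            Nat.mul_le_mul_left _ (Nat.pow_le_pow_left (by omega) (d-2) |>.trans
              (Nat.pow_le_pow_right (by omega) (by omega)))
    calc (2*l + d - 1) * Nat.factorial (l + d - 2)
        ≤ (2*l + d) * (Nat.factorial l * (l + d) ^ d) :=
          Nat.mul_le_mul (by omega) h1
      _ ≤ (Nat.factorial l * Nat.factorial (d-1)) * ((2*l + d) * (l + d) ^ d) := by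
          have : 1 ≤ Nat.factorial (d-1) := Nat.one_le_iff_ne_zero.2 (Nat.factorial_ne_zero _)
          calc (2*l + d) * (Nat.factorial l * (l + d) ^ d)
              = (Nat.factorial l * 1) * ((2*l+d) * (l+d)^d) := by ring
            _ ≤ (Nat.factorial l * Nat.factorial (d-1)) * ((2*l+d) * (l+d)^d) :=
                Nat.mul_le_mul (Nat.mul_le_mul_left _ this) le_rfl
  calc (2*l + d - 1) * Nat.factorial (l + d - 2) / (Nat.factorial l * Nat.factorial (d-1))
      ≤ (Nat.factorial l * Nat.factorial (d-1)) * ((2*l + d) * (l + d) ^ d) /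
        (Nat.factorial l * Nat.factorial (d-1)) := Nat.div_le_div_right hnum
    _ = (2*l + d) * (l + d) ^ d := Nat.mul_div_cancel_left _ hden

private lemma one_le_sphHarmDim (d l : ℕ) (hd : 2 ≤ d) : 1 ≤ sphHarmDim d l := by
  unfold sphHarmDim
  rw [Nat.one_le_div_iff (Nat.mul_pos (Nat.factorial_pos _) (Nat.factorial_pos _))]
  have h1 : Nat.factorial l * Nat.factorial (d-2) ≤ Nat.factorial (l + d - 2) := by
    have h2 : l + d - 2 = l + (d-2) := by omega
    rw [h2]
    calc Nat.factorial l * Nat.factorial (d-2)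
        = 1 * Nat.factorial l * Nat.factorial (d-2) := by ring
      _ ≤ Nat.choose (l + (d-2)) l * Nat.factorial l * Nat.factorial (d-2) := by
          exact Nat.mul_le_mul (Nat.mul_le_mul (Nat.choose_pos (by omega)) le_rfl) le_rfl
      _ = Nat.factorial (l + (d-2)) := by
          have := Nat.choose_mul_factorial_mul_factorial (n := l + (d-2)) (k := l) (by omega)
          simpa using this
  have h3 : Nat.factorial (d-1) = (d-1) * Nat.factorial (d-2) := by
    have : d - 1 = (d-2) + 1 := by omega
    rw [this, Nat.factorial_succ]
  calc Nat.factorial l * Nat.factorial (d-1)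
      = (d-1) * (Nat.factorial l * Nat.factorial (d-2)) := by rw [h3]; ring
    _ ≤ (2*l + d - 1) * Nat.factorial (l + d - 2) :=
        Nat.mul_le_mul (by omega) h1

private lemma summable_sph_mul_geom (d : ℕ) (hd : 2 ≤ d) {κ : ℝ} (h0 : 0 < κ) (h1 : κ < 1) :
    Summable (fun l : ℕ => (sphHarmDim d l : ℝ) * κ ^ l) := by
  have hbig : Summable (fun l : ℕ => ((l + d : ℝ)) ^ (d+1) * κ ^ (l + d)) := by
    have := summable_pow_mul_geometric_of_norm_lt_one (R := ℝ) (d+1)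
      (r := κ) (by rw [Real.norm_eq_abs, abs_of_pos h0]; exact h1)
    exact_mod_cast (summable_nat_add_iff d).2 this
  have hbig2 : Summable (fun l : ℕ => (2 * (κ^d)⁻¹) * (((l + d : ℝ)) ^ (d+1) * κ ^ (l + d))) :=
    hbig.mul_left _
  apply Summable.of_nonneg_of_le (fun l => by positivity) _ hbig2
  intro l
  have hk : κ ^ d ≠ 0 := by positivity
  have hle : (sphHarmDim d l : ℝ) ≤ 2 * (l + d : ℝ) ^ (d+1) := by
    have := sphHarmDim_le d l hd
    have hcast : (sphHarmDim d l : ℝ) ≤ ((2*l + d) * (l + d) ^ d : ℕ) := by exact_mod_cast this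
    refine hcast.trans ?_
    push_cast
    have h2 : (2*(l:ℝ) + d) ≤ 2 * ((l:ℝ) + d) := by
      have : (2:ℝ) ≤ (d:ℝ) + d := by
        have : (1:ℝ) ≤ (d:ℝ) := by exact_mod_cast (by omega : 1 ≤ d)
        linarith
      linarith
    calc (2*(l:ℝ) + d) * ((l:ℝ) + d) ^ d ≤ 2 * ((l:ℝ) + d) * ((l:ℝ) + d)^d := by
          apply mul_le_mul_of_nonneg_right h2 (by positivity)
      _ = 2 * ((l:ℝ)+d)^(d+1) := by ring
  calc (sphHarmDim d l : ℝ) * κ ^ l ≤ (2 * ((l:ℝ)+d)^(d+1)) * κ ^ l := by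
        apply mul_le_mul_of_nonneg_right hle (by positivity)
    _ = (2 * (κ^d)⁻¹) * (((l + d : ℝ)) ^ (d+1) * κ ^ (l + d)) := by
        rw [pow_add]
        field_simp
        ring

private lemma trace_inv_mul_sym (A B C A' B' C' : ℝ)
    (h : (!![A,B;B,C] : Matrix (Fin 2) (Fin 2) ℝ).det ≠ 0) :
    Matrix.trace ((!![A,B;B,C] : Matrix (Fin 2) (Fin 2) ℝ)⁻¹ * !![A',B';B',C'])
      = (C*A' + A*C' - 2*B*B') / (A*C - B^2) := by
  have hdet : (!![A,B;B,C] : Matrix (Fin 2) (Fin 2) ℝ).det = A*C - B^2 := by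
    rw [Matrix.det_fin_two_of]; ring
  have hadj : (!![A,B;B,C] : Matrix (Fin 2) (Fin 2) ℝ).adjugate = !![C,-B;-B,A] := by
    rw [Matrix.adjugate_fin_two]
    congr 1 <;> simp
  rw [Matrix.inv_def, hadj, Matrix.smul_mul, Matrix.trace_smul, Matrix.mul_fin_two,
    Matrix.trace_fin_two_of, hdet, Ring.inverse_eq_inv', smul_eq_mul]
  have : A*C - B^2 ≠ 0 := by rw [← hdet]; exact h
  field_simp
  ring

private lemma det_fin_two_sym (A B C : ℝ) :
    (!![A,B;B,C] : Matrix (Fin 2) (Fin 2) ℝ).det = A*C - B^2 := by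
  rw [Matrix.det_fin_two_of]; ring

private lemma transpose_fin_two_sym (A B C : ℝ) :
    (!![A,B;B,C] : Matrix (Fin 2) (Fin 2) ℝ)ᵀ = !![A,B;B,C] := by
  ext i j
  fin_cases i <;> fin_cases j <;> simp

set_option maxHeartbeats 2000000 in
private lemma core
    {a₁ a₂ r b₁ b₂ r' p₁ p₂ q t₁ t₂ u : ℝ}
    (ha₁ : 0 < a₁) (ha₂ : 0 < a₂) (hb₁ : 0 < b₁) (hb₂ : 0 < b₂)
    (hr0 : 0 < r) (hr'0 : 0 < r')
    (hp₁ : 0 < p₁) (hp₂ : 0 < p₂) (ht₁ : 0 < t₁) (ht₂ : 0 < t₂)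
    (hq0 : 0 < q) (hu0 : 0 < u)
    (hq : q^2 ≤ p₁*p₂) (hu : u^2 ≤ t₁*t₂)
    (hr : r^2 < a₁*a₂) (hr' : r'^2 < b₁*b₂)
    (hT : Filter.Tendsto (fun l : ℕ =>
        (a₂*b₁*(p₂*t₁)^l + a₁*b₂*(p₁*t₂)^l - 2*(r*r')*(q*u)^l)
          / (a₁*a₂*(p₁*p₂)^l - r^2*(q^2)^l)) Filter.atTop (nhds 2))
    (hP : Filter.Tendsto (fun l : ℕ =>
        (b₁*b₂*(t₁*t₂)^l - r'^2*(u^2)^l)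
          / (a₁*a₂*(p₁*p₂)^l - r^2*(q^2)^l)) Filter.atTop (nhds 1)) :
    b₁ = a₁ ∧ b₂ = a₂ ∧ t₁ = p₁ ∧ t₂ = p₂ ∧
      ((q^2 < p₁*p₂ ∧ u^2 < p₁*p₂) ∨ (q = u ∧ r = r')) := by
  have hS : (0:ℝ) < p₁*p₂ := mul_pos hp₁ hp₂
  have hA0 : (0:ℝ) < a₁*a₂ - r^2 := sub_pos.2 hr
  have hB0 : (0:ℝ) < b₁*b₂ - r'^2 := sub_pos.2 hr'
  have hqpow : ∀ l : ℕ, (q^2)^l ≤ (p₁*p₂)^l := fun l => pow_le_pow_left₀ (sq_nonneg q) hq l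
  have hD_lb : ∀ l : ℕ, (a₁*a₂ - r^2) * (p₁*p₂)^l ≤ a₁*a₂*(p₁*p₂)^l - r^2*(q^2)^l := by
    intro l
    have h1 : r^2*(q^2)^l ≤ r^2*(p₁*p₂)^l :=
      mul_le_mul_of_nonneg_left (hqpow l) (sq_nonneg r)
    nlinarith [pow_pos hS l]
  have hDpos : ∀ l : ℕ, 0 < a₁*a₂*(p₁*p₂)^l - r^2*(q^2)^l := fun l =>
    lt_of_lt_of_le (by positivity) (hD_lb l)
  have hD_ub : ∀ l : ℕ, a₁*a₂*(p₁*p₂)^l - r^2*(q^2)^l ≤ a₁*a₂*(p₁*p₂)^l := by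
    intro l
    have : (0:ℝ) ≤ r^2*(q^2)^l := by positivity
    linarith
  have hE_lb : ∀ l : ℕ, (b₁*b₂ - r'^2) * (t₁*t₂)^l ≤ b₁*b₂*(t₁*t₂)^l - r'^2*(u^2)^l := by
    intro l
    have h1 : r'^2*(u^2)^l ≤ r'^2*(t₁*t₂)^l :=
      mul_le_mul_of_nonneg_left (pow_le_pow_left₀ (sq_nonneg u) hu l) (sq_nonneg r')
    nlinarith [pow_pos (mul_pos ht₁ ht₂) l]
  have hE_ub : ∀ l : ℕ, b₁*b₂*(t₁*t₂)^l - r'^2*(u^2)^l ≤ b₁*b₂*(t₁*t₂)^l := by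
    intro l
    have : (0:ℝ) ≤ r'^2*(u^2)^l := by positivity
    linarith
  -- Step A : t₁ * t₂ = p₁ * p₂
  have hstepA : t₁*t₂ = p₁*p₂ := by
    rcases lt_trichotomy (t₁*t₂) (p₁*p₂) with hlt | heq | hgt
    · exfalso
      have hκ0 : (0:ℝ) ≤ (t₁*t₂)/(p₁*p₂) := by positivity
      have hκ1 : (t₁*t₂)/(p₁*p₂) < 1 := (div_lt_one hS).2 hlt
      have hub : ∀ l : ℕ, (b₁*b₂*(t₁*t₂)^l - r'^2*(u^2)^l)/(a₁*a₂*(p₁*p₂)^l - r^2*(q^2)^l)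
          ≤ (b₁*b₂/(a₁*a₂ - r^2)) * ((t₁*t₂)/(p₁*p₂))^l := by
        intro l
        have h1 : (b₁*b₂*(t₁*t₂)^l)/((a₁*a₂-r^2)*(p₁*p₂)^l)
            = (b₁*b₂/(a₁*a₂ - r^2)) * ((t₁*t₂)/(p₁*p₂))^l := by
          rw [div_pow]
          field_simp
          try ring
        rw [← h1]
        apply div_le_div₀ (by positivity) (hE_ub l) (by positivity) (hD_lb l)
      have hlbn : ∀ l : ℕ, 0 ≤ (b₁*b₂*(t₁*t₂)^l - r'^2*(u^2)^l)/(a₁*a₂*(p₁*p₂)^l - r^2*(q^2)^l) := by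
        intro l
        apply div_nonneg _ (hDpos l).le
        have := hE_lb l
        nlinarith [pow_pos (mul_pos ht₁ ht₂) l]
      have hto0 : Filter.Tendsto (fun l : ℕ => (b₁*b₂/(a₁*a₂ - r^2)) * ((t₁*t₂)/(p₁*p₂))^l)
          Filter.atTop (nhds 0) := by
        have := (tendsto_pow_atTop_nhds_zero_of_lt_one hκ0 hκ1).const_mul (b₁*b₂/(a₁*a₂ - r^2))
        simpa using this
      have := squeeze_zero hlbn hub hto0
      exact one_ne_zero (tendsto_nhds_unique hP this)
    · exact heq
    · exfalso
      have hκ1 : 1 < (t₁*t₂)/(p₁*p₂) := (one_lt_div hS).2 hgt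
      have hlb : ∀ l : ℕ, ((b₁*b₂ - r'^2)/(a₁*a₂)) * ((t₁*t₂)/(p₁*p₂))^l
          ≤ (b₁*b₂*(t₁*t₂)^l - r'^2*(u^2)^l)/(a₁*a₂*(p₁*p₂)^l - r^2*(q^2)^l) := by
        intro l
        have h1 : ((b₁*b₂-r'^2)*(t₁*t₂)^l)/((a₁*a₂)*(p₁*p₂)^l)
            = ((b₁*b₂ - r'^2)/(a₁*a₂)) * ((t₁*t₂)/(p₁*p₂))^l := by
          rw [div_pow]; field_simp; try ring
        rw [← h1]
        apply div_le_div₀ _ (hE_lb l) (hDpos l) (hD_ub l)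
        nlinarith [hE_ub l, hE_lb l, pow_pos (mul_pos ht₁ ht₂) l]
      have hinf : Filter.Tendsto (fun l : ℕ => ((b₁*b₂ - r'^2)/(a₁*a₂)) * ((t₁*t₂)/(p₁*p₂))^l)
          Filter.atTop Filter.atTop := by
        apply Filter.Tendsto.const_mul_atTop (by positivity)
        exact tendsto_pow_atTop_atTop_of_one_lt hκ1
      have ev1 := hinf.eventually_ge_atTop 2
      have ev2 := hP.eventually_lt_const one_lt_two
      obtain ⟨l, h1, h2⟩ := (ev1.and ev2).exists
      linarith [hlb l]

  -- Step B : t₁ = p₁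
  have hstepB : t₁ = p₁ := by
    by_contra hne
    have hqu : q*u ≤ p₁*p₂ := by
      have hu' : u^2 ≤ p₁*p₂ := by rw [← hstepA]; exact hu
      nlinarith [sq_nonneg (q - u)]
    have hy : p₁*p₂*(p₁/t₁) = p₁*t₂ := by
      rw [mul_div_assoc', div_eq_iff ht₁.ne']
      linear_combination (-p₁) * hstepA
    have hx : p₁*p₂*(t₁/p₁) = p₂*t₁ := by field_simp
    obtain ⟨g, hg, hmax⟩ : ∃ g : ℝ, 1 < g ∧
        ∀ l : ℕ, (p₁*p₂)^l * g^l ≤ (p₂*t₁)^l + (p₁*t₂)^l := by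
      rcases lt_or_gt_of_ne hne with h | h
      · refine ⟨p₁/t₁, (one_lt_div ht₁).2 h, fun l => ?_⟩
        rw [← mul_pow, hy]
        have : (0:ℝ) ≤ (p₂*t₁)^l := by positivity
        linarith
      · refine ⟨t₁/p₁, (one_lt_div hp₁).2 h, fun l => ?_⟩
        rw [← mul_pow, hx]
        have : (0:ℝ) ≤ (p₁*t₂)^l := by positivity
        linarith
    obtain ⟨m, hm, hm1, hm2⟩ : ∃ m : ℝ, 0 < m ∧ m ≤ a₂*b₁ ∧ m ≤ a₁*b₂ :=
      ⟨min (a₂*b₁) (a₁*b₂), lt_min (by positivity) (by positivity),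
        min_le_left _ _, min_le_right _ _⟩
    have hgl : Filter.Tendsto (fun l : ℕ => g^l) Filter.atTop Filter.atTop :=
      tendsto_pow_atTop_atTop_of_one_lt hg
    have ev1 := hgl.eventually_ge_atTop ((2*(r*r') + 3*(a₁*a₂))/m)
    have ev2 := hT.eventually_lt_const (by norm_num : (2:ℝ) < 3)
    obtain ⟨l, h1, h2⟩ := (ev1.and ev2).exists
    have h1' : 2*(r*r') + 3*(a₁*a₂) ≤ m * g^l := (div_le_iff₀' hm).mp h1
    have c1 : m * ((p₂*t₁)^l + (p₁*t₂)^l) ≤ a₂*b₁*(p₂*t₁)^l + a₁*b₂*(p₁*t₂)^l := by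
      have e1 : m * (p₂*t₁)^l ≤ a₂*b₁*(p₂*t₁)^l :=
        mul_le_mul_of_nonneg_right hm1 (by positivity)
      have e2 : m * (p₁*t₂)^l ≤ a₁*b₂*(p₁*t₂)^l :=
        mul_le_mul_of_nonneg_right hm2 (by positivity)
      linarith
    have c2 : m * ((p₁*p₂)^l * g^l) ≤ m * ((p₂*t₁)^l + (p₁*t₂)^l) :=
      mul_le_mul_of_nonneg_left (hmax l) hm.le
    have c3 : (q*u)^l ≤ (p₁*p₂)^l := pow_le_pow_left₀ (by positivity) hqu l
    have c3' : 2*(r*r')*(q*u)^l ≤ 2*(r*r')*(p₁*p₂)^l :=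
      mul_le_mul_of_nonneg_left c3 (by positivity)
    have c4 : (2*(r*r') + 3*(a₁*a₂)) * (p₁*p₂)^l ≤ m * ((p₁*p₂)^l * g^l) := by
      calc (2*(r*r') + 3*(a₁*a₂)) * (p₁*p₂)^l ≤ (m * g^l) * (p₁*p₂)^l :=
            mul_le_mul_of_nonneg_right h1' (by positivity)
        _ = m * ((p₁*p₂)^l * g^l) := by ring
    have h3 : 3 ≤ (a₂*b₁*(p₂*t₁)^l + a₁*b₂*(p₁*t₂)^l - 2*(r*r')*(q*u)^l)
        / (a₁*a₂*(p₁*p₂)^l - r^2*(q^2)^l) := by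
      rw [le_div_iff₀ (hDpos l)]
      have hq2 : (0:ℝ) ≤ r^2*(q^2)^l := by positivity
      linarith [c1, c2, c3', c4, hq2]
    linarith
  have hstepB2 : t₂ = p₂ := by
    have := hstepA
    rw [hstepB] at this
    exact mul_left_cancel₀ hp₁.ne' this
  subst hstepB hstepB2
  -- Step C
  have hu' : u^2 ≤ t₁*t₂ := hu
  have hφle1 : q^2/(t₁*t₂) ≤ 1 := (div_le_one hS).2 hq
  have hDn : ∀ l : ℕ, 0 < a₁*a₂ - r^2*(q^2/(t₁*t₂))^l := by
    intro l
    have h1 : (q^2/(t₁*t₂))^l ≤ 1 := pow_le_one₀ (by positivity) hφle1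
    nlinarith [mul_le_mul_of_nonneg_left h1 (sq_nonneg r)]
  have hTn : Filter.Tendsto (fun l : ℕ =>
      (a₂*b₁ + a₁*b₂ - 2*(r*r')*(q*u/(t₁*t₂))^l) / (a₁*a₂ - r^2*(q^2/(t₁*t₂))^l))
      Filter.atTop (nhds 2) := by
    apply hT.congr
    intro l
    rw [div_eq_div_iff (hDpos l).ne' (hDn l).ne', div_pow, div_pow]
    field_simp
    try ring
    try exact Or.inl trivial
  have hPn : Filter.Tendsto (fun l : ℕ =>
      (b₁*b₂ - r'^2*(u^2/(t₁*t₂))^l) / (a₁*a₂ - r^2*(q^2/(t₁*t₂))^l))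
      Filter.atTop (nhds 1) := by
    apply hP.congr
    intro l
    rw [div_eq_div_iff (hDpos l).ne' (hDn l).ne', div_pow, div_pow]
    field_simp
    try ring
    try exact Or.inl trivial
  have mkT : ∀ Lφ Lθ : ℝ,
      Filter.Tendsto (fun l : ℕ => (q^2/(t₁*t₂))^l) Filter.atTop (nhds Lφ) →
      Filter.Tendsto (fun l : ℕ => (q*u/(t₁*t₂))^l) Filter.atTop (nhds Lθ) →
      a₁*a₂ - r^2*Lφ ≠ 0 →
      a₂*b₁ + a₁*b₂ - 2*(r*r')*Lθ = 2*(a₁*a₂ - r^2*Lφ) := by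
    intro Lφ Lθ hφ hθ hne
    have hnum : Filter.Tendsto (fun l : ℕ => a₂*b₁ + a₁*b₂ - 2*(r*r')*(q*u/(t₁*t₂))^l)
        Filter.atTop (nhds (a₂*b₁ + a₁*b₂ - 2*(r*r')*Lθ)) :=
      tendsto_const_nhds.sub (hθ.const_mul _)
    have hden : Filter.Tendsto (fun l : ℕ => a₁*a₂ - r^2*(q^2/(t₁*t₂))^l)
        Filter.atTop (nhds (a₁*a₂ - r^2*Lφ)) :=
      tendsto_const_nhds.sub (hφ.const_mul _)
    have h2 := tendsto_nhds_unique hTn (hnum.div hden hne)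
    rw [eq_div_iff hne] at h2
    linarith [h2]
  have mkP : ∀ Lφ Lψ : ℝ,
      Filter.Tendsto (fun l : ℕ => (q^2/(t₁*t₂))^l) Filter.atTop (nhds Lφ) →
      Filter.Tendsto (fun l : ℕ => (u^2/(t₁*t₂))^l) Filter.atTop (nhds Lψ) →
      a₁*a₂ - r^2*Lφ ≠ 0 →
      b₁*b₂ - r'^2*Lψ = a₁*a₂ - r^2*Lφ := by
    intro Lφ Lψ hφ hψ hne
    have hnum : Filter.Tendsto (fun l : ℕ => b₁*b₂ - r'^2*(u^2/(t₁*t₂))^l)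
        Filter.atTop (nhds (b₁*b₂ - r'^2*Lψ)) :=
      tendsto_const_nhds.sub (hψ.const_mul _)
    have hden : Filter.Tendsto (fun l : ℕ => a₁*a₂ - r^2*(q^2/(t₁*t₂))^l)
        Filter.atTop (nhds (a₁*a₂ - r^2*Lφ)) :=
      tendsto_const_nhds.sub (hφ.const_mul _)
    have h2 := tendsto_nhds_unique hPn (hnum.div hden hne)
    rw [eq_div_iff hne] at h2
    linarith [h2]
  have alg : a₂*b₁ + a₁*b₂ = 2*(a₁*a₂) → b₁*b₂ = a₁*a₂ → b₁ = a₁ ∧ b₂ = a₂ := by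
    intro e1 e2
    constructor
    · have h0 : (a₂*b₁ - a₁*a₂)^2 = 0 := by
        linear_combination (a₂*b₁) * e1 - (a₁*a₂) * e2
      have h0' : a₂*b₁ - a₁*a₂ = 0 := by
        have := (pow_eq_zero_iff two_ne_zero).mp h0
        exact this
      apply mul_left_cancel₀ ha₂.ne'
      linear_combination h0'
    · have h0 : (a₁*b₂ - a₁*a₂)^2 = 0 := by
        linear_combination (a₁*b₂) * e1 - (a₁*a₂) * e2
      have h0' : a₁*b₂ - a₁*a₂ = 0 := by
        have := (pow_eq_zero_iff two_ne_zero).mp h0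
        exact this
      apply mul_left_cancel₀ ha₁.ne'
      linear_combination h0'
  rcases eq_or_lt_of_le hq with hqe | hqlt <;> rcases eq_or_lt_of_le hu' with hue | hult
  · -- q² = S, u² = S
    have hqs : q = Real.sqrt (t₁*t₂) := by rw [← hqe, Real.sqrt_sq hq0.le]
    have hus : u = Real.sqrt (t₁*t₂) := by rw [← hue, Real.sqrt_sq hu0.le]
    have hquv : q = u := hqs.trans hus.symm
    have hφ1 : q^2/(t₁*t₂) = 1 := by rw [hqe]; exact div_self hS.ne'
    have hψ1 : u^2/(t₁*t₂) = 1 := by rw [hue]; exact div_self hS.ne'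
    have hθ1 : q*u/(t₁*t₂) = 1 := by
      rw [← hquv, ← sq, hqe]; exact div_self hS.ne'
    have Tφ : Filter.Tendsto (fun l : ℕ => (q^2/(t₁*t₂))^l) Filter.atTop (nhds 1) := by
      rw [hφ1]; simp only [one_pow]; exact tendsto_const_nhds
    have Tψ : Filter.Tendsto (fun l : ℕ => (u^2/(t₁*t₂))^l) Filter.atTop (nhds 1) := by
      rw [hψ1]; simp only [one_pow]; exact tendsto_const_nhds
    have Tθ : Filter.Tendsto (fun l : ℕ => (q*u/(t₁*t₂))^l) Filter.atTop (nhds 1) := by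
      rw [hθ1]; simp only [one_pow]; exact tendsto_const_nhds
    have hne1 : a₁*a₂ - r^2*(1:ℝ) ≠ 0 := by nlinarith
    have eq1 := mkT 1 1 Tφ Tθ hne1
    have eq2 := mkP 1 1 Tφ Tψ hne1
    have key : (a₂*b₁ - a₁*b₂)^2 = -(4*(a₁*a₂ - r^2))*(r - r')^2 := by
      linear_combination (a₂*b₁ + a₁*b₂ + 2*a₁*a₂ - 2*r^2 + 2*(r*r')) * eq1 - 4*(a₁*a₂) * eq2
    have hrr : r = r' := by
      have h1 : (r - r')^2 ≤ 0 := by nlinarith [sq_nonneg (a₂*b₁ - a₁*b₂), hA0]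
      have h2 : (r - r')^2 = 0 := le_antisymm h1 (sq_nonneg _)
      have h3 := (pow_eq_zero_iff two_ne_zero).mp h2
      linarith [h3]
    have eq1' : a₂*b₁ + a₁*b₂ = 2*(a₁*a₂) := by
      linear_combination eq1 - 2*r*hrr
    have eq2' : b₁*b₂ = a₁*a₂ := by
      linear_combination eq2 - (r+r')*hrr
    obtain ⟨hb1, hb2⟩ := alg eq1' eq2'
    exact ⟨hb1, hb2, rfl, rfl, Or.inr ⟨hquv, hrr⟩⟩
  · -- q² = S, u² < S
    exfalso
    have hφ1 : q^2/(t₁*t₂) = 1 := by rw [hqe]; exact div_self hS.ne'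
    have Tφ : Filter.Tendsto (fun l : ℕ => (q^2/(t₁*t₂))^l) Filter.atTop (nhds 1) := by
      rw [hφ1]; simp only [one_pow]; exact tendsto_const_nhds
    have hqusq : (q*u)^2 < (t₁*t₂)^2 := by nlinarith [sq_nonneg q, sq_nonneg u]
    have hqulr : q*u < t₁*t₂ := lt_of_pow_lt_pow_left₀ 2 hS.le hqusq
    have Tθ : Filter.Tendsto (fun l : ℕ => (q*u/(t₁*t₂))^l) Filter.atTop (nhds 0) :=
      tendsto_pow_atTop_nhds_zero_of_lt_one (by positivity) ((div_lt_one hS).2 hqulr)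
    have Tψ : Filter.Tendsto (fun l : ℕ => (u^2/(t₁*t₂))^l) Filter.atTop (nhds 0) :=
      tendsto_pow_atTop_nhds_zero_of_lt_one (by positivity) ((div_lt_one hS).2 hult)
    have hne1 : a₁*a₂ - r^2*(1:ℝ) ≠ 0 := by nlinarith
    have eq1 := mkT 1 0 Tφ Tθ hne1
    have eq2 := mkP 1 0 Tφ Tψ hne1
    have key : (a₂*b₁ - a₁*b₂)^2 = -4*r^2*(a₁*a₂ - r^2) := by
      linear_combination (a₂*b₁ + a₁*b₂ + 2*(a₁*a₂ - r^2)) * eq1 - 4*(a₁*a₂) * eq2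
    nlinarith [sq_nonneg (a₂*b₁ - a₁*b₂), mul_pos (mul_pos hr0 hr0) hA0]
  · -- q² < S, u² = S
    exfalso
    have Tφ : Filter.Tendsto (fun l : ℕ => (q^2/(t₁*t₂))^l) Filter.atTop (nhds 0) :=
      tendsto_pow_atTop_nhds_zero_of_lt_one (by positivity) ((div_lt_one hS).2 hqlt)
    have hψ1 : u^2/(t₁*t₂) = 1 := by rw [hue]; exact div_self hS.ne'
    have Tψ : Filter.Tendsto (fun l : ℕ => (u^2/(t₁*t₂))^l) Filter.atTop (nhds 1) := by
      rw [hψ1]; simp only [one_pow]; exact tendsto_const_nhds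
    have hqusq : (q*u)^2 < (t₁*t₂)^2 := by nlinarith [sq_nonneg q, sq_nonneg u]
    have hqulr : q*u < t₁*t₂ := lt_of_pow_lt_pow_left₀ 2 hS.le hqusq
    have Tθ : Filter.Tendsto (fun l : ℕ => (q*u/(t₁*t₂))^l) Filter.atTop (nhds 0) :=
      tendsto_pow_atTop_nhds_zero_of_lt_one (by positivity) ((div_lt_one hS).2 hqulr)
    have hne0 : a₁*a₂ - r^2*(0:ℝ) ≠ 0 := by nlinarith [mul_pos ha₁ ha₂]
    have eq1 := mkT 0 0 Tφ Tθ hne0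
    have eq2 := mkP 0 1 Tφ Tψ hne0
    have key : (a₂*b₁ - a₁*b₂)^2 = -(4*(a₁*a₂))*r'^2 := by
      linear_combination (a₂*b₁ + a₁*b₂ + 2*(a₁*a₂)) * eq1 - 4*(a₁*a₂) * eq2
    nlinarith [sq_nonneg (a₂*b₁ - a₁*b₂), mul_pos (mul_pos ha₁ ha₂) (mul_pos hr'0 hr'0)]
  · -- q² < S, u² < S
    have Tφ : Filter.Tendsto (fun l : ℕ => (q^2/(t₁*t₂))^l) Filter.atTop (nhds 0) :=
      tendsto_pow_atTop_nhds_zero_of_lt_one (by positivity) ((div_lt_one hS).2 hqlt)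
    have Tψ : Filter.Tendsto (fun l : ℕ => (u^2/(t₁*t₂))^l) Filter.atTop (nhds 0) :=
      tendsto_pow_atTop_nhds_zero_of_lt_one (by positivity) ((div_lt_one hS).2 hult)
    have hqusq : (q*u)^2 < (t₁*t₂)^2 := by nlinarith [sq_nonneg q, sq_nonneg u]
    have hqulr : q*u < t₁*t₂ := lt_of_pow_lt_pow_left₀ 2 hS.le hqusq
    have Tθ : Filter.Tendsto (fun l : ℕ => (q*u/(t₁*t₂))^l) Filter.atTop (nhds 0) :=
      tendsto_pow_atTop_nhds_zero_of_lt_one (by positivity) ((div_lt_one hS).2 hqulr)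
    have hne0 : a₁*a₂ - r^2*(0:ℝ) ≠ 0 := by nlinarith [mul_pos ha₁ ha₂]
    have eq1 := mkT 0 0 Tφ Tθ hne0
    have eq2 := mkP 0 0 Tφ Tψ hne0
    have eq1' : a₂*b₁ + a₁*b₂ = 2*(a₁*a₂) := by linear_combination eq1
    have eq2' : b₁*b₂ = a₁*a₂ := by linear_combination eq2
    obtain ⟨hb1, hb2⟩ := alg eq1' eq2'
    exact ⟨hb1, hb2, rfl, rfl, Or.inl ⟨hqlt, hult⟩⟩

set_option maxHeartbeats 1000000 in
private lemma perl
    (a₁ a₂ r b₁ b₂ r' p₁ p₂ q t₁ t₂ u cl : ℝ)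
    (ha₁ : 0 < a₁) (ha₂ : 0 < a₂) (hb₁ : 0 < b₁) (hb₂ : 0 < b₂)
    (hr0 : 0 < r) (hr'0 : 0 < r')
    (hp₁ : 0 < p₁) (hp₂ : 0 < p₂) (ht₁ : 0 < t₁) (ht₂ : 0 < t₂)
    (hq0 : 0 < q) (hu0 : 0 < u) (hcl : 0 < cl)
    (l : ℕ)
    (hD : 0 < a₁*a₂*(p₁*p₂)^l - r^2*(q^2)^l)
    (B1 B2 s : Matrix (Fin 2) (Fin 2) ℝ)
    (hB1 : B1 = !![cl*(a₁*p₁^l), cl*(r*q^l); cl*(r*q^l), cl*(a₂*p₂^l)])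
    (hB2 : B2 = !![cl*(b₁*t₁^l), cl*(r'*u^l); cl*(r'*u^l), cl*(b₂*t₂^l)])
    (hs : s.PosDef) (hssq : s * s = B1) :
    (∑ i : Fin 2, ∑ j : Fin 2, ((s⁻¹ * B2 * s⁻¹ - 1) i j) ^ 2)
        = ((a₂*b₁*(p₂*t₁)^l + a₁*b₂*(p₁*t₂)^l - 2*(r*r')*(q*u)^l)
            / (a₁*a₂*(p₁*p₂)^l - r^2*(q^2)^l) - 2)^2
          - 2*((b₁*b₂*(t₁*t₂)^l - r'^2*(u^2)^l) / (a₁*a₂*(p₁*p₂)^l - r^2*(q^2)^l)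
              - (a₂*b₁*(p₂*t₁)^l + a₁*b₂*(p₁*t₂)^l - 2*(r*r')*(q*u)^l)
                / (a₁*a₂*(p₁*p₂)^l - r^2*(q^2)^l) + 1) ∧
    ((a₂*b₁*(p₂*t₁)^l + a₁*b₂*(p₁*t₂)^l - 2*(r*r')*(q*u)^l)
            / (a₁*a₂*(p₁*p₂)^l - r^2*(q^2)^l) - 2)^2
        ≤ 2 * (∑ i : Fin 2, ∑ j : Fin 2, ((s⁻¹ * B2 * s⁻¹ - 1) i j) ^ 2) ∧
    |(b₁*b₂*(t₁*t₂)^l - r'^2*(u^2)^l) / (a₁*a₂*(p₁*p₂)^l - r^2*(q^2)^l)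
        - (a₂*b₁*(p₂*t₁)^l + a₁*b₂*(p₁*t₂)^l - 2*(r*r')*(q*u)^l)
          / (a₁*a₂*(p₁*p₂)^l - r^2*(q^2)^l) + 1|
        ≤ (∑ i : Fin 2, ∑ j : Fin 2, ((s⁻¹ * B2 * s⁻¹ - 1) i j) ^ 2) := by
  have hdets : s.det ≠ 0 := hs.det_pos.ne'
  have hsunit : IsUnit s.det := isUnit_iff_ne_zero.2 hdets
  have hstrans : sᵀ = s := by
    have h1 : sᴴ = s := hs.isHermitian
    rwa [Matrix.conjTranspose_eq_transpose_of_trivial] at h1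
  have hdetb1 : B1.det = cl^2 * (a₁*a₂*(p₁*p₂)^l - r^2*(q^2)^l) := by
    rw [hB1, Matrix.det_fin_two_of]; ring
  have hdetb2 : B2.det = cl^2 * (b₁*b₂*(t₁*t₂)^l - r'^2*(u^2)^l) := by
    rw [hB2, Matrix.det_fin_two_of]; ring
  have hdetb1ne : B1.det ≠ 0 := by
    rw [hdetb1]; positivity
  have hcl2 : cl^2 ≠ 0 := by positivity
  -- determinant of Y
  have hYdet : (s⁻¹ * B2 * s⁻¹).det
      = (b₁*b₂*(t₁*t₂)^l - r'^2*(u^2)^l) / (a₁*a₂*(p₁*p₂)^l - r^2*(q^2)^l) := by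
    have hss : s.det * s.det = cl^2 * (a₁*a₂*(p₁*p₂)^l - r^2*(q^2)^l) := by
      rw [← Matrix.det_mul, hssq, hdetb1]
    rw [Matrix.det_mul, Matrix.det_mul, Matrix.det_nonsing_inv, Ring.inverse_eq_inv', hdetb2]
    field_simp
    linear_combination (-(b₁*b₂*(t₁*t₂)^l - r'^2*(u^2)^l)) * hss
  -- trace of Y
  have hYtr : (s⁻¹ * B2 * s⁻¹).trace
      = (a₂*b₁*(p₂*t₁)^l + a₁*b₂*(p₁*t₂)^l - 2*(r*r')*(q*u)^l)
          / (a₁*a₂*(p₁*p₂)^l - r^2*(q^2)^l) := by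
    rw [Matrix.trace_mul_comm, ← Matrix.mul_assoc, ← Matrix.mul_inv_rev, hssq]
    rw [hB1, hB2]
    rw [trace_inv_mul_sym _ _ _ _ _ _ (by rw [← hB1]; exact hdetb1ne)]
    rw [show cl*(a₁*p₁^l)*(cl*(a₂*p₂^l)) - (cl*(r*q^l))^2
        = cl^2 * (a₁*a₂*(p₁*p₂)^l - r^2*(q^2)^l) by ring]
    rw [show cl*(a₂*p₂^l)*(cl*(b₁*t₁^l)) + cl*(a₁*p₁^l)*(cl*(b₂*t₂^l))
          - 2*(cl*(r*q^l))*(cl*(r'*u^l))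
        = cl^2 * (a₂*b₁*(p₂*t₁)^l + a₁*b₂*(p₁*t₂)^l - 2*(r*r')*(q*u)^l) by ring]
    rw [mul_div_mul_left _ _ hcl2]
  -- symmetry of Y
  have hYsym : (s⁻¹ * B2 * s⁻¹) 0 1 = (s⁻¹ * B2 * s⁻¹) 1 0 := by
    have hb2t : B2ᵀ = B2 := by rw [hB2]; exact transpose_fin_two_sym _ _ _
    have hsinvt : (s⁻¹)ᵀ = s⁻¹ := by rw [Matrix.transpose_nonsing_inv, hstrans]
    have hYt : (s⁻¹ * B2 * s⁻¹)ᵀ = s⁻¹ * B2 * s⁻¹ := by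
      rw [Matrix.transpose_mul, Matrix.transpose_mul, hb2t, hsinvt, Matrix.mul_assoc]
    calc (s⁻¹ * B2 * s⁻¹) 0 1 = (s⁻¹ * B2 * s⁻¹)ᵀ 1 0 := (Matrix.transpose_apply _ _ _).symm
      _ = (s⁻¹ * B2 * s⁻¹) 1 0 := by rw [hYt]
  set Y := s⁻¹ * B2 * s⁻¹ with hYdef
  have t0 : Y 0 0 + Y 1 1 = (a₂*b₁*(p₂*t₁)^l + a₁*b₂*(p₁*t₂)^l - 2*(r*r')*(q*u)^l)
      / (a₁*a₂*(p₁*p₂)^l - r^2*(q^2)^l) := by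
    rw [← Matrix.trace_fin_two]; exact hYtr
  have d0 : Y 0 0 * Y 1 1 - Y 0 1 * Y 1 0
      = (b₁*b₂*(t₁*t₂)^l - r'^2*(u^2)^l) / (a₁*a₂*(p₁*p₂)^l - r^2*(q^2)^l) := by
    rw [← Matrix.det_fin_two]; exact hYdet
  have hsum : (∑ i : Fin 2, ∑ j : Fin 2, ((Y - 1) i j) ^ 2)
      = (Y 0 0 - 1)^2 + (Y 0 1)^2 + (Y 1 0)^2 + (Y 1 1 - 1)^2 := by
    simp [Fin.sum_univ_two, Matrix.sub_apply, Matrix.one_apply]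
    ring
  refine ⟨?_, ?_, ?_⟩
  · rw [hsum]
    linear_combination (Y 0 0 + Y 1 1 +
        (a₂*b₁*(p₂*t₁)^l + a₁*b₂*(p₁*t₂)^l - 2*(r*r')*(q*u)^l)
          / (a₁*a₂*(p₁*p₂)^l - r^2*(q^2)^l) - 2) * t0
      + (-2) * d0 + (Y 0 1 - Y 1 0) * hYsym
  · rw [hsum]
    rw [show (a₂*b₁*(p₂*t₁)^l + a₁*b₂*(p₁*t₂)^l - 2*(r*r')*(q*u)^l)
          / (a₁*a₂*(p₁*p₂)^l - r^2*(q^2)^l) - 2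
        = (Y 0 0 - 1) + (Y 1 1 - 1) from by linarith [t0]]
    nlinarith [sq_nonneg (Y 0 0 - Y 1 1), sq_nonneg (Y 0 1), sq_nonneg (Y 1 0)]
  · rw [hsum]
    have hPT : (b₁*b₂*(t₁*t₂)^l - r'^2*(u^2)^l) / (a₁*a₂*(p₁*p₂)^l - r^2*(q^2)^l)
        - (a₂*b₁*(p₂*t₁)^l + a₁*b₂*(p₁*t₂)^l - 2*(r*r')*(q*u)^l)
          / (a₁*a₂*(p₁*p₂)^l - r^2*(q^2)^l) + 1
        = (Y 0 0 - 1)*(Y 1 1 - 1) - Y 0 1 * Y 1 0 := by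
      linear_combination t0 - d0
    rw [hPT]
    rw [abs_le]
    constructor
    · nlinarith [sq_nonneg (Y 0 0 + Y 1 1 - 2), sq_nonneg (Y 0 1 - Y 1 0),
        sq_nonneg (Y 0 1 + Y 1 0)]
    · nlinarith [sq_nonneg (Y 0 0 - Y 1 1), sq_nonneg (Y 0 1 - Y 1 0),
        sq_nonneg (Y 0 1 + Y 1 0)]

set_option maxHeartbeats 4000000 in
private lemma bridge
    (d : ℕ) (hd : 2 ≤ d)
    {a₁ a₂ r b₁ b₂ r' p₁ p₂ q t₁ t₂ u : ℝ} {c : ℕ → ℝ}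
    (ha₁ : 0 < a₁) (ha₂ : 0 < a₂) (hb₁ : 0 < b₁) (hb₂ : 0 < b₂)
    (hr0 : 0 < r) (hr'0 : 0 < r')
    (hp₁ : 0 < p₁) (hp₂ : 0 < p₂) (ht₁ : 0 < t₁) (ht₂ : 0 < t₂)
    (hq0 : 0 < q) (hu0 : 0 < u) (hc : ∀ l, 0 < c l)
    (hq : q^2 ≤ p₁*p₂) (hu : u^2 ≤ t₁*t₂)
    (hr : r^2 < a₁*a₂) (hr' : r'^2 < b₁*b₂)
    (B1 B2 s : ℕ → Matrix (Fin 2) (Fin 2) ℝ)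
    (hB1 : ∀ l, B1 l = !![c l*(a₁*p₁^l), c l*(r*q^l); c l*(r*q^l), c l*(a₂*p₂^l)])
    (hB2 : ∀ l, B2 l = !![c l*(b₁*t₁^l), c l*(r'*u^l); c l*(r'*u^l), c l*(b₂*t₂^l)])
    (hs : ∀ l, (s l).PosDef) (hssq : ∀ l, s l * s l = B1 l) :
    Summable (fun l : ℕ => (sphHarmDim d l : ℝ) *
        ∑ i : Fin 2, ∑ j : Fin 2, (((s l)⁻¹ * B2 l * (s l)⁻¹ - 1) i j) ^ 2)
      ↔ (b₁ = a₁ ∧ b₂ = a₂ ∧ t₁ = p₁ ∧ t₂ = p₂ ∧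
          ((q^2 < p₁*p₂ ∧ u^2 < p₁*p₂) ∨ (q = u ∧ r = r'))) := by
  have hS : (0:ℝ) < p₁*p₂ := mul_pos hp₁ hp₂
  have hA0 : (0:ℝ) < a₁*a₂ - r^2 := sub_pos.2 hr
  have hqpow : ∀ l : ℕ, (q^2)^l ≤ (p₁*p₂)^l := fun l => pow_le_pow_left₀ (sq_nonneg q) hq l
  have hD_lb : ∀ l : ℕ, (a₁*a₂ - r^2) * (p₁*p₂)^l ≤ a₁*a₂*(p₁*p₂)^l - r^2*(q^2)^l := by
    intro l
    have h1 : r^2*(q^2)^l ≤ r^2*(p₁*p₂)^l :=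
      mul_le_mul_of_nonneg_left (hqpow l) (sq_nonneg r)
    nlinarith [pow_pos hS l]
  have hDpos : ∀ l : ℕ, 0 < a₁*a₂*(p₁*p₂)^l - r^2*(q^2)^l := fun l =>
    lt_of_lt_of_le (by positivity) (hD_lb l)
  have hkey := fun l => perl a₁ a₂ r b₁ b₂ r' p₁ p₂ q t₁ t₂ u (c l)
    ha₁ ha₂ hb₁ hb₂ hr0 hr'0 hp₁ hp₂ ht₁ ht₂ hq0 hu0 (hc l) l (hDpos l)
    (B1 l) (B2 l) (s l) (hB1 l) (hB2 l) (hs l) (hssq l)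
  have hF0 : ∀ l : ℕ, 0 ≤ ∑ i : Fin 2, ∑ j : Fin 2, (((s l)⁻¹ * B2 l * (s l)⁻¹ - 1) i j) ^ 2 :=
    fun l => Finset.sum_nonneg fun i _ => Finset.sum_nonneg fun j _ => sq_nonneg _
  constructor
  · intro hsum
    have h1le : ∀ l : ℕ, (1:ℝ) ≤ (sphHarmDim d l : ℝ) := fun l => by
      exact_mod_cast one_le_sphHarmDim d l hd
    have hFto : Filter.Tendsto (fun l : ℕ =>
        ∑ i : Fin 2, ∑ j : Fin 2, (((s l)⁻¹ * B2 l * (s l)⁻¹ - 1) i j) ^ 2)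
        Filter.atTop (nhds 0) := by
      apply squeeze_zero hF0 (fun l => le_mul_of_one_le_left (hF0 l) (h1le l))
        hsum.tendsto_atTop_zero
    have hTto : Filter.Tendsto (fun l : ℕ =>
        (a₂*b₁*(p₂*t₁)^l + a₁*b₂*(p₁*t₂)^l - 2*(r*r')*(q*u)^l)
          / (a₁*a₂*(p₁*p₂)^l - r^2*(q^2)^l)) Filter.atTop (nhds 2) := by
      have habs : ∀ l : ℕ, |(a₂*b₁*(p₂*t₁)^l + a₁*b₂*(p₁*t₂)^l - 2*(r*r')*(q*u)^l)
          / (a₁*a₂*(p₁*p₂)^l - r^2*(q^2)^l) - 2|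
          ≤ Real.sqrt (2 * ∑ i : Fin 2, ∑ j : Fin 2,
              (((s l)⁻¹ * B2 l * (s l)⁻¹ - 1) i j) ^ 2) :=
        fun l => Real.abs_le_sqrt (hkey l).2.1
      have hsqto : Filter.Tendsto (fun l : ℕ => Real.sqrt (2 * ∑ i : Fin 2, ∑ j : Fin 2,
          (((s l)⁻¹ * B2 l * (s l)⁻¹ - 1) i j) ^ 2)) Filter.atTop (nhds 0) := by
        have h2 := hFto.const_mul (2:ℝ)
        rw [mul_zero] at h2
        have h3 := h2.sqrt
        rwa [Real.sqrt_zero] at h3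
      have h3 : Filter.Tendsto (fun l : ℕ =>
          (a₂*b₁*(p₂*t₁)^l + a₁*b₂*(p₁*t₂)^l - 2*(r*r')*(q*u)^l)
            / (a₁*a₂*(p₁*p₂)^l - r^2*(q^2)^l) - 2) Filter.atTop (nhds 0) :=
        squeeze_zero_norm (fun l => by rw [Real.norm_eq_abs]; exact habs l) hsqto
      have h4 := h3.add_const 2
      norm_num at h4
      exact h4
    have hPto : Filter.Tendsto (fun l : ℕ =>
        (b₁*b₂*(t₁*t₂)^l - r'^2*(u^2)^l) / (a₁*a₂*(p₁*p₂)^l - r^2*(q^2)^l))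
        Filter.atTop (nhds 1) := by
      have h5 : Filter.Tendsto (fun l : ℕ =>
          (b₁*b₂*(t₁*t₂)^l - r'^2*(u^2)^l) / (a₁*a₂*(p₁*p₂)^l - r^2*(q^2)^l)
          - (a₂*b₁*(p₂*t₁)^l + a₁*b₂*(p₁*t₂)^l - 2*(r*r')*(q*u)^l)
            / (a₁*a₂*(p₁*p₂)^l - r^2*(q^2)^l) + 1) Filter.atTop (nhds 0) :=
        squeeze_zero_norm (fun l => by rw [Real.norm_eq_abs]; exact (hkey l).2.2) hFto
      have h6 := (h5.add hTto).sub_const 1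
      have h7 : ∀ l : ℕ, ((b₁*b₂*(t₁*t₂)^l - r'^2*(u^2)^l) / (a₁*a₂*(p₁*p₂)^l - r^2*(q^2)^l)
          - (a₂*b₁*(p₂*t₁)^l + a₁*b₂*(p₁*t₂)^l - 2*(r*r')*(q*u)^l)
            / (a₁*a₂*(p₁*p₂)^l - r^2*(q^2)^l) + 1
          + (a₂*b₁*(p₂*t₁)^l + a₁*b₂*(p₁*t₂)^l - 2*(r*r')*(q*u)^l)
            / (a₁*a₂*(p₁*p₂)^l - r^2*(q^2)^l)) - 1
          = (b₁*b₂*(t₁*t₂)^l - r'^2*(u^2)^l) / (a₁*a₂*(p₁*p₂)^l - r^2*(q^2)^l) := by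
        intro l; ring
      have h8 := h6.congr h7
      norm_num at h8
      exact h8
    exact core ha₁ ha₂ hb₁ hb₂ hr0 hr'0 hp₁ hp₂ ht₁ ht₂ hq0 hu0 hq hu hr hr' hTto hPto
  · rintro ⟨hba1, hba2, htp1, htp2, hdisj⟩
    subst hba1 hba2 htp1 htp2
    rcases hdisj with ⟨hqlt, hult⟩ | ⟨hqu, hrr⟩
    · -- geometric decay case
      have hM0 : 0 < max q u := lt_max_of_lt_left hq0
      have hMS : (max q u)^2 < t₁*t₂ := by
        rcases max_cases q u with ⟨h,_⟩|⟨h,_⟩ <;> rw [h] <;> assumption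
      have hκ0 : 0 < (max q u)^2/(t₁*t₂) := by positivity
      have hκ1 : (max q u)^2/(t₁*t₂) < 1 := (div_lt_one hS).2 hMS
      have hqM : q^2 ≤ (max q u)^2 := pow_le_pow_left₀ hq0.le (le_max_left q u) 2
      have huM : u^2 ≤ (max q u)^2 := pow_le_pow_left₀ hu0.le (le_max_right q u) 2
      have hquM : q*u ≤ (max q u)^2 := by
        have h1 := mul_le_mul (le_max_left q u) (le_max_right q u) hu0.le hM0.le
        rw [pow_two]
        exact h1
      have pq : ∀ l : ℕ, (q^2)^l ≤ ((max q u)^2)^l :=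
        fun l => pow_le_pow_left₀ (sq_nonneg q) hqM l
      have pu : ∀ l : ℕ, (u^2)^l ≤ ((max q u)^2)^l :=
        fun l => pow_le_pow_left₀ (sq_nonneg u) huM l
      have pqu : ∀ l : ℕ, (q*u)^l ≤ ((max q u)^2)^l :=
        fun l => pow_le_pow_left₀ (by positivity) hquM l
      have hGle : ∀ l : ℕ,
          ((b₂*b₁*(t₂*t₁)^l + b₁*b₂*(t₁*t₂)^l - 2*(r*r')*(q*u)^l) /
              (b₁*b₂*(t₁*t₂)^l - r^2*(q^2)^l) - 2)^2
            - 2*((b₁*b₂*(t₁*t₂)^l - r'^2*(u^2)^l) / (b₁*b₂*(t₁*t₂)^l - r^2*(q^2)^l)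
              - (b₂*b₁*(t₂*t₁)^l + b₁*b₂*(t₁*t₂)^l - 2*(r*r')*(q*u)^l) /
                (b₁*b₂*(t₁*t₂)^l - r^2*(q^2)^l) + 1)
          ≤ (((2*r^2+2*(r*r'))/(b₁*b₂-r^2))^2 + 2*((r^2+r'^2)/(b₁*b₂-r^2)))
              * ((max q u)^2/(t₁*t₂))^l := by
        intro l
        have hD := hDpos l
        have hDne : b₁*b₂*(t₁*t₂)^l - r^2*(q^2)^l ≠ 0 := hD.ne'
        have e1 : (b₂*b₁*(t₂*t₁)^l + b₁*b₂*(t₁*t₂)^l - 2*(r*r')*(q*u)^l) /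
            (b₁*b₂*(t₁*t₂)^l - r^2*(q^2)^l) - 2
            = (2*r^2*(q^2)^l - 2*(r*r')*(q*u)^l)/(b₁*b₂*(t₁*t₂)^l - r^2*(q^2)^l) := by
          rw [eq_div_iff hDne, sub_mul, div_mul_cancel₀ _ hDne]
          ring
        have e2 : (b₁*b₂*(t₁*t₂)^l - r'^2*(u^2)^l) / (b₁*b₂*(t₁*t₂)^l - r^2*(q^2)^l)
            - (b₂*b₁*(t₂*t₁)^l + b₁*b₂*(t₁*t₂)^l - 2*(r*r')*(q*u)^l) /
              (b₁*b₂*(t₁*t₂)^l - r^2*(q^2)^l) + 1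
            = -((r*q^l - r'*u^l)^2)/(b₁*b₂*(t₁*t₂)^l - r^2*(q^2)^l) := by
          field_simp
          ring
        rw [e1, e2]
        have m1 : 2*r^2*(q^2)^l ≤ 2*r^2*((max q u)^2)^l :=
          mul_le_mul_of_nonneg_left (pq l) (by positivity)
        have m2 : 2*(r*r')*(q*u)^l ≤ 2*(r*r')*((max q u)^2)^l :=
          mul_le_mul_of_nonneg_left (pqu l) (by positivity)
        have m3 : (0:ℝ) ≤ 2*r^2*(q^2)^l := by positivity
        have m4 : (0:ℝ) ≤ 2*(r*r')*(q*u)^l := by positivity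
        have habsX : |2*r^2*(q^2)^l - 2*(r*r')*(q*u)^l|
            ≤ (2*r^2 + 2*(r*r'))*((max q u)^2)^l := by
          rw [abs_le]
          constructor
          · linarith only [m1, m2, m3, m4]
          · linarith only [m1, m2, m3, m4]
        have heq1 : ((2*r^2 + 2*(r*r'))*((max q u)^2)^l)
            / ((b₁*b₂-r^2)*(t₁*t₂)^l)
            = ((2*r^2+2*(r*r'))/(b₁*b₂-r^2)) * ((max q u)^2/(t₁*t₂))^l := by
          rw [div_pow]
          field_simp
          try ring
        have habsXD : |(2*r^2*(q^2)^l - 2*(r*r')*(q*u)^l)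
            /(b₁*b₂*(t₁*t₂)^l - r^2*(q^2)^l)|
            ≤ ((2*r^2+2*(r*r'))/(b₁*b₂-r^2)) * ((max q u)^2/(t₁*t₂))^l := by
          rw [abs_div, abs_of_pos hD, ← heq1]
          exact div_le_div₀ (by positivity) habsX (by positivity) (hD_lb l)
        have hsq1 : ((2*r^2*(q^2)^l - 2*(r*r')*(q*u)^l)
            /(b₁*b₂*(t₁*t₂)^l - r^2*(q^2)^l))^2
            ≤ (((2*r^2+2*(r*r'))/(b₁*b₂-r^2)) * ((max q u)^2/(t₁*t₂))^l)^2 := by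
          rw [← sq_abs]
          exact pow_le_pow_left₀ (abs_nonneg _) habsXD 2
        have mq : r^2*(q^2)^l ≤ r^2*((max q u)^2)^l :=
          mul_le_mul_of_nonneg_left (pq l) (sq_nonneg r)
        have mu : r'^2*(u^2)^l ≤ r'^2*((max q u)^2)^l :=
          mul_le_mul_of_nonneg_left (pu l) (sq_nonneg r')
        have hcross : (0:ℝ) ≤ (r*r')*(q*u)^l := by positivity
        have eq_q : (q^2)^l = (q^l)^2 := by rw [← pow_mul, ← pow_mul, mul_comm]
        have eq_u : (u^2)^l = (u^l)^2 := by rw [← pow_mul, ← pow_mul, mul_comm]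
        have eq_qu : (q*u)^l = q^l * u^l := mul_pow q u l
        have hnum2 : (r*q^l - r'*u^l)^2 ≤ (r^2+r'^2)*((max q u)^2)^l := by
          rw [eq_q] at mq
          rw [eq_u] at mu
          rw [eq_qu] at hcross
          have expand : (r*q^l - r'*u^l)^2
              = r^2*(q^l)^2 - 2*((r*r')*(q^l*u^l)) + r'^2*(u^l)^2 := by ring
          rw [expand]
          linarith only [mq, mu, hcross]
        have heq2 : ((r^2+r'^2)*((max q u)^2)^l) / ((b₁*b₂-r^2)*(t₁*t₂)^l)
            = ((r^2+r'^2)/(b₁*b₂-r^2)) * ((max q u)^2/(t₁*t₂))^l := by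
          rw [div_pow]
          field_simp
          try ring
        have h2 : (r*q^l - r'*u^l)^2/(b₁*b₂*(t₁*t₂)^l - r^2*(q^2)^l)
            ≤ ((r^2+r'^2)/(b₁*b₂-r^2)) * ((max q u)^2/(t₁*t₂))^l := by
          rw [← heq2]
          exact div_le_div₀ (by positivity) hnum2 (by positivity) (hD_lb l)
        have hκl1 : ((max q u)^2/(t₁*t₂))^l ≤ 1 := pow_le_one₀ hκ0.le hκ1.le
        have hκl0 : (0:ℝ) ≤ ((max q u)^2/(t₁*t₂))^l := (pow_pos hκ0 l).le
        have hsqκ : (((max q u)^2/(t₁*t₂))^l)^2 ≤ ((max q u)^2/(t₁*t₂))^l := by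
          calc (((max q u)^2/(t₁*t₂))^l)^2
              = ((max q u)^2/(t₁*t₂))^l * ((max q u)^2/(t₁*t₂))^l := by rw [pow_two]
            _ ≤ ((max q u)^2/(t₁*t₂))^l * 1 := mul_le_mul_of_nonneg_left hκl1 hκl0
            _ = ((max q u)^2/(t₁*t₂))^l := mul_one _
        have hfin1 : (((2*r^2+2*(r*r'))/(b₁*b₂-r^2)) * ((max q u)^2/(t₁*t₂))^l)^2
            ≤ ((2*r^2+2*(r*r'))/(b₁*b₂-r^2))^2 * ((max q u)^2/(t₁*t₂))^l := by
          calc (((2*r^2+2*(r*r'))/(b₁*b₂-r^2)) * ((max q u)^2/(t₁*t₂))^l)^2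
              = ((2*r^2+2*(r*r'))/(b₁*b₂-r^2))^2 * (((max q u)^2/(t₁*t₂))^l)^2 := by ring
            _ ≤ ((2*r^2+2*(r*r'))/(b₁*b₂-r^2))^2 * ((max q u)^2/(t₁*t₂))^l :=
              mul_le_mul_of_nonneg_left hsqκ (by positivity)
        have hneg : -((r*q^l - r'*u^l)^2)/(b₁*b₂*(t₁*t₂)^l - r^2*(q^2)^l)
            = -((r*q^l - r'*u^l)^2/(b₁*b₂*(t₁*t₂)^l - r^2*(q^2)^l)) := by
          rw [neg_div]
        rw [hneg]
        have t1 := le_trans hsq1 hfin1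
        have goal_eq : ((2*r^2*(q^2)^l - 2*(r*r')*(q*u)^l)
            /(b₁*b₂*(t₁*t₂)^l - r^2*(q^2)^l))^2
            - 2*(-((r*q^l - r'*u^l)^2/(b₁*b₂*(t₁*t₂)^l - r^2*(q^2)^l)))
            = ((2*r^2*(q^2)^l - 2*(r*r')*(q*u)^l)
            /(b₁*b₂*(t₁*t₂)^l - r^2*(q^2)^l))^2
            + 2*((r*q^l - r'*u^l)^2/(b₁*b₂*(t₁*t₂)^l - r^2*(q^2)^l)) := by ring
        rw [goal_eq]
        calc ((2*r^2*(q^2)^l - 2*(r*r')*(q*u)^l)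
            /(b₁*b₂*(t₁*t₂)^l - r^2*(q^2)^l))^2
            + 2*((r*q^l - r'*u^l)^2/(b₁*b₂*(t₁*t₂)^l - r^2*(q^2)^l))
            ≤ ((2*r^2+2*(r*r'))/(b₁*b₂-r^2))^2 * ((max q u)^2/(t₁*t₂))^l
              + 2*(((r^2+r'^2)/(b₁*b₂-r^2)) * ((max q u)^2/(t₁*t₂))^l) := by
              have h2' : 2*((r*q^l - r'*u^l)^2/(b₁*b₂*(t₁*t₂)^l - r^2*(q^2)^l))
                  ≤ 2*(((r^2+r'^2)/(b₁*b₂-r^2)) * ((max q u)^2/(t₁*t₂))^l) := by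
                linarith only [h2]
              linarith only [t1, h2']
          _ = (((2*r^2+2*(r*r'))/(b₁*b₂-r^2))^2 + 2*((r^2+r'^2)/(b₁*b₂-r^2)))
              * ((max q u)^2/(t₁*t₂))^l := by ring
      refine Summable.of_nonneg_of_le
        (fun l => mul_nonneg (Nat.cast_nonneg _) (hF0 l)) (fun l => ?_)
        ((summable_sph_mul_geom d hd hκ0 hκ1).mul_left
          (((2*r^2+2*(r*r'))/(b₁*b₂-r^2))^2 + 2*((r^2+r'^2)/(b₁*b₂-r^2))))
      calc (sphHarmDim d l : ℝ) *
            ∑ i : Fin 2, ∑ j : Fin 2, (((s l)⁻¹ * B2 l * (s l)⁻¹ - 1) i j) ^ 2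
          ≤ (sphHarmDim d l : ℝ) *
            ((((2*r^2+2*(r*r'))/(b₁*b₂-r^2))^2 + 2*((r^2+r'^2)/(b₁*b₂-r^2)))
              * ((max q u)^2/(t₁*t₂))^l) := by
            apply mul_le_mul_of_nonneg_left _ (Nat.cast_nonneg _)
            rw [(hkey l).1]
            exact hGle l
        _ = (((2*r^2+2*(r*r'))/(b₁*b₂-r^2))^2 + 2*((r^2+r'^2)/(b₁*b₂-r^2)))
            * ((sphHarmDim d l : ℝ) * ((max q u)^2/(t₁*t₂))^l) := by ring
    · -- identical case
      subst hqu hrr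
      have hBB : ∀ l, B2 l = B1 l := fun l => by rw [hB1 l, hB2 l]
      have hzero : ∀ l, ((s l)⁻¹ * B2 l * (s l)⁻¹ - 1) = 0 := by
        intro l
        have hdets : IsUnit (s l).det := isUnit_iff_ne_zero.2 (hs l).det_pos.ne'
        rw [hBB l, ← hssq l, ← Matrix.mul_assoc, Matrix.nonsing_inv_mul _ hdets,
          Matrix.one_mul, Matrix.mul_nonsing_inv _ hdets, sub_self]
      have hfun : (fun l : ℕ => (sphHarmDim d l : ℝ) *
          ∑ i : Fin 2, ∑ j : Fin 2, (((s l)⁻¹ * B2 l * (s l)⁻¹ - 1) i j) ^ 2)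
          = fun _ => (0:ℝ) := by
        funext l
        rw [hzero l]
        simp
      rw [hfun]
      exact summable_zero
private lemma mk2_congr {w x y z w' x' y' z' : ℝ} (h1 : w = w') (h2 : x = x')
    (h3 : y = y') (h4 : z = z') :
    (!![w,x;y,z] : Matrix (Fin 2) (Fin 2) ℝ) = !![w',x';y',z'] := by
  rw [h1, h2, h3, h4]

private lemma rho_sq_bound {d : ℕ} (hd : 2 ≤ d) {x y z ρ σ₁ σ₂ : ℝ}
    (hσ₁ : 0 < σ₁) (hσ₂ : 0 < σ₂)
    (hx : 0 < 1 - x) (hy : 0 < 1 - y) (hz : 0 < 1 - z) (hρ0 : 0 < ρ)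
    (hb : ρ < ((1 - x) * (1 - y) / (1 - z) ^ 2) ^ (((d : ℝ) - 1) / 2)) :
    (ρ*σ₁*σ₂*(1-z)^(d-1))^2 < (σ₁^2*(1-x)^(d-1))*(σ₂^2*(1-y)^(d-1)) := by
  have hW : (0:ℝ) < (1 - x) * (1 - y) / (1 - z) ^ 2 := by positivity
  have h1 : ρ^2 < (((1 - x) * (1 - y) / (1 - z) ^ 2) ^ (((d : ℝ) - 1) / 2))^2 :=
    pow_lt_pow_left₀ hb hρ0.le two_ne_zero
  have h2 : (((1 - x) * (1 - y) / (1 - z) ^ 2) ^ (((d : ℝ) - 1) / 2))^2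
      = ((1 - x) * (1 - y) / (1 - z) ^ 2) ^ ((d:ℝ) - 1) := by
    rw [← Real.rpow_natCast (((1 - x) * (1 - y) / (1 - z) ^ 2) ^ (((d : ℝ) - 1) / 2)) 2,
      ← Real.rpow_mul hW.le]
    norm_num
  have h3 : ((1 - x) * (1 - y) / (1 - z) ^ 2) ^ ((d:ℝ) - 1)
      = ((1 - x) * (1 - y) / (1 - z) ^ 2) ^ (d - 1 : ℕ) := by
    rw [show ((d:ℝ) - 1) = ((d - 1 : ℕ) : ℝ) by
      rw [Nat.cast_sub (by omega)]; norm_num]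
    rw [Real.rpow_natCast]
  have h4 : ρ^2 < ((1 - x) * (1 - y))^(d-1) / ((1 - z) ^ 2)^(d-1) := by
    rw [← div_pow]
    rw [h2, h3] at h1
    exact h1
  have h5 : ρ^2 * ((1 - z)^2)^(d-1) < ((1 - x) * (1 - y))^(d-1) := by
    rw [lt_div_iff₀ (by positivity)] at h4
    exact h4
  have hzz : ((1-z)^(d-1))^2 = ((1-z)^2)^(d-1) := pow_right_comm _ _ _
  calc (ρ*σ₁*σ₂*(1-z)^(d-1))^2
      = (σ₁^2*σ₂^2) * (ρ^2 * (((1-z)^(d-1))^2)) := by ring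
    _ = (σ₁^2*σ₂^2) * (ρ^2 * ((1 - z)^2)^(d-1)) := by rw [hzz]
    _ < (σ₁^2*σ₂^2) * ((1 - x) * (1 - y))^(d-1) :=
        mul_lt_mul_of_pos_left h5 (by positivity)
    _ = (σ₁^2*(1-x)^(d-1))*(σ₂^2*(1-y)^(d-1)) := by rw [mul_pow]; ring


set_option maxHeartbeats 1000000 in
/-- Equivalence criterion for two bivariate multiquadratic models on the
`d`-sphere.  Field `j = 1` has parameters `(σ₁, σ₂, α₁₁, α₂₂, α₁₂, ρ)` and field `j = 2`
has parameters `(τ₁, τ₂, β₁₁, β₂₂, β₁₂, ϱ)`, each satisfying the validity conditions; the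
matrices `b1 l`, `b2 l` are the corresponding matrix-valued `d`-Schoenberg coefficients and
`s l` is the symmetric positive definite square root of `b1 l` (so `(b1 l)^{-1/2} = (s l)⁻¹`).
Then `∑_l h(l) ‖(b1 l)^{-1/2} (b2 l) (b1 l)^{-1/2} − I‖_F² < ∞` iff the marginal parameters
coincide (`σᵢ = τᵢ`, `αᵢᵢ = βᵢᵢ`) and either both cross parameters are strictly below
`√(α₁₁ α₂₂)`, or the cross parameters coincide (`α₁₂ = β₁₂` and `ρ = ϱ`). -/
theorem multiquadratic_equivalence_iff
    (d : ℕ) (hd : 2 ≤ d)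
    (σ₁ σ₂ α₁₁ α₂₂ α₁₂ ρ : ℝ)
    (τ₁ τ₂ β₁₁ β₂₂ β₁₂ ϱ : ℝ)
    (hσ₁ : 0 < σ₁) (hσ₂ : 0 < σ₂) (hτ₁ : 0 < τ₁) (hτ₂ : 0 < τ₂)
    (hα₁₁ : α₁₁ ∈ Set.Ioo (0 : ℝ) 1) (hα₂₂ : α₂₂ ∈ Set.Ioo (0 : ℝ) 1)
    (hα₁₂ : α₁₂ ∈ Set.Ioo (0 : ℝ) 1) (hρ : ρ ∈ Set.Ioo (0 : ℝ) 1)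
    (hβ₁₁ : β₁₁ ∈ Set.Ioo (0 : ℝ) 1) (hβ₂₂ : β₂₂ ∈ Set.Ioo (0 : ℝ) 1)
    (hβ₁₂ : β₁₂ ∈ Set.Ioo (0 : ℝ) 1) (hϱ : ϱ ∈ Set.Ioo (0 : ℝ) 1)
    (hcross₁ : α₁₂ ≤ Real.sqrt (α₁₁ * α₂₂))
    (hcross₂ : β₁₂ ≤ Real.sqrt (β₁₁ * β₂₂))
    (hρbound : ρ < ((1 - α₁₁) * (1 - α₂₂) / (1 - α₁₂) ^ 2) ^ (((d : ℝ) - 1) / 2))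
    (hϱbound : ϱ < ((1 - β₁₁) * (1 - β₂₂) / (1 - β₁₂) ^ 2) ^ (((d : ℝ) - 1) / 2))
    (b1 b2 : ℕ → Matrix (Fin 2) (Fin 2) ℝ)
    (hb1 : ∀ l : ℕ, b1 l =
      !![σ₁ ^ 2 * (Nat.choose (d + l - 2) l) * α₁₁ ^ l * (1 - α₁₁) ^ (d - 1),
         ρ * σ₁ * σ₂ * (Nat.choose (d + l - 2) l) * α₁₂ ^ l * (1 - α₁₂) ^ (d - 1);
         ρ * σ₁ * σ₂ * (Nat.choose (d + l - 2) l) * α₁₂ ^ l * (1 - α₁₂) ^ (d - 1),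
         σ₂ ^ 2 * (Nat.choose (d + l - 2) l) * α₂₂ ^ l * (1 - α₂₂) ^ (d - 1)])
    (hb2 : ∀ l : ℕ, b2 l =
      !![τ₁ ^ 2 * (Nat.choose (d + l - 2) l) * β₁₁ ^ l * (1 - β₁₁) ^ (d - 1),
         ϱ * τ₁ * τ₂ * (Nat.choose (d + l - 2) l) * β₁₂ ^ l * (1 - β₁₂) ^ (d - 1);
         ϱ * τ₁ * τ₂ * (Nat.choose (d + l - 2) l) * β₁₂ ^ l * (1 - β₁₂) ^ (d - 1),
         τ₂ ^ 2 * (Nat.choose (d + l - 2) l) * β₂₂ ^ l * (1 - β₂₂) ^ (d - 1)])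
    (s : ℕ → Matrix (Fin 2) (Fin 2) ℝ)
    (hs : ∀ l, (s l).PosDef)
    (hssq : ∀ l, s l * s l = b1 l) :
    Summable (fun l : ℕ => (sphHarmDim d l : ℝ) *
        ∑ i : Fin 2, ∑ j : Fin 2, (((s l)⁻¹ * b2 l * (s l)⁻¹ - 1) i j) ^ 2)
      ↔ (σ₁ = τ₁ ∧ σ₂ = τ₂ ∧ α₁₁ = β₁₁ ∧ α₂₂ = β₂₂ ∧
          ((α₁₂ < Real.sqrt (α₁₁ * α₂₂) ∧ β₁₂ < Real.sqrt (α₁₁ * α₂₂)) ∨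
            (α₁₂ = β₁₂ ∧ ρ = ϱ))) := by
  obtain ⟨hα₁₁0, hα₁₁1⟩ := hα₁₁
  obtain ⟨hα₂₂0, hα₂₂1⟩ := hα₂₂
  obtain ⟨hα₁₂0, hα₁₂1⟩ := hα₁₂
  obtain ⟨hρ0, hρ1⟩ := hρ
  obtain ⟨hβ₁₁0, hβ₁₁1⟩ := hβ₁₁
  obtain ⟨hβ₂₂0, hβ₂₂1⟩ := hβ₂₂
  obtain ⟨hβ₁₂0, hβ₁₂1⟩ := hβ₁₂
  obtain ⟨hϱ0, hϱ1⟩ := hϱ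
  have e₁₁ : (0:ℝ) < 1 - α₁₁ := by linarith
  have e₂₂ : (0:ℝ) < 1 - α₂₂ := by linarith
  have e₁₂ : (0:ℝ) < 1 - α₁₂ := by linarith
  have f₁₁ : (0:ℝ) < 1 - β₁₁ := by linarith
  have f₂₂ : (0:ℝ) < 1 - β₂₂ := by linarith
  have f₁₂ : (0:ℝ) < 1 - β₁₂ := by linarith
  have hc : ∀ l : ℕ, (0:ℝ) < ((Nat.choose (d + l - 2) l : ℕ) : ℝ) := fun l => by
    have : 0 < Nat.choose (d + l - 2) l := Nat.choose_pos (by omega)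
    exact_mod_cast this
  have hq2 : α₁₂^2 ≤ α₁₁*α₂₂ := by
    nlinarith [hcross₁, Real.sq_sqrt (mul_pos hα₁₁0 hα₂₂0).le,
      Real.sqrt_nonneg (α₁₁*α₂₂)]
  have hu2 : β₁₂^2 ≤ β₁₁*β₂₂ := by
    nlinarith [hcross₂, Real.sq_sqrt (mul_pos hβ₁₁0 hβ₂₂0).le,
      Real.sqrt_nonneg (β₁₁*β₂₂)]
  have hr2 : (ρ*σ₁*σ₂*(1-α₁₂)^(d-1))^2
      < (σ₁^2*(1-α₁₁)^(d-1))*(σ₂^2*(1-α₂₂)^(d-1)) :=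
    rho_sq_bound hd hσ₁ hσ₂ e₁₁ e₂₂ e₁₂ hρ0 hρbound
  have hr2' : (ϱ*τ₁*τ₂*(1-β₁₂)^(d-1))^2
      < (τ₁^2*(1-β₁₁)^(d-1))*(τ₂^2*(1-β₂₂)^(d-1)) :=
    rho_sq_bound hd hτ₁ hτ₂ f₁₁ f₂₂ f₁₂ hϱ0 hϱbound
  have hB1 : ∀ l : ℕ, b1 l =
      !![((Nat.choose (d + l - 2) l : ℕ) : ℝ)*((σ₁^2*(1-α₁₁)^(d-1))*α₁₁^l),
         ((Nat.choose (d + l - 2) l : ℕ) : ℝ)*((ρ*σ₁*σ₂*(1-α₁₂)^(d-1))*α₁₂^l);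
         ((Nat.choose (d + l - 2) l : ℕ) : ℝ)*((ρ*σ₁*σ₂*(1-α₁₂)^(d-1))*α₁₂^l),
         ((Nat.choose (d + l - 2) l : ℕ) : ℝ)*((σ₂^2*(1-α₂₂)^(d-1))*α₂₂^l)] := fun l => by
    rw [hb1 l]
    exact mk2_congr (by ring) (by ring) (by ring) (by ring)
  have hB2 : ∀ l : ℕ, b2 l =
      !![((Nat.choose (d + l - 2) l : ℕ) : ℝ)*((τ₁^2*(1-β₁₁)^(d-1))*β₁₁^l),
         ((Nat.choose (d + l - 2) l : ℕ) : ℝ)*((ϱ*τ₁*τ₂*(1-β₁₂)^(d-1))*β₁₂^l);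
         ((Nat.choose (d + l - 2) l : ℕ) : ℝ)*((ϱ*τ₁*τ₂*(1-β₁₂)^(d-1))*β₁₂^l),
         ((Nat.choose (d + l - 2) l : ℕ) : ℝ)*((τ₂^2*(1-β₂₂)^(d-1))*β₂₂^l)] := fun l => by
    rw [hb2 l]
    exact mk2_congr (by ring) (by ring) (by ring) (by ring)
  have main := bridge d hd
    (by positivity : (0:ℝ) < σ₁^2*(1-α₁₁)^(d-1))
    (by positivity : (0:ℝ) < σ₂^2*(1-α₂₂)^(d-1))
    (by positivity : (0:ℝ) < τ₁^2*(1-β₁₁)^(d-1))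
    (by positivity : (0:ℝ) < τ₂^2*(1-β₂₂)^(d-1))
    (by positivity : (0:ℝ) < ρ*σ₁*σ₂*(1-α₁₂)^(d-1))
    (by positivity : (0:ℝ) < ϱ*τ₁*τ₂*(1-β₁₂)^(d-1))
    hα₁₁0 hα₂₂0 hβ₁₁0 hβ₂₂0 hα₁₂0 hβ₁₂0 hc hq2 hu2 hr2 hr2'
    b1 b2 s hB1 hB2 hs hssq
  rw [main]
  constructor
  · rintro ⟨hb1e, hb2e, ht1e, ht2e, hdisj⟩
    rw [ht1e] at hb1e
    rw [ht2e] at hb2e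
    have hτσ1 : τ₁^2 = σ₁^2 := mul_right_cancel₀ (pow_ne_zero _ e₁₁.ne') hb1e
    have hτσ2 : τ₂^2 = σ₂^2 := mul_right_cancel₀ (pow_ne_zero _ e₂₂.ne') hb2e
    have hσ1 : σ₁ = τ₁ := by
      have hfac : (σ₁ - τ₁)*(σ₁ + τ₁) = 0 := by linear_combination -hτσ1
      rcases mul_eq_zero.mp hfac with h | h
      · linarith
      · linarith
    have hσ2 : σ₂ = τ₂ := by
      have hfac : (σ₂ - τ₂)*(σ₂ + τ₂) = 0 := by linear_combination -hτσ2
      rcases mul_eq_zero.mp hfac with h | h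
      · linarith
      · linarith
    refine ⟨hσ1, hσ2, ht1e.symm, ht2e.symm, ?_⟩
    rcases hdisj with ⟨h1, h2⟩ | ⟨h1, h2⟩
    · exact Or.inl ⟨(Real.lt_sqrt hα₁₂0.le).2 h1, (Real.lt_sqrt hβ₁₂0.le).2 h2⟩
    · refine Or.inr ⟨h1, ?_⟩
      rw [← h1, ← hσ1, ← hσ2] at h2
      have h3 : ρ * (σ₁*σ₂*(1-α₁₂)^(d-1)) = ϱ * (σ₁*σ₂*(1-α₁₂)^(d-1)) := by
        linear_combination h2
      exact mul_right_cancel₀ (by positivity : (0:ℝ) < σ₁*σ₂*(1-α₁₂)^(d-1)).ne' h3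
  · rintro ⟨hσ1, hσ2, hα1, hα2, hdisj⟩
    refine ⟨by rw [← hσ1, ← hα1], by rw [← hσ2, ← hα2], hα1.symm, hα2.symm, ?_⟩
    rcases hdisj with ⟨h1, h2⟩ | ⟨h1, h2⟩
    · exact Or.inl ⟨(Real.lt_sqrt hα₁₂0.le).1 h1, (Real.lt_sqrt hβ₁₂0.le).1 h2⟩
    · refine Or.inr ⟨h1, ?_⟩
      rw [hσ1, hσ2, h1, h2]
end

section
/- Let σ₁, σ₂, α₁, α₂, ν₁, ν₂ be strictly positive real numbers. Then the double series Σ_{l=0}^∞ Σ_{k=0}^∞ (2l+1) · ( (σ₂/σ₁)² · (α₁ + k² + l²)^{ν₁ + 1/2} / (α₂ + k² + l²)^{ν₂ + 1/2} − 1 )² converges if and only if σ₁ = σ₂ and ν₁ = ν₂. -/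
open Filter Real

lemma pow_sub_one_abs (n : ℕ) (t : ℝ) (ht : 0 ≤ t) :
    |t ^ n - 1| ≤ n * (max 1 t) ^ n * |t - 1| := by
  induction n with
  | zero => simp
  | succ n ih =>
    have hM : (1:ℝ) ≤ max 1 t := le_max_left _ _
    have htM : t ≤ max 1 t := le_max_right _ _
    have hMn : (1:ℝ) ≤ (max 1 t) ^ n := one_le_pow₀ hM
    have key : t ^ (n+1) - 1 = t * (t ^ n - 1) + (t - 1) := by ring
    have habs : |t ^ (n+1) - 1| ≤ t * |t ^ n - 1| + |t - 1| := by
      rw [key]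
      calc |t * (t ^ n - 1) + (t - 1)| ≤ |t * (t ^ n - 1)| + |t - 1| := abs_add_le _ _
        _ = t * |t ^ n - 1| + |t - 1| := by rw [abs_mul, abs_of_nonneg ht]
    have h1 : t * |t ^ n - 1| ≤ (max 1 t) * (n * (max 1 t) ^ n * |t - 1|) :=
      mul_le_mul htM ih (abs_nonneg _) (by linarith)
    have h2 : (max 1 t) * (n * (max 1 t) ^ n * |t - 1|) = n * (max 1 t) ^ (n+1) * |t-1| := by
      ring
    have h3 : |t - 1| ≤ (max 1 t) ^ (n+1) * |t - 1| := by
      nlinarith [abs_nonneg (t-1), one_le_pow₀ hM (n := n+1)]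
    push_cast
    nlinarith [abs_nonneg (t ^ (n+1) - 1)]

lemma rpow_sub_one_abs {t : ℝ} (ht : 0 < t) {a : ℝ} (ha : 0 ≤ a) (n : ℕ) (han : a ≤ n) :
    |t ^ a - 1| ≤ |t ^ n - 1| := by
  rcases le_total 1 t with h1 | h1
  · have h2 : t ^ a ≤ t ^ (n : ℝ) := Real.rpow_le_rpow_of_exponent_le h1 han
    rw [Real.rpow_natCast] at h2
    have h3 : (1:ℝ) ≤ t ^ a := by
      have := Real.rpow_le_rpow_of_exponent_le h1 ha
      simpa using this
    rw [abs_of_nonneg (by linarith), abs_of_nonneg (by linarith)]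
    linarith
  · have h2 : t ^ (n : ℝ) ≤ t ^ a := Real.rpow_le_rpow_of_exponent_ge ht h1 han
    rw [Real.rpow_natCast] at h2
    have h3 : t ^ a ≤ 1 := by
      have := Real.rpow_le_rpow_of_exponent_ge ht h1 ha
      simpa using this
    rw [abs_of_nonpos (by linarith), abs_of_nonpos (by linarith)]
    linarith

lemma gm_le {u v w : ℝ} (hu : 0 < u) (hv : 0 < v) (huw : u ≤ w) (hvw : v ≤ w)
    {p q : ℝ} (hp : 0 ≤ p) (hq : 0 ≤ q) (hpq : p + q = 1) : u ^ p * v ^ q ≤ w := by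
  have hw : 0 < w := hu.trans_le huw
  calc u ^ p * v ^ q ≤ w ^ p * w ^ q :=
        mul_le_mul (Real.rpow_le_rpow hu.le huw hp) (Real.rpow_le_rpow hv.le hvw hq)
          (by positivity) (by positivity)
    _ = w ^ (p + q) := (Real.rpow_add hw _ _).symm
    _ = w := by rw [hpq, Real.rpow_one]

lemma sum_aux1 {α : ℝ} (hα : 0 < α) :
    Summable (fun l : ℕ => (2 * (l:ℝ) + 1) * (α + (l:ℝ)^2) ^ (-(5/4) : ℝ)) := by
  rw [← summable_nat_add_iff 1]
  have hs : Summable (fun l : ℕ => 3 * (((l+1 : ℕ)):ℝ) ^ (-(3/2) : ℝ)) := by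
    apply Summable.mul_left
    exact (summable_nat_add_iff 1).mpr (Real.summable_nat_rpow.mpr (by norm_num))
  apply Summable.of_nonneg_of_le _ _ hs
  · intro l
    positivity
  · intro l
    have hx : (0:ℝ) < ((l+1:ℕ):ℝ) := by positivity
    have h1 : (2 * ((l+1:ℕ):ℝ) + 1) ≤ 3 * ((l+1:ℕ):ℝ) := by
      push_cast; linarith [Nat.cast_nonneg (α := ℝ) l]
    have h2 : (α + ((l+1:ℕ):ℝ)^2) ^ (-(5/4) : ℝ) ≤ (((l+1:ℕ):ℝ)^2) ^ (-(5/4) : ℝ) := by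
      apply Real.rpow_le_rpow_of_nonpos (by positivity) (by linarith) (by norm_num)
    have h3 : (((l+1:ℕ):ℝ)^2) ^ (-(5/4) : ℝ) = ((l+1:ℕ):ℝ) ^ (-(5/2) : ℝ) := by
      rw [← Real.rpow_natCast ((l+1:ℕ):ℝ) 2, ← Real.rpow_mul hx.le]
      norm_num
    calc (2 * ((l+1:ℕ):ℝ) + 1) * (α + ((l+1:ℕ):ℝ)^2) ^ (-(5/4) : ℝ)
        ≤ (3 * ((l+1:ℕ):ℝ)) * (((l+1:ℕ):ℝ) ^ (-(5/2) : ℝ)) := by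
          rw [← h3]; exact mul_le_mul h1 h2 (by positivity) (by positivity)
      _ = 3 * (((l+1:ℕ):ℝ) ^ (1:ℝ) * ((l+1:ℕ):ℝ) ^ (-(5/2) : ℝ)) := by
          rw [Real.rpow_one]; ring
      _ = 3 * (((l+1:ℕ)):ℝ) ^ (-(3/2) : ℝ) := by
          rw [← Real.rpow_add hx]; norm_num

lemma sum_aux2 {α : ℝ} (hα : 0 < α) :
    Summable (fun k : ℕ => (α + (k:ℝ)^2) ^ (-(3/4) : ℝ)) := by
  rw [← summable_nat_add_iff 1]
  have hs : Summable (fun l : ℕ => (((l+1 : ℕ)):ℝ) ^ (-(3/2) : ℝ)) :=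
    (summable_nat_add_iff 1).mpr (Real.summable_nat_rpow.mpr (by norm_num))
  apply Summable.of_nonneg_of_le _ _ hs
  · intro l; positivity
  · intro l
    have hx : (0:ℝ) < ((l+1:ℕ):ℝ) := by positivity
    have h2 : (α + ((l+1:ℕ):ℝ)^2) ^ (-(3/4) : ℝ) ≤ (((l+1:ℕ):ℝ)^2) ^ (-(3/4) : ℝ) :=
      Real.rpow_le_rpow_of_nonpos (by positivity) (by linarith) (by norm_num)
    have h3 : (((l+1:ℕ):ℝ)^2) ^ (-(3/4) : ℝ) = ((l+1:ℕ):ℝ) ^ (-(3/2) : ℝ) := by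
      rw [← Real.rpow_natCast ((l+1:ℕ):ℝ) 2, ← Real.rpow_mul hx.le]
      norm_num
    rw [← h3] at *
    exact h2

set_option maxHeartbeats 1000000 in
lemma summable_same (α₁ α₂ ν : ℝ) (hα₁ : 0 < α₁) (hα₂ : 0 < α₂) (hν : 0 < ν) :
    Summable (fun p : ℕ × ℕ =>
        (2 * (p.1 : ℝ) + 1) *
          ((α₁ + (p.2 : ℝ) ^ 2 + (p.1 : ℝ) ^ 2) ^ (ν + 1 / 2) /
              (α₂ + (p.2 : ℝ) ^ 2 + (p.1 : ℝ) ^ 2) ^ (ν + 1 / 2) - 1) ^ 2) := by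
  set a : ℝ := ν + 1/2 with ha_def
  have ha : 0 < a := by positivity
  set n : ℕ := ⌈a⌉₊ with hn_def
  set T : ℝ := max 1 (α₁/α₂) with hT_def
  have hT1 : (1:ℝ) ≤ T := le_max_left _ _
  set D : ℝ := n * T ^ n * |α₁ - α₂| with hD_def
  have hD0 : 0 ≤ D := by positivity
  apply Summable.of_nonneg_of_le (f := fun p : ℕ × ℕ =>
      (D^2 * ((2 * (p.1:ℝ) + 1) * (α₂ + (p.1:ℝ)^2) ^ (-(5/4) : ℝ))) *
        ((α₂ + (p.2:ℝ)^2) ^ (-(3/4) : ℝ)))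
  · intro p; positivity
  · rintro ⟨l, k⟩
    set u : ℝ := α₁ + (k:ℝ)^2 + (l:ℝ)^2 with hu_def
    set v : ℝ := α₂ + (k:ℝ)^2 + (l:ℝ)^2 with hv_def
    set y : ℝ := α₂ + (l:ℝ)^2 with hy_def
    set z : ℝ := α₂ + (k:ℝ)^2 with hz_def
    have hu : 0 < u := by positivity
    have hv : 0 < v := by positivity
    have hy : 0 < y := by positivity
    have hz : 0 < z := by positivity
    have htpos : 0 < u / v := div_pos hu hv
    have hstep1 : u ^ a / v ^ a = (u/v) ^ a := (Real.div_rpow hu.le hv.le a).symm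
    have hT' : u / v ≤ T := by
      rcases le_total α₁ α₂ with h | h
      · refine le_trans ((div_le_one hv).mpr ?_) hT1
        simp only [hu_def, hv_def]; linarith
      · refine le_trans ?_ (le_max_right 1 (α₁/α₂))
        rw [div_le_div_iff₀ hv hα₂]
        simp only [hu_def, hv_def]
        nlinarith [sq_nonneg (k:ℝ), sq_nonneg (l:ℝ)]
    have hmaxT : max 1 (u/v) ≤ T := max_le hT1 hT'
    have hsub : u / v - 1 = (α₁ - α₂) / v := by field_simp; ring
    have habs1 : |(u/v) ^ a - 1| ≤ D / v := by
      calc |(u/v) ^ a - 1| ≤ |(u/v) ^ n - 1| :=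
            rpow_sub_one_abs htpos ha.le n (Nat.le_ceil a)
        _ ≤ n * (max 1 (u/v)) ^ n * |u/v - 1| := pow_sub_one_abs n _ htpos.le
        _ ≤ n * T ^ n * |u/v - 1| := by
            apply mul_le_mul_of_nonneg_right _ (abs_nonneg _)
            apply mul_le_mul_of_nonneg_left _ (Nat.cast_nonneg n)
            exact pow_le_pow_left₀ (le_trans zero_le_one (le_max_left _ _)) hmaxT n
        _ = D / v := by
            rw [hsub, abs_div, abs_of_pos hv, hD_def]; ring
    have hsq : ((u/v) ^ a - 1)^2 ≤ D^2 / v^2 := by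
      have h2 := pow_le_pow_left₀ (abs_nonneg _) habs1 2
      rwa [sq_abs, div_pow] at h2
    have hgm : y ^ ((5:ℝ)/8) * z ^ ((3:ℝ)/8) ≤ v := by
      apply gm_le hy hz _ _ (by norm_num) (by norm_num) (by norm_num)
      · simp only [hy_def, hv_def]; nlinarith [sq_nonneg (k:ℝ)]
      · simp only [hz_def, hv_def]; nlinarith [sq_nonneg (l:ℝ)]
    have hP : (0:ℝ) < y ^ ((5:ℝ)/8) * z ^ ((3:ℝ)/8) := by positivity
    have hinv : v⁻¹ ≤ (y ^ ((5:ℝ)/8) * z ^ ((3:ℝ)/8))⁻¹ := inv_anti₀ hP hgm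
    have hPinv : (y ^ ((5:ℝ)/8) * z ^ ((3:ℝ)/8))⁻¹ * (y ^ ((5:ℝ)/8) * z ^ ((3:ℝ)/8))⁻¹
        = y ^ (-(5/4) : ℝ) * z ^ (-(3/4) : ℝ) := by
      rw [Real.rpow_neg hy.le, Real.rpow_neg hz.le]
      rw [show ((5:ℝ)/4) = (5:ℝ)/8 + (5:ℝ)/8 by norm_num,
        show ((3:ℝ)/4) = (3:ℝ)/8 + (3:ℝ)/8 by norm_num,
        Real.rpow_add hy, Real.rpow_add hz]
      rw [mul_inv, mul_inv, mul_inv]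
      exact mul_mul_mul_comm _ _ _ _
    have hv2 : v⁻¹ * v⁻¹ ≤ y ^ (-(5/4) : ℝ) * z ^ (-(3/4) : ℝ) := by
      rw [← hPinv]
      exact mul_le_mul hinv hinv (by positivity) (by positivity)
    have hfin : (2 * (l:ℝ) + 1) * ((u ^ a / v ^ a) - 1)^2 ≤
        (D^2 * ((2 * (l:ℝ) + 1) * y ^ (-(5/4) : ℝ))) * z ^ (-(3/4) : ℝ) := by
      rw [hstep1]
      calc (2 * (l:ℝ) + 1) * ((u/v) ^ a - 1)^2
          ≤ (2 * (l:ℝ) + 1) * (D^2 / v^2) := by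
            apply mul_le_mul_of_nonneg_left hsq (by positivity)
        _ = (2 * (l:ℝ) + 1) * (D^2 * (v⁻¹ * v⁻¹)) := by
            rw [div_eq_mul_inv, pow_two v, mul_inv]
        _ ≤ (2 * (l:ℝ) + 1) * (D^2 * (y ^ (-(5/4) : ℝ) * z ^ (-(3/4) : ℝ))) := by
            apply mul_le_mul_of_nonneg_left _ (by positivity)
            exact mul_le_mul_of_nonneg_left hv2 (by positivity)
        _ = (D^2 * ((2 * (l:ℝ) + 1) * y ^ (-(5/4) : ℝ))) * z ^ (-(3/4) : ℝ) := by ring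
    exact hfin
  · exact Summable.mul_of_nonneg ((sum_aux1 hα₂).mul_left (D^2)) (sum_aux2 hα₂)
      (fun l => by positivity) (fun k => by positivity)

lemma forward_dir (σ₁ σ₂ α₁ α₂ ν₁ ν₂ : ℝ)
    (hσ₁ : 0 < σ₁) (hσ₂ : 0 < σ₂) (hα₁ : 0 < α₁) (hα₂ : 0 < α₂)
    (hν₁ : 0 < ν₁) (hν₂ : 0 < ν₂)
    (h : Summable (fun p : ℕ × ℕ =>
        (2 * (p.1 : ℝ) + 1) *
          ((σ₂ / σ₁) ^ 2 *
              (α₁ + (p.2 : ℝ) ^ 2 + (p.1 : ℝ) ^ 2) ^ (ν₁ + 1 / 2) /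
              (α₂ + (p.2 : ℝ) ^ 2 + (p.1 : ℝ) ^ 2) ^ (ν₂ + 1 / 2) - 1) ^ 2)) :
    σ₁ = σ₂ ∧ ν₁ = ν₂ := by
  set c : ℝ := (σ₂ / σ₁) ^ 2 with hc_def
  have hc : 0 < c := by positivity
  set a : ℝ := ν₁ + 1/2 with ha_def
  set b : ℝ := ν₂ + 1/2 with hb_def
  set R : ℕ → ℝ := fun l => (α₁ + (l:ℝ)^2) ^ a / (α₂ + (l:ℝ)^2) ^ b with hR_def
  -- the diagonal k = 0 tends to zero
  have hinj : Function.Injective (fun l : ℕ => ((l, 0) : ℕ × ℕ)) := by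
    intro x y hxy
    simpa using congrArg Prod.fst hxy
  have h0 : Tendsto (fun l : ℕ =>
      (2 * (l : ℝ) + 1) * (c * (α₁ + (l:ℝ)^2) ^ a / (α₂ + (l:ℝ)^2) ^ b - 1) ^ 2)
      atTop (nhds 0) := by
    have h1 := h.tendsto_cofinite_zero.comp (hinj.tendsto_cofinite)
    rw [Nat.cofinite_eq_atTop] at h1
    refine h1.congr (fun l => ?_)
    simp [Function.comp]
  have hG : Tendsto (fun l : ℕ => (c * R l - 1) ^ 2) atTop (nhds 0) := by
    refine squeeze_zero (g := fun l : ℕ =>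
      (2 * (l : ℝ) + 1) * (c * (α₁ + (l:ℝ)^2) ^ a / (α₂ + (l:ℝ)^2) ^ b - 1) ^ 2)
      (fun l => sq_nonneg _) (fun l => ?_) h0
    have h1 : (1:ℝ) ≤ 2 * (l:ℝ) + 1 := by
      have := Nat.cast_nonneg (α := ℝ) l
      linarith
    have h2 : (0:ℝ) ≤ (c * (α₁ + (l:ℝ)^2) ^ a / (α₂ + (l:ℝ)^2) ^ b - 1) ^ 2 := sq_nonneg _
    have : c * R l - 1 = c * (α₁ + (l:ℝ)^2) ^ a / (α₂ + (l:ℝ)^2) ^ b - 1 := by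
      rw [hR_def]; ring
    rw [this]
    nlinarith
  have hlim : Tendsto (fun l => c * R l) atTop (nhds 1) := by
    rw [tendsto_iff_dist_tendsto_zero]
    have h2 := (Real.continuous_sqrt.tendsto 0).comp hG
    simp only [Function.comp_def, Real.sqrt_zero] at h2
    refine h2.congr (fun l => ?_)
    simp [Real.sqrt_sq_eq_abs, Real.dist_eq]
  -- limits of the building blocks
  have hvlim : ∀ α : ℝ, Tendsto (fun l : ℕ => α + (l:ℝ)^2) atTop atTop := by
    intro α
    apply tendsto_atTop_add_const_left
    exact (tendsto_pow_atTop (two_ne_zero)).comp tendsto_natCast_atTop_atTop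
  have hratio : Tendsto (fun l : ℕ => (α₁ + (l:ℝ)^2) / (α₂ + (l:ℝ)^2)) atTop (nhds 1) := by
    have h1 : Tendsto (fun l : ℕ => 1 + (α₁ - α₂) / (α₂ + (l:ℝ)^2)) atTop (nhds (1 + 0)) :=
      tendsto_const_nhds.add ((hvlim α₂).const_div_atTop (α₁ - α₂))
    rw [add_zero] at h1
    refine h1.congr (fun l => ?_)
    have hv : (0:ℝ) < α₂ + (l:ℝ)^2 := by positivity
    field_simp
    ring
  have hrb : Tendsto (fun l : ℕ => ((α₁ + (l:ℝ)^2) / (α₂ + (l:ℝ)^2)) ^ b) atTop (nhds 1) := by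
    have hcont : ContinuousAt (fun x : ℝ => x ^ b) 1 :=
      Real.continuousAt_rpow_const 1 b (Or.inl one_ne_zero)
    have := hcont.tendsto.comp hratio
    simpa [Real.one_rpow, Function.comp_def] using this
  have hdecomp : ∀ l : ℕ, R l = (α₁ + (l:ℝ)^2) ^ (a - b) *
      ((α₁ + (l:ℝ)^2) / (α₂ + (l:ℝ)^2)) ^ b := by
    intro l
    have hu : (0:ℝ) < α₁ + (l:ℝ)^2 := by positivity
    have hv : (0:ℝ) < α₂ + (l:ℝ)^2 := by positivity
    have hsplit : (α₁ + (l:ℝ)^2) ^ a = (α₁ + (l:ℝ)^2) ^ (a - b) * (α₁ + (l:ℝ)^2) ^ b := by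
      rw [← Real.rpow_add hu, sub_add_cancel]
    simp only [hR_def]
    rw [Real.div_rpow hu.le hv.le, hsplit, mul_div_assoc]
  have hne : ν₁ = ν₂ := by
    by_contra hne
    rcases lt_or_gt_of_ne hne with hlt | hgt
    · -- a < b : c R → 0, contradiction with → 1
      have hba : 0 < b - a := by simp only [ha_def, hb_def]; linarith
      have h1 : Tendsto (fun l : ℕ => (α₁ + (l:ℝ)^2) ^ (a - b)) atTop (nhds 0) := by
        have := (tendsto_rpow_neg_atTop hba).comp (hvlim α₁)
        refine this.congr (fun l => ?_)
        simp [Function.comp, neg_sub]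
      have h2 : Tendsto (fun l => c * R l) atTop (nhds (c * (0 * 1))) := by
        apply Tendsto.const_mul
        refine (h1.mul hrb).congr (fun l => (hdecomp l).symm)
      rw [zero_mul, mul_zero] at h2
      have := tendsto_nhds_unique hlim h2
      norm_num at this
    · -- a > b : c R → atTop, contradiction
      have hab : 0 < a - b := by simp only [ha_def, hb_def]; linarith
      have h1 : Tendsto (fun l : ℕ => (α₁ + (l:ℝ)^2) ^ (a - b)) atTop atTop :=
        (tendsto_rpow_atTop hab).comp (hvlim α₁)
      have h2 : Tendsto (fun l => c * R l) atTop atTop := by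
        apply Tendsto.const_mul_atTop hc
        refine Tendsto.congr (fun l => (hdecomp l).symm) ?_
        exact Filter.Tendsto.atTop_mul_pos one_pos h1 hrb
      exact not_tendsto_nhds_of_tendsto_atTop h2 1 hlim
  refine ⟨?_, hne⟩
  -- now a = b, so c = 1
  have hab : a = b := by simp only [ha_def, hb_def, hne]
  have hR1 : Tendsto R atTop (nhds 1) := by
    refine hrb.congr (fun l => ?_)
    rw [hdecomp l, hab, sub_self, Real.rpow_zero, one_mul]
  have hc1 : Tendsto (fun l => c * R l) atTop (nhds (c * 1)) := hR1.const_mul c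
  have huniq : (1:ℝ) = c * 1 := tendsto_nhds_unique hlim hc1
  rw [mul_one] at huniq
  have hdiv : σ₂ / σ₁ = 1 := by
    have hx : (0:ℝ) < σ₂ / σ₁ := div_pos hσ₂ hσ₁
    have hsq : (σ₂ / σ₁) ^ 2 = 1 := by rw [← hc_def, ← huniq]
    nlinarith [sq_nonneg (σ₂ / σ₁ - 1)]
  exact ((div_eq_one_iff_eq hσ₁.ne').mp hdiv).symm

/-- Feldman–Hájek equivalence criterion for the Legendre–Matérn model
on the 2-sphere with values in `L²([0,1])`: the double series
`∑_{l,k} (2l+1) ((σ₂/σ₁)² (α₁+k²+l²)^{ν₁+1/2}/(α₂+k²+l²)^{ν₂+1/2} − 1)²`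
converges if and only if `σ₁ = σ₂` and `ν₁ = ν₂`.  (All powers are real powers.) -/

theorem legendre_matern_equivalence_iff
    (σ₁ σ₂ α₁ α₂ ν₁ ν₂ : ℝ)
    (hσ₁ : 0 < σ₁) (hσ₂ : 0 < σ₂) (hα₁ : 0 < α₁) (hα₂ : 0 < α₂)
    (hν₁ : 0 < ν₁) (hν₂ : 0 < ν₂) :
    Summable (fun p : ℕ × ℕ =>
        (2 * (p.1 : ℝ) + 1) *
          ((σ₂ / σ₁) ^ 2 *
              (α₁ + (p.2 : ℝ) ^ 2 + (p.1 : ℝ) ^ 2) ^ (ν₁ + 1 / 2) /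
              (α₂ + (p.2 : ℝ) ^ 2 + (p.1 : ℝ) ^ 2) ^ (ν₂ + 1 / 2) - 1) ^ 2)
      ↔ (σ₁ = σ₂ ∧ ν₁ = ν₂) := by
  constructor
  · intro h
    exact forward_dir σ₁ σ₂ α₁ α₂ ν₁ ν₂ hσ₁ hσ₂ hα₁ hα₂ hν₁ hν₂ h
  · rintro ⟨h1, h2⟩
    subst h1
    subst h2
    refine (summable_same α₁ α₂ ν₁ hα₁ hα₂ hν₁).congr (fun p => ?_)
    rw [div_self hσ₁.ne', one_pow, one_mul]
end

section
/- Let ν, α₁, α₂ be strictly positive real numbers. Then the double series Σ_{l=0}^∞ Σ_{k=0}^∞ (2l+1) · ( ( (α₁ + k² + l²) / (α₂ + k² + l²) )^{ν + 1/2} − 1 )² converges. -/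
lemma aux_abs_exp_sub_one (x : ℝ) : |Real.exp x - 1| ≤ |x| * Real.exp |x| := by
  rcases le_or_gt 0 x with hx | hx
  · rw [abs_of_nonneg hx, abs_of_nonneg (by linarith [Real.one_le_exp hx])]
    have h1 : 1 - x ≤ Real.exp (-x) := by linarith [Real.add_one_le_exp (-x)]
    have h2 : Real.exp (-x) * Real.exp x = 1 := by rw [← Real.exp_add]; simp
    nlinarith [Real.exp_pos x]
  · rw [abs_of_neg hx, abs_of_nonpos (by linarith [Real.exp_lt_one_iff.mpr hx] : Real.exp x - 1 ≤ 0)]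
    have h1 : x + 1 ≤ Real.exp x := Real.add_one_le_exp x
    have h2 : (1:ℝ) ≤ Real.exp (-x) := Real.one_le_exp (by linarith)
    nlinarith

lemma aux_abs_log_le (a r : ℝ) (ha : 0 < a) (ha1 : a ≤ 1) (hr : a ≤ r) :
    |Real.log r| ≤ |r - 1| / a := by
  have hr0 : 0 < r := lt_of_lt_of_le ha hr
  rcases le_or_gt 1 r with h1 | h1
  · rw [abs_of_nonneg (Real.log_nonneg h1), abs_of_nonneg (by linarith)]
    calc Real.log r ≤ r - 1 := Real.log_le_sub_one_of_pos hr0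
    _ ≤ (r - 1) / a := by rw [le_div_iff₀ ha]; nlinarith
  · rw [abs_of_nonpos (Real.log_nonpos (le_of_lt hr0) (le_of_lt h1)), abs_of_nonpos (by linarith)]
    have h2 : Real.log r⁻¹ ≤ r⁻¹ - 1 := Real.log_le_sub_one_of_pos (by positivity)
    rw [Real.log_inv] at h2
    have h3 : r⁻¹ - 1 = (1 - r) / r := by field_simp
    rw [h3] at h2
    calc -Real.log r ≤ (1 - r) / r := h2
    _ ≤ (1 - r) / a := by
        apply div_le_div_of_nonneg_left (by linarith) ha hr
    _ = -(r - 1) / a := by ring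

lemma aux_key (s a : ℝ) (hs : 0 < s) (ha : 0 < a) (ha1 : a ≤ 1) (r : ℝ) (hr : a ≤ r) :
    |r ^ s - 1| ≤ (s / a) * Real.exp ((s / a) * |r - 1|) * |r - 1| := by
  have hr0 : 0 < r := lt_of_lt_of_le ha hr
  rw [Real.rpow_def_of_pos hr0]
  have h1 := aux_abs_exp_sub_one (Real.log r * s)
  have h2 : |Real.log r * s| ≤ (s / a) * |r - 1| := by
    rw [abs_mul, abs_of_pos hs]
    have := aux_abs_log_le a r ha ha1 hr
    rw [div_eq_mul_inv (s) a, mul_assoc, ← div_eq_inv_mul]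
    calc |Real.log r| * s ≤ (|r-1|/a) * s := by
          exact mul_le_mul_of_nonneg_right this (le_of_lt hs)
    _ = s * (|r-1|/a) := by ring
  calc |Real.exp (Real.log r * s) - 1| ≤ |Real.log r * s| * Real.exp |Real.log r * s| := h1
  _ ≤ ((s/a) * |r-1|) * Real.exp ((s/a) * |r-1|) := by
      exact mul_le_mul h2 (Real.exp_le_exp.mpr h2) (Real.exp_nonneg _) (by positivity)
  _ = (s / a) * Real.exp ((s / a) * |r - 1|) * |r - 1| := by ring

set_option maxHeartbeats 1000000 in
/-- Sufficiency part of the Legendre–Matérn equivalence criterion: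
for `ν, α₁, α₂ > 0` the double series
`∑_{l,k} (2l+1) (((α₁+k²+l²)/(α₂+k²+l²))^{ν+1/2} − 1)²` converges.
(All powers are real powers.) -/
theorem legendre_matern_same_nu_summable
    (ν α₁ α₂ : ℝ)
    (hν : 0 < ν) (hα₁ : 0 < α₁) (hα₂ : 0 < α₂) :
    Summable (fun p : ℕ × ℕ =>
        (2 * (p.1 : ℝ) + 1) *
          (((α₁ + (p.2 : ℝ) ^ 2 + (p.1 : ℝ) ^ 2) /
              (α₂ + (p.2 : ℝ) ^ 2 + (p.1 : ℝ) ^ 2)) ^ (ν + 1 / 2) - 1) ^ 2) := by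
  set s : ℝ := ν + 1 / 2 with hs_def
  have hs : 0 < s := by positivity
  set a : ℝ := min 1 (α₁ / α₂) with ha_def
  have ha : 0 < a := lt_min one_pos (by positivity)
  have ha1 : a ≤ 1 := min_le_left _ _
  have haα : a * α₂ ≤ α₁ := (le_div_iff₀ hα₂).mp (min_le_right 1 (α₁ / α₂))
  set E : ℝ := |α₁ - α₂| with hE_def
  have hE : 0 ≤ E := abs_nonneg _
  set C : ℝ := s / a * Real.exp (s / a * (E / α₂)) * E with hC_def
  have hC : 0 ≤ C := by positivity
  set d : ℝ := min (1/2 : ℝ) (α₂ / 4) with hd_def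
  have hd : 0 < d := lt_min (by norm_num) (by positivity)
  have hd1 : d ≤ 1/2 := min_le_left _ _
  have hd2 : d ≤ α₂ / 4 := min_le_right _ _
  set g : ℕ → ℝ := fun n => 1 / ((n : ℝ) + 1) ^ ((3:ℝ)/2) with hg_def
  have hg : Summable g := by
    have h0 : Summable (fun n : ℕ => 1 / (n : ℝ) ^ ((3:ℝ)/2)) :=
      Real.summable_one_div_nat_rpow.mpr (by norm_num)
    have h1 := (summable_nat_add_iff 1).mpr h0
    refine h1.congr fun n => ?_
    simp only [hg_def]
    push_cast
    ring_nf
  have hgg : Summable (fun p : ℕ × ℕ => g p.1 * g p.2) :=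
    hg.mul_of_nonneg hg (fun n => by positivity) (fun n => by positivity)
  have hK := hgg.mul_left (2 * C ^ 2 / d ^ 2)
  clear_value s a E C d g
  refine Summable.of_nonneg_of_le (fun p => by positivity) (fun p => ?_) hK
  obtain ⟨l, k⟩ := p
  simp only
  set D : ℝ := α₂ + (k : ℝ) ^ 2 + (l : ℝ) ^ 2 with hD_def
  set N : ℝ := α₁ + (k : ℝ) ^ 2 + (l : ℝ) ^ 2 with hN_def
  have hD0 : 0 < D := by positivity
  have hDα : α₂ ≤ D := by nlinarith [sq_nonneg (k:ℝ), sq_nonneg (l:ℝ)]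
  have hra : a ≤ N / D := by
    rw [le_div_iff₀ hD0]
    nlinarith [sq_nonneg (k:ℝ), sq_nonneg (l:ℝ)]
  have hr1 : |N / D - 1| = E / D := by
    have h : N / D - 1 = (α₁ - α₂) / D := by field_simp; ring
    rw [h, abs_div, abs_of_pos hD0, ← hE_def]
  -- bound |r^s - 1| ≤ C / D
  have hCD : |(N / D) ^ s - 1| ≤ C / D := by
    have hk := aux_key s a hs ha ha1 (N / D) hra
    rw [hr1] at hk
    refine hk.trans ?_
    rw [hC_def, mul_div_assoc]
    gcongr <;> first | exact hDα | positivity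
  have hsq : ((N / D) ^ s - 1) ^ 2 ≤ C ^ 2 / D ^ 2 := by
    rw [← sq_abs, ← div_pow]
    exact pow_le_pow_left₀ (abs_nonneg _) hCD 2
  -- lower bound for D^2
  set x : ℝ := (k : ℝ) ^ 2 + α₂ / 2 with hx_def
  set y : ℝ := (l : ℝ) ^ 2 + α₂ / 2 with hy_def
  have hx : 0 < x := by positivity
  have hy : 0 < y := by positivity
  have hDxy : D = x + y := by rw [hD_def, hx_def, hy_def]; ring
  set A : ℝ := ((k : ℝ) + 1) ^ ((3:ℝ)/2) with hA_def
  set B : ℝ := ((l : ℝ) + 1) ^ ((3:ℝ)/2) with hB_def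
  have hA0 : 0 < A := by positivity
  have hB0 : 0 < B := by positivity
  clear_value D N x y A B
  -- x ^ (3/4) ≥ d^(3/4) * A
  have hxk : d * ((k : ℝ) + 1) ^ 2 ≤ x := by
    have h1 : ((k:ℝ)+1)^2 ≤ 2 * (k:ℝ)^2 + 2 := by nlinarith [sq_nonneg ((k:ℝ) - 1)]
    nlinarith [mul_le_mul_of_nonneg_left h1 hd.le,
      mul_nonneg (by linarith : (0:ℝ) ≤ 1 - 2*d) (sq_nonneg (k:ℝ))]
  have hyl : d * ((l : ℝ) + 1) ^ 2 ≤ y := by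
    have h1 : ((l:ℝ)+1)^2 ≤ 2 * (l:ℝ)^2 + 2 := by nlinarith [sq_nonneg ((l:ℝ) - 1)]
    nlinarith [mul_le_mul_of_nonneg_left h1 hd.le,
      mul_nonneg (by linarith : (0:ℝ) ≤ 1 - 2*d) (sq_nonneg (l:ℝ))]
  have hxA : d ^ ((3:ℝ)/4) * A ≤ x ^ ((3:ℝ)/4) := by
    rw [hA_def]
    have h := Real.rpow_le_rpow (by positivity) hxk (by norm_num : (0:ℝ) ≤ 3/4)
    rwa [Real.mul_rpow hd.le (by positivity), ← Real.rpow_natCast ((k:ℝ)+1) 2,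
      ← Real.rpow_mul (by positivity), show ((2:ℕ):ℝ) * (3/4) = (3:ℝ)/2 by norm_num] at h
  have hyB : d ^ ((5:ℝ)/4) * (((l:ℝ) + 1) * B) ≤ y ^ ((5:ℝ)/4) := by
    rw [hB_def]
    have h := Real.rpow_le_rpow (by positivity) hyl (by norm_num : (0:ℝ) ≤ 5/4)
    rwa [Real.mul_rpow hd.le (by positivity), ← Real.rpow_natCast ((l:ℝ)+1) 2,
      ← Real.rpow_mul (by positivity), show ((2:ℕ):ℝ) * (5/4) = (5:ℝ)/2 by norm_num,
      show ((5:ℝ)/2) = 1 + (3:ℝ)/2 by norm_num,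
      Real.rpow_add (by positivity) 1 ((3:ℝ)/2), Real.rpow_one] at h
  have hD2xy : x ^ ((3:ℝ)/4) * y ^ ((5:ℝ)/4) ≤ D ^ 2 := by
    have h34 : x ^ ((3:ℝ)/4) ≤ (x + y) ^ ((3:ℝ)/4) :=
      Real.rpow_le_rpow hx.le (by linarith) (by norm_num)
    have h54 : y ^ ((5:ℝ)/4) ≤ (x + y) ^ ((5:ℝ)/4) :=
      Real.rpow_le_rpow hy.le (by linarith) (by norm_num)
    have heq : (x + y) ^ ((3:ℝ)/4) * (x + y) ^ ((5:ℝ)/4) = (x + y) ^ 2 := by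
      rw [← Real.rpow_add (by positivity), show (3:ℝ)/4 + 5/4 = ((2:ℕ):ℝ) by norm_num,
        Real.rpow_natCast]
    calc x ^ ((3:ℝ)/4) * y ^ ((5:ℝ)/4)
        ≤ (x + y) ^ ((3:ℝ)/4) * (x + y) ^ ((5:ℝ)/4) := by
          exact mul_le_mul h34 h54 (by positivity) (by positivity)
      _ = D ^ 2 := by rw [heq, hDxy]
  have hdd : d ^ ((3:ℝ)/4) * d ^ ((5:ℝ)/4) = d ^ 2 := by
    rw [← Real.rpow_add hd, show (3:ℝ)/4 + 5/4 = ((2:ℕ):ℝ) by norm_num, Real.rpow_natCast]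
  have hDlb : d ^ 2 * (A * (((l:ℝ) + 1) * B)) ≤ D ^ 2 := by
    calc d ^ 2 * (A * (((l:ℝ) + 1) * B))
        = (d ^ ((3:ℝ)/4) * A) * (d ^ ((5:ℝ)/4) * (((l:ℝ) + 1) * B)) := by
          rw [← hdd]; ring
      _ ≤ x ^ ((3:ℝ)/4) * y ^ ((5:ℝ)/4) := by
          exact mul_le_mul hxA hyB (by positivity) (by positivity)
      _ ≤ D ^ 2 := hD2xy
  have hl1 : (0:ℝ) < (l:ℝ) + 1 := by positivity
  calc (2 * (l:ℝ) + 1) * ((N / D) ^ s - 1) ^ 2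
      ≤ (2 * (l:ℝ) + 1) * (C ^ 2 / D ^ 2) := by
        exact mul_le_mul_of_nonneg_left hsq (by positivity)
    _ ≤ (2 * (l:ℝ) + 2) * (C ^ 2 / (d ^ 2 * (A * (((l:ℝ) + 1) * B)))) := by
        gcongr <;> first | exact hDlb | linarith | positivity
    _ = 2 * C ^ 2 / d ^ 2 * (g l * g k) := by
        rw [hg_def]
        simp only
        rw [hA_def, hB_def]
        field_simp
end
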